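/- arXiv:2605.15825 — 8 statements merged into one kernel-verified Lean document; each statement's English description precedes it below -/
import Mathlib

section
/- Let μ, υ > -1, 0 < ρ ≤ 1, and let r, s be natural numbers. Then ∫₀¹ ϰ^{μ,υ,ρ}(t) 𝒫_r^{μ,υ,ρ}(t) 𝒫_s^{μ,υ,ρ}(t) dt = β̂_r^{μ,υ} δ_{rs}, where β̂_r^{μ,υ} = Γ(r+μ+1)Γ(r+υ+1) / ( r! (2r+μ+υ+1) Γ(r+μ+υ+1) ). In particular the fractional backward Jacobi functions form an orthogonal system in the weighted L² space with weight ϰ^{μ,υ,ρ}. -/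
open Real MeasureTheory Finset

private lemma alt_sum_pow : ∀ (j n : ℕ), j < n →
    ∑ k ∈ range (n+1), (-1:ℝ)^k * (n.choose k : ℝ) * (k:ℝ)^j = 0 := by
  intro j
  induction j using Nat.strong_induction_on with
  | _ j IH =>
    intro n hn
    rcases Nat.eq_zero_or_pos j with rfl | hj
    · simp only [pow_zero, mul_one]
      have h := Int.alternating_sum_range_choose_of_ne (n := n) (by omega)
      have := congrArg (Int.cast : ℤ → ℝ) h
      push_cast at this
      convert this using 1
    · obtain ⟨j', rfl⟩ : ∃ j'', j = j'' + 1 := ⟨j - 1, by omega⟩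
      obtain ⟨m, rfl⟩ : ∃ m, n = m + 1 := ⟨n - 1, by omega⟩
      rw [Finset.sum_range_succ']
      have h0 : (-1:ℝ)^0 * ((m+1).choose 0 : ℝ) * ((0:ℕ):ℝ)^(j'+1) = 0 := by simp
      rw [h0, add_zero]
      have hterm : ∀ i ∈ range (m+1),
          (-1:ℝ)^(i+1) * (((m+1)).choose (i+1) : ℝ) * ((i+1 : ℕ):ℝ)^(j'+1)
            = -((m:ℝ)+1) * ∑ l ∈ range (j'+1),
                (j'.choose l : ℝ) * ((-1:ℝ)^i * (m.choose i : ℝ) * (i:ℝ)^l) := by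
        intro i _
        have hc : (((m+1)).choose (i+1) : ℝ) * ((i:ℝ)+1) = ((m:ℝ)+1) * (m.choose i : ℝ) := by
          exact_mod_cast congrArg (Nat.cast : ℕ → ℝ) (Nat.add_one_mul_choose_eq m i).symm
        have hexp : ((i:ℝ)+1)^(j') = ∑ l ∈ range (j'+1), (j'.choose l : ℝ) * (i:ℝ)^l := by
          rw [add_pow]
          exact Finset.sum_congr rfl fun l hl => by ring
        push_cast
        rw [Finset.mul_sum]
        calc (-1:ℝ)^(i+1) * (((m+1)).choose (i+1) : ℝ) * ((i:ℝ)+1)^(j'+1)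
            = -((-1:ℝ)^i) * ((((m+1)).choose (i+1) : ℝ) * ((i:ℝ)+1)) * ((i:ℝ)+1)^(j') := by
              ring
          _ = -((-1:ℝ)^i) * (((m:ℝ)+1) * (m.choose i : ℝ)) * ∑ l ∈ range (j'+1), (j'.choose l : ℝ) * (i:ℝ)^l := by
              rw [hc, hexp]
          _ = _ := by rw [Finset.mul_sum]; exact Finset.sum_congr rfl fun l hl => by ring
      rw [Finset.sum_congr rfl hterm, ← Finset.mul_sum, Finset.sum_comm]
      have hz : ∀ l ∈ range (j'+1),
          ∑ i ∈ range (m+1), (j'.choose l : ℝ) * ((-1:ℝ)^i * (m.choose i : ℝ) * (i:ℝ)^l) = 0 := by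
        intro l hl
        rw [← Finset.mul_sum]
        have : m = (m-1) + 1 := by omega
        rw [IH l (by simp at hl; omega) m (by simp at hl; omega), mul_zero]
      rw [Finset.sum_congr rfl hz]
      simp

private lemma alt_sum_poly (n m : ℕ) (hm : m < n) (c : ℕ → ℝ) :
    ∑ k ∈ range (n+1), (-1:ℝ)^k * (n.choose k : ℝ) * ∏ i ∈ range m, (c i + (k:ℝ)) = 0 := by
  calc ∑ k ∈ range (n+1), (-1:ℝ)^k * (n.choose k : ℝ) * ∏ i ∈ range m, (c i + (k:ℝ))
      = ∑ k ∈ range (n+1), ∑ t ∈ (range m).powerset,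
          (∏ i ∈ t, c i) * ((-1:ℝ)^k * (n.choose k : ℝ) * (k:ℝ)^((range m \ t).card)) := by
        refine Finset.sum_congr rfl fun k _ => ?_
        rw [Finset.prod_add, Finset.mul_sum]
        exact Finset.sum_congr rfl fun t ht => by rw [Finset.prod_const]; ring
    _ = ∑ t ∈ (range m).powerset, (∏ i ∈ t, c i) *
          ∑ k ∈ range (n+1), (-1:ℝ)^k * (n.choose k : ℝ) * (k:ℝ)^((range m \ t).card) := by
        rw [Finset.sum_comm]
        exact Finset.sum_congr rfl fun t _ => by rw [Finset.mul_sum]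
    _ = 0 := by
        refine Finset.sum_eq_zero fun t ht => ?_
        rw [alt_sum_pow _ _ (lt_of_le_of_lt (le_trans (Finset.card_le_card Finset.sdiff_subset) (by simp)) hm), mul_zero]

private lemma alt_sum_inv (n : ℕ) (x : ℝ) (hx : ∀ i : ℕ, i ≤ n → x + i ≠ 0) :
    ∑ k ∈ range (n+1), (-1:ℝ)^k * (n.choose k : ℝ) / (x + k)
      = (n.factorial : ℝ) / ∏ i ∈ range (n+1), (x + i) := by
  induction n generalizing x with
  | zero => simp
  | succ n IH =>
    have hrec : ∑ k ∈ range (n+2), (-1:ℝ)^k * ((n+1).choose k : ℝ) / (x + k)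
        = (∑ k ∈ range (n+1), (-1:ℝ)^k * (n.choose k : ℝ) / (x + k))
          - ∑ k ∈ range (n+1), (-1:ℝ)^k * (n.choose k : ℝ) / ((x+1) + k) := by
      rw [Finset.sum_range_succ' (n := n+1)]
      have hsplit : ∀ i ∈ range (n+1),
          (-1:ℝ)^(i+1) * (((n+1)).choose (i+1) : ℝ) / (x + ((i+1 : ℕ):ℝ))
          = (-1:ℝ)^(i+1) * ((n).choose (i+1) : ℝ) / (x + ((i+1 : ℕ):ℝ))
            + (-((-1:ℝ)^i * ((n).choose i : ℝ) / ((x+1) + i))) := by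
        intro i hi
        have hne : x + ((i:ℝ)+1) ≠ 0 := by
          have := hx (i+1) (by simp at hi; omega); push_cast at this; exact this
        rw [Nat.choose_succ_succ]
        push_cast [Nat.factorial_succ]
        rw [show x+1+(i:ℝ) = x + ((i:ℝ)+1) by ring]
        field_simp
        ring
      rw [Finset.sum_congr rfl hsplit, Finset.sum_add_distrib]
      have h1 : (∑ i ∈ range (n+1), (-1:ℝ)^(i+1) * ((n).choose (i+1) : ℝ) / (x + ((i+1:ℕ):ℝ)))
            + (-1:ℝ)^0 * (((n+1)).choose 0 : ℝ) / (x + ((0:ℕ):ℝ))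
          = ∑ k ∈ range (n+1), (-1:ℝ)^k * ((n).choose k : ℝ) / (x + k) := by
        have := Finset.sum_range_succ' (fun k => (-1:ℝ)^k * ((n).choose k : ℝ) / (x + k)) (n+1)
        simp only [Nat.cast_zero, pow_zero, one_mul, Nat.choose_zero_right, Nat.cast_one] at this ⊢
        rw [← this, Finset.sum_range_succ]
        simp
      rw [add_right_comm, h1]
      rw [Finset.sum_neg_distrib]
      ring
    rw [hrec, IH x (fun i hi => hx i (by omega)),
      IH (x+1) (fun i hi => by
        have := hx (i+1) (by omega); push_cast at this ⊢; rw [show x+1+(i:ℝ) = x + ((i:ℝ)+1) by ring]; exact this)]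
    have hP : (∏ i ∈ range (n+1), (x + i)) ≠ 0 :=
      Finset.prod_ne_zero_iff.2 fun i hi => hx i (by simp at hi; omega)
    have hQ : (∏ i ∈ range (n+1), (x + 1 + i)) ≠ 0 :=
      Finset.prod_ne_zero_iff.2 fun i hi => by
        have := hx (i+1) (by simp at hi; omega); push_cast at this; rw [show x+1+(i:ℝ) = x + ((i:ℝ)+1) by ring]; exact this
    have h1 : (∏ i ∈ range (n+2), (x + i)) = (∏ i ∈ range (n+1), (x + i)) * (x + ((n:ℝ)+1)) := by
      rw [Finset.prod_range_succ]; push_cast; ring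
    have h2 : (∏ i ∈ range (n+2), (x + i)) = (∏ i ∈ range (n+1), (x + 1 + i)) * x := by
      have hcong : ∀ i ∈ range (n+1), x + (((i+1:ℕ)):ℝ) = x + 1 + i := fun i _ => by push_cast; ring
      rw [Finset.prod_range_succ' (fun i => x + (i:ℝ)) (n+1), Finset.prod_congr rfl hcong]
      norm_num
    have hx0 : x ≠ 0 := by have := hx 0 (by omega); simpa using this
    have hxn : x + ((n:ℝ)+1) ≠ 0 := by
      have := hx (n+1) (by omega); push_cast at this; exact this
    have key : (∏ i ∈ range (n+1), (x + 1 + i)) * x = (∏ i ∈ range (n+1), (x + i)) * (x + ((n:ℝ)+1)) := by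
      rw [← h2, ← h1]
    rw [h1, div_sub_div _ _ hP hQ, div_eq_div_iff (mul_ne_zero hP hQ) (mul_ne_zero hP hxn)]
    push_cast [Nat.factorial_succ]
    linear_combination ((n.factorial:ℝ)) * (∏ i ∈ range (n+1), (x + i)) * key

private lemma Gamma_nat_add (x : ℝ) (hx : 0 < x) (n : ℕ) :
    Real.Gamma (x + n) = Real.Gamma x * ∏ i ∈ range n, (x + i) := by
  induction n with
  | zero => simp
  | succ n IH =>
    have hxn : x + (n:ℝ) ≠ 0 := by positivity
    rw [Finset.prod_range_succ, show x + ((n:ℕ)+1:ℕ) = (x + n) + 1 by push_cast; ring,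
      Real.Gamma_add_one hxn, IH]
    ring

private lemma betaAux (u v : ℝ) (x : ℝ) (hx : x ∈ Set.Icc (0:ℝ) 1) :
    (x:ℂ) ^ ((u:ℂ)-1) * (1-(x:ℂ)) ^ ((v:ℂ)-1)
      = ((x ^ (u-1) * (1-x) ^ (v-1) : ℝ) : ℂ) := by
  rw [show ((u:ℂ)-1) = ((u-1 : ℝ) : ℂ) by push_cast; ring,
    show ((v:ℂ)-1) = ((v-1 : ℝ) : ℂ) by push_cast; ring,
    show (1-(x:ℂ)) = ((1 - x : ℝ) : ℂ) by push_cast; ring,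
    ← Complex.ofReal_cpow hx.1, ← Complex.ofReal_cpow (by linarith [hx.2] : (0:ℝ) ≤ 1 - x),
    ← Complex.ofReal_mul]

private lemma betaIntegrable (u v : ℝ) (hu : 0 < u) (hv : 0 < v) :
    IntervalIntegrable (fun x : ℝ => x ^ (u-1) * (1-x) ^ (v-1)) volume 0 1 := by
  have h := Complex.betaIntegral_convergent (u := (u:ℂ)) (v := (v:ℂ)) (by simpa) (by simpa)
  rw [intervalIntegrable_iff_integrableOn_Ioc_of_le zero_le_one] at h ⊢
  refine IntegrableOn.congr_fun (Integrable.re h) (fun x hx => ?_) measurableSet_Ioc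
  rw [betaAux u v x ⟨hx.1.le, hx.2⟩]
  simp

private lemma betaValue (u v : ℝ) (hu : 0 < u) (hv : 0 < v) :
    ∫ x in (0:ℝ)..1, x ^ (u-1) * (1-x) ^ (v-1)
      = Real.Gamma u * Real.Gamma v / Real.Gamma (u+v) := by
  have hc := Complex.Gamma_mul_Gamma_eq_betaIntegral
    (s := (u:ℂ)) (t := (v:ℂ)) (by simpa) (by simpa)
  have hcast : Complex.betaIntegral u v = ((∫ x in (0:ℝ)..1, x ^ (u-1) * (1-x) ^ (v-1) : ℝ) : ℂ) := by
    rw [Complex.betaIntegral, ← intervalIntegral.integral_ofReal]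
    refine intervalIntegral.integral_congr fun x hx => ?_
    rw [Set.uIcc_of_le zero_le_one] at hx
    exact betaAux u v x hx
  rw [hcast] at hc
  have hne : Real.Gamma (u+v) ≠ 0 := (Real.Gamma_pos_of_pos (by linarith)).ne'
  have : ((Real.Gamma u * Real.Gamma v : ℝ) : ℂ)
      = ((Real.Gamma (u+v) * ∫ x in (0:ℝ)..1, x ^ (u-1) * (1-x) ^ (v-1) : ℝ) : ℂ) := by
    push_cast
    rw [← Complex.Gamma_ofReal, ← Complex.Gamma_ofReal, ← Complex.Gamma_ofReal] at *
    push_cast at hc ⊢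
    rw [hc]
  have h2 := Complex.ofReal_injective this
  field_simp
  linarith [h2]

/-- The fractional backward Jacobi function of degree `r` with parameters `μ, υ, ρ`. -/
noncomputable def backJacobi (μ υ ρ : ℝ) (r : ℕ) (t : ℝ) : ℝ :=
  (Real.Gamma ((r : ℝ) + μ + 1) / ((Nat.factorial r : ℝ) * Real.Gamma ((r : ℝ) + μ + υ + 1))) *
    ∑ k ∈ Finset.range (r + 1),
      (Nat.choose r k : ℝ) * (-1 : ℝ) ^ k *
        (Real.Gamma ((r : ℝ) + (k : ℝ) + μ + υ + 1) / Real.Gamma ((k : ℝ) + μ + 1)) *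
        (1 - t) ^ (ρ * (k : ℝ))

/-- The backward Jacobi weight ϰ^{μ,υ,ρ} on (0,1). -/
noncomputable def backWeight (μ υ ρ t : ℝ) : ℝ :=
  ρ * (1 - t) ^ (ρ * (μ + 1) - 1) * (1 - (1 - t) ^ ρ) ^ υ

/-- The normalization constant β̂_r^{μ,υ}. -/
noncomputable def betaHat (μ υ : ℝ) (r : ℕ) : ℝ :=
  Real.Gamma ((r : ℝ) + μ + 1) * Real.Gamma ((r : ℝ) + υ + 1) /
    ((Nat.factorial r : ℝ) * (2 * (r : ℝ) + μ + υ + 1) * Real.Gamma ((r : ℝ) + μ + υ + 1))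

private noncomputable def dcoef (μ υ : ℝ) (r k : ℕ) : ℝ :=
  (r.choose k : ℝ) * (-1:ℝ)^k * (Real.Gamma ((r:ℝ) + (k:ℝ) + μ + υ + 1) / Real.Gamma ((k:ℝ) + μ + 1))
private noncomputable def Bm (μ υ : ℝ) (n : ℕ) : ℝ :=
  Real.Gamma (μ+(n:ℝ)+1) * Real.Gamma (υ+1) / Real.Gamma ((μ+(n:ℝ)+1)+(υ+1))
private noncomputable def crCoef (μ υ : ℝ) (r : ℕ) : ℝ :=
  Real.Gamma ((r:ℝ) + μ + 1) / ((Nat.factorial r : ℝ) * Real.Gamma ((r:ℝ) + μ + υ + 1))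

private lemma subst_main (ρ : ℝ) (hρ : 0 < ρ) (b υ : ℝ) (hb : 0 < b) (hυ : -1 < υ) :
    IntegrableOn (fun t : ℝ => ρ * (1-t) ^ (ρ*b-1) * (1-(1-t)^ρ) ^ υ) (Set.Ioo 0 1)
    ∧ ∫ t in Set.Ioo (0:ℝ) 1, ρ * (1-t) ^ (ρ*b-1) * (1-(1-t)^ρ) ^ υ
        = Real.Gamma b * Real.Gamma (υ+1) / Real.Gamma (b+(υ+1)) := by
  set g : ℝ → ℝ := fun x => x ^ (b-1) * (1-x) ^ ((υ+1)-1) with hg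
  set f : ℝ → ℝ := fun t => (1-t) ^ ρ with hf
  set f' : ℝ → ℝ := fun t => -(ρ * (1-t) ^ (ρ-1)) with hf'
  have hderiv : ∀ t ∈ Set.Ioo (0:ℝ) 1, HasDerivWithinAt f (f' t) (Set.Ioo 0 1) t := by
    intro t ht
    have h1 : HasDerivAt (fun t : ℝ => 1 - t) (-1) t := by
      simpa using (hasDerivAt_id t).const_sub 1
    have h2 : HasDerivAt (fun y : ℝ => y ^ ρ) (ρ * (1-t) ^ (ρ-1)) (1-t) :=
      Real.hasDerivAt_rpow_const (Or.inl (ne_of_gt (by linarith [ht.2] : (0:ℝ) < 1 - t)))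
    have := h2.comp t h1
    simp only [mul_neg_one] at this
    exact this.hasDerivWithinAt
  have hinj : Set.InjOn f (Set.Ioo 0 1) := by
    intro t1 h1 t2 h2 he
    by_contra hne
    rcases lt_or_gt_of_ne hne with h | h
    · have : (1-t2) ^ ρ < (1-t1) ^ ρ :=
        Real.rpow_lt_rpow (by linarith [h2.2]) (by linarith) hρ
      rw [hf] at he; simp only at he; linarith
    · have : (1-t1) ^ ρ < (1-t2) ^ ρ :=
        Real.rpow_lt_rpow (by linarith [h1.2]) (by linarith) hρ
      rw [hf] at he; simp only at he; linarith
  have himg : f '' Set.Ioo 0 1 = Set.Ioo 0 1 := by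
    ext y
    constructor
    · rintro ⟨t, ht, rfl⟩
      exact ⟨Real.rpow_pos_of_pos (by linarith [ht.2]) ρ,
        Real.rpow_lt_one (by linarith [ht.2]) (by linarith [ht.1]) hρ⟩
    · intro hy
      refine ⟨1 - y ^ (1/ρ), ⟨?_, ?_⟩, ?_⟩
      · have : y ^ (1/ρ) < 1 := Real.rpow_lt_one hy.1.le hy.2 (by positivity)
        linarith
      · have : 0 < y ^ (1/ρ) := Real.rpow_pos_of_pos hy.1 _
        linarith
      · show (1 - (1 - y ^ (1/ρ))) ^ ρ = y
        rw [show 1 - (1 - y ^ (1/ρ)) = y ^ (1/ρ) by ring, ← Real.rpow_mul hy.1.le,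
          one_div, inv_mul_cancel₀ hρ.ne', Real.rpow_one]
  have heq : Set.EqOn (fun t => |f' t| • g (f t))
      (fun t : ℝ => ρ * (1-t) ^ (ρ*b-1) * (1-(1-t)^ρ) ^ υ) (Set.Ioo 0 1) := by
    intro t ht
    have h1t : (0:ℝ) < 1 - t := by linarith [ht.2]
    simp only [hf, hf', hg, smul_eq_mul, abs_neg]
    rw [abs_of_pos (by positivity : (0:ℝ) < ρ * (1-t) ^ (ρ-1))]
    rw [show ((1-t) ^ ρ) ^ (b-1) = (1-t) ^ (ρ*(b-1)) from (Real.rpow_mul h1t.le ρ (b-1)).symm]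
    rw [show (υ+1)-1 = υ by ring]
    rw [show ρ * (1-t) ^ (ρ-1) * ((1-t) ^ (ρ*(b-1)) * (1 - (1-t) ^ ρ) ^ υ)
        = ρ * ((1-t) ^ (ρ-1) * (1-t) ^ (ρ*(b-1))) * (1 - (1-t) ^ ρ) ^ υ by ring]
    rw [← Real.rpow_add h1t, show ρ - 1 + ρ*(b-1) = ρ*b-1 by ring]
  have hgInt : IntegrableOn g (Set.Ioo 0 1) := by
    have := (betaIntegrable b (υ+1) hb (by linarith)).1
    rw [← hg] at this
    exact this.mono_set Set.Ioo_subset_Ioc_self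
  constructor
  · have := (integrableOn_image_iff_integrableOn_abs_deriv_smul measurableSet_Ioo hderiv hinj g).1
      (by rw [himg]; exact hgInt)
    exact this.congr_fun heq measurableSet_Ioo
  · have h2 := integral_image_eq_integral_abs_deriv_smul measurableSet_Ioo hderiv hinj g
    rw [himg] at h2
    rw [← setIntegral_congr_fun measurableSet_Ioo heq, ← h2,
      ← MeasureTheory.integral_Ioc_eq_integral_Ioo,
      ← intervalIntegral.integral_of_le zero_le_one]
    exact betaValue b (υ+1) hb (by linarith)

private lemma weight_monomial (μ υ ρ : ℝ) (hμ : -1 < μ) (hυ : -1 < υ) (hρ : 0 < ρ) (n : ℕ) :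
    IntervalIntegrable (fun t : ℝ => backWeight μ υ ρ t * (1-t) ^ (ρ*(n:ℝ))) volume 0 1
    ∧ ∫ t in (0:ℝ)..1, backWeight μ υ ρ t * (1-t) ^ (ρ*(n:ℝ))
        = Real.Gamma (μ+(n:ℝ)+1) * Real.Gamma (υ+1) / Real.Gamma ((μ+(n:ℝ)+1)+(υ+1)) := by
  have hb : (0:ℝ) < μ + (n:ℝ) + 1 := by
    have : (0:ℝ) ≤ (n:ℝ) := Nat.cast_nonneg n
    linarith
  obtain ⟨hint, hval⟩ := subst_main ρ hρ (μ+(n:ℝ)+1) υ hb hυ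
  have heq : Set.EqOn (fun t : ℝ => ρ * (1-t) ^ (ρ*(μ+(n:ℝ)+1)-1) * (1-(1-t)^ρ) ^ υ)
      (fun t : ℝ => backWeight μ υ ρ t * (1-t) ^ (ρ*(n:ℝ))) (Set.Ioo 0 1) := by
    intro t ht
    have h1t : (0:ℝ) < 1 - t := by linarith [ht.2]
    simp only [backWeight]
    rw [show ρ*(μ+(n:ℝ)+1)-1 = (ρ*(μ+1)-1) + ρ*(n:ℝ) by ring, Real.rpow_add h1t]
    ring
  constructor
  · rw [intervalIntegrable_iff_integrableOn_Ioo_of_le zero_le_one]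
    exact hint.congr_fun heq measurableSet_Ioo
  · rw [intervalIntegral.integral_of_le zero_le_one, MeasureTheory.integral_Ioc_eq_integral_Ioo,
      ← setIntegral_congr_fun measurableSet_Ioo heq, hval]

private lemma inner_lt (μ υ : ℝ) (hμ : -1 < μ) (hυ : -1 < υ) (s j : ℕ) (hj : j < s) :
    ∑ k ∈ range (s+1), dcoef μ υ s k * Bm μ υ (j+k) = 0 := by
  classical
  set c : ℕ → ℝ := fun i => if i < j then μ+1+(i:ℝ) else μ+υ+2+(i:ℝ) with hc
  have hterm : ∀ k ∈ range (s+1), dcoef μ υ s k * Bm μ υ (j+k)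
      = Real.Gamma (υ+1) * ((-1:ℝ)^k * (s.choose k : ℝ) * ∏ i ∈ range (s-1), (c i + (k:ℝ))) := by
    intro k _
    have hG1pos : (0:ℝ) < (k:ℝ) + μ + 1 := by
      have : (0:ℝ) ≤ (k:ℝ) := Nat.cast_nonneg k
      linarith
    have hG2pos : (0:ℝ) < (μ+((j+k:ℕ):ℝ)+1)+(υ+1) := by
      have h1 : (0:ℝ) ≤ ((j+k:ℕ):ℝ) := Nat.cast_nonneg _
      linarith
    have G1 : Real.Gamma (μ+((j+k:ℕ):ℝ)+1)
        = Real.Gamma ((k:ℝ)+μ+1) * ∏ i ∈ range j, (((k:ℝ)+μ+1) + (i:ℝ)) := by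
      rw [← Gamma_nat_add _ hG1pos j]
      congr 1
      push_cast
      ring
    have G2 : Real.Gamma ((s:ℝ)+(k:ℝ)+μ+υ+1)
        = Real.Gamma ((μ+((j+k:ℕ):ℝ)+1)+(υ+1))
          * ∏ i ∈ range (s-1-j), ((μ+((j+k:ℕ):ℝ)+1)+(υ+1) + (i:ℝ)) := by
      rw [← Gamma_nat_add _ hG2pos (s-1-j)]
      congr 1
      have : ((s-1-j:ℕ):ℝ) = (s:ℝ) - 1 - (j:ℝ) := by
        have h1 : j + 1 ≤ s := hj
        push_cast [Nat.cast_sub (by omega : j ≤ s - 1), Nat.cast_sub (by omega : 1 ≤ s)]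
        ring
      rw [this]
      push_cast
      ring
    have hsplit : ∏ i ∈ range (s-1), (c i + (k:ℝ))
        = (∏ i ∈ range j, (((k:ℝ)+μ+1) + (i:ℝ)))
          * ∏ i ∈ range (s-1-j), ((μ+((j+k:ℕ):ℝ)+1)+(υ+1) + (i:ℝ)) := by
      obtain ⟨m, hm⟩ : ∃ m, s - 1 - j = m := ⟨_, rfl⟩
      rw [hm]
      have hs1 : s - 1 = j + m := by omega
      rw [hs1, Finset.prod_range_add]
      congr 1
      · exact Finset.prod_congr rfl fun i hi => by
          simp only [hc, if_pos (Finset.mem_range.1 hi)]; ring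
      · exact Finset.prod_congr rfl fun i _ => by
          simp only [hc, if_neg (by omega : ¬ (j + i < j))]; push_cast; ring
    have hne1 : Real.Gamma ((k:ℝ)+μ+1) ≠ 0 := (Real.Gamma_pos_of_pos hG1pos).ne'
    have hne2 : Real.Gamma ((μ+((j+k:ℕ):ℝ)+1)+(υ+1)) ≠ 0 := (Real.Gamma_pos_of_pos hG2pos).ne'
    simp only [dcoef, Bm]
    rw [G1, G2, hsplit]
    set A := Real.Gamma ((μ+((j+k:ℕ):ℝ)+1)+(υ+1)) with hAdef
    set B := Real.Gamma ((k:ℝ)+μ+1) with hBdef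
    field_simp [hne1, hne2]
  rw [Finset.sum_congr rfl hterm, ← Finset.mul_sum,
    alt_sum_poly s (s-1) (by omega) c, mul_zero]

private lemma inner_eq (μ υ : ℝ) (hμ : -1 < μ) (hυ : -1 < υ) (s : ℕ) (hnd : s ≠ 0 ∨ μ+υ+1 ≠ 0) :
    ∑ k ∈ range (s+1), dcoef μ υ s k * Bm μ υ (s+k)
      = Real.Gamma (υ+1) * (((-1:ℝ)^s * ∏ i ∈ range s, (υ+1+(i:ℝ)))
          * ((s.factorial : ℝ) / ∏ i ∈ range (s+1), (μ+υ+1+(s:ℝ)+(i:ℝ)))) := by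
  classical
  have hy : ∀ k : ℕ, k ≤ s → μ+υ+1+(s:ℝ)+(k:ℝ) ≠ 0 := by
    intro k hk
    rcases Nat.eq_zero_or_pos s with rfl | hs
    · have hk0 : k = 0 := by omega
      subst hk0
      simp only [Nat.cast_zero, add_zero]
      rcases hnd with h | h
      · exact absurd rfl h
      · exact h
    · have h1 : (1:ℝ) ≤ (s:ℝ) := by exact_mod_cast hs
      have h2 : (0:ℝ) ≤ (k:ℝ) := Nat.cast_nonneg k
      exact ne_of_gt (by linarith)
  have hGy : ∀ k : ℕ, k ≤ s → Real.Gamma (μ+υ+1+(s:ℝ)+(k:ℝ)) ≠ 0 := by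
    intro k hk
    refine Real.Gamma_ne_zero fun m => ?_
    cases m with
    | zero => simpa using hy k hk
    | succ m =>
      have h1 : (0:ℝ) ≤ (s:ℝ) := Nat.cast_nonneg s
      have h2 : (0:ℝ) ≤ (k:ℝ) := Nat.cast_nonneg k
      have h3 : (1:ℝ) ≤ ((m+1 : ℕ):ℝ) := by exact_mod_cast Nat.one_le_iff_ne_zero.2 (Nat.succ_ne_zero m)
      intro hc
      push_cast at hc
      linarith
  have hterm : ∀ k ∈ range (s+1), dcoef μ υ s k * Bm μ υ (s+k)
      = Real.Gamma (υ+1) * ((-1:ℝ)^k * (s.choose k : ℝ)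
          * (∏ i ∈ range s, (μ+1+(i:ℝ)+(k:ℝ))) / (μ+υ+1+(s:ℝ)+(k:ℝ))) := by
    intro k hk
    have hkle : k ≤ s := by simp at hk; omega
    have hG1pos : (0:ℝ) < (k:ℝ) + μ + 1 := by
      have : (0:ℝ) ≤ (k:ℝ) := Nat.cast_nonneg k
      linarith
    have G1 : Real.Gamma (μ+((s+k:ℕ):ℝ)+1)
        = Real.Gamma ((k:ℝ)+μ+1) * ∏ i ∈ range s, (μ+1+(i:ℝ)+(k:ℝ)) := by
      have hG := Gamma_nat_add ((k:ℝ)+μ+1) hG1pos s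
      rw [show μ+((s+k:ℕ):ℝ)+1 = ((k:ℝ)+μ+1)+(s:ℝ) by push_cast; ring, hG]
      congr 1
      exact Finset.prod_congr rfl fun i _ => by ring
    have G2 : Real.Gamma ((μ+((s+k:ℕ):ℝ)+1)+(υ+1))
        = (μ+υ+1+(s:ℝ)+(k:ℝ)) * Real.Gamma (μ+υ+1+(s:ℝ)+(k:ℝ)) := by
      rw [show (μ+((s+k:ℕ):ℝ)+1)+(υ+1) = (μ+υ+1+(s:ℝ)+(k:ℝ)) + 1 by push_cast; ring]
      exact Real.Gamma_add_one (hy k hkle)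
    have G3 : Real.Gamma ((s:ℝ)+(k:ℝ)+μ+υ+1) = Real.Gamma (μ+υ+1+(s:ℝ)+(k:ℝ)) := by
      congr 1
      ring
    simp only [dcoef, Bm]
    rw [G1, G2, G3]
    set A := Real.Gamma (μ+υ+1+(s:ℝ)+(k:ℝ)) with hA
    set B := Real.Gamma ((k:ℝ)+μ+1) with hB
    have hAne : A ≠ 0 := hGy k hkle
    have hBne : B ≠ 0 := (Real.Gamma_pos_of_pos hG1pos).ne'
    have hyne : μ+υ+1+(s:ℝ)+(k:ℝ) ≠ 0 := hy k hkle
    field_simp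
  rw [Finset.sum_congr rfl hterm, ← Finset.mul_sum]
  congr 1
  -- main sum computation
  have hP : ∀ k : ℕ, (∏ i ∈ range s, (μ+1+(i:ℝ)+(k:ℝ)))
      = ∑ t ∈ (range s).powerset, (∏ i ∈ t, ((i:ℝ)-υ-(s:ℝ)))
          * (μ+υ+1+(s:ℝ)+(k:ℝ))^((range s \ t).card) := by
    intro k
    rw [show (∏ i ∈ range s, (μ+1+(i:ℝ)+(k:ℝ)))
        = ∏ i ∈ range s, (((i:ℝ)-υ-(s:ℝ)) + (μ+υ+1+(s:ℝ)+(k:ℝ)))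
      from Finset.prod_congr rfl fun i _ => by ring]
    rw [Finset.prod_add]
    exact Finset.sum_congr rfl fun t ht => by rw [Finset.prod_const]
  calc ∑ k ∈ range (s+1), (-1:ℝ)^k * (s.choose k : ℝ)
        * (∏ i ∈ range s, (μ+1+(i:ℝ)+(k:ℝ))) / (μ+υ+1+(s:ℝ)+(k:ℝ))
      = ∑ k ∈ range (s+1), ∑ t ∈ (range s).powerset, (∏ i ∈ t, ((i:ℝ)-υ-(s:ℝ)))
          * ((-1:ℝ)^k * (s.choose k : ℝ)
            * (μ+υ+1+(s:ℝ)+(k:ℝ))^((range s \ t).card) / (μ+υ+1+(s:ℝ)+(k:ℝ))) := by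
        refine Finset.sum_congr rfl fun k _ => ?_
        rw [hP k, Finset.mul_sum, Finset.sum_div]
        exact Finset.sum_congr rfl fun t _ => by ring
    _ = ∑ t ∈ (range s).powerset, (∏ i ∈ t, ((i:ℝ)-υ-(s:ℝ)))
          * ∑ k ∈ range (s+1), ((-1:ℝ)^k * (s.choose k : ℝ)
            * (μ+υ+1+(s:ℝ)+(k:ℝ))^((range s \ t).card) / (μ+υ+1+(s:ℝ)+(k:ℝ))) := by
        rw [Finset.sum_comm]
        exact Finset.sum_congr rfl fun t _ => by rw [Finset.mul_sum]
    _ = (∏ i ∈ range s, ((i:ℝ)-υ-(s:ℝ)))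
          * ∑ k ∈ range (s+1), ((-1:ℝ)^k * (s.choose k : ℝ) / (μ+υ+1+(s:ℝ)+(k:ℝ))) := by
        refine Finset.sum_eq_single_of_mem (range s) (Finset.mem_powerset_self _) ?_ |>.trans ?_
        · intro t ht htne
          have hsub : t ⊆ range s := Finset.mem_powerset.1 ht
          have hm1 : 1 ≤ (range s \ t).card := by
            obtain ⟨x, hx1, hx2⟩ := Finset.exists_of_ssubset (Finset.ssubset_iff_subset_ne.2 ⟨hsub, htne⟩)
            exact Finset.card_pos.2 ⟨x, Finset.mem_sdiff.2 ⟨hx1, hx2⟩⟩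
          have hms : (range s \ t).card ≤ s := by
            calc (range s \ t).card ≤ (range s).card := Finset.card_le_card Finset.sdiff_subset
            _ = s := Finset.card_range s
          obtain ⟨d, hd⟩ : ∃ d, (range s \ t).card = d + 1 := ⟨(range s \ t).card - 1, by omega⟩
          have hz : ∑ k ∈ range (s+1), ((-1:ℝ)^k * (s.choose k : ℝ)
              * (μ+υ+1+(s:ℝ)+(k:ℝ))^((range s \ t).card) / (μ+υ+1+(s:ℝ)+(k:ℝ))) = 0 := by
            have hcong : ∀ k ∈ range (s+1), (-1:ℝ)^k * (s.choose k : ℝ)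
                * (μ+υ+1+(s:ℝ)+(k:ℝ))^((range s \ t).card) / (μ+υ+1+(s:ℝ)+(k:ℝ))
                = (-1:ℝ)^k * (s.choose k : ℝ)
                  * ∏ i ∈ range d, ((μ+υ+1+(s:ℝ)) + (k:ℝ)) := by
              intro k hk
              have hkle : k ≤ s := by simp at hk; omega
              rw [Finset.prod_const, Finset.card_range, hd, pow_succ]
              field_simp [hy k hkle]
            rw [Finset.sum_congr rfl hcong]
            exact alt_sum_poly s d (by omega) (fun _ => μ+υ+1+(s:ℝ))
          rw [hz, mul_zero]
        · refine congrArg _ (Finset.sum_congr rfl fun k _ => ?_)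
          rw [Finset.sdiff_self, Finset.card_empty, pow_zero, mul_one]
    _ = (∏ i ∈ range s, ((i:ℝ)-υ-(s:ℝ)))
          * ((s.factorial : ℝ) / ∏ i ∈ range (s+1), ((μ+υ+1+(s:ℝ)) + (i:ℝ))) := by
        rw [alt_sum_inv s (μ+υ+1+(s:ℝ)) (fun i hi => hy i hi)]
    _ = ((-1:ℝ)^s * ∏ i ∈ range s, (υ+1+(i:ℝ)))
          * ((s.factorial : ℝ) / ∏ i ∈ range (s+1), (μ+υ+1+(s:ℝ)+(i:ℝ))) := by
        congr 1
        have h1 : (∏ i ∈ range s, ((i:ℝ)-υ-(s:ℝ)))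
            = (-1:ℝ)^s * ∏ i ∈ range s, (υ+(s:ℝ)-(i:ℝ)) := by
          rw [show (∏ i ∈ range s, ((i:ℝ)-υ-(s:ℝ)))
              = ∏ i ∈ range s, ((-1) * (υ+(s:ℝ)-(i:ℝ)))
            from Finset.prod_congr rfl fun i _ => by ring]
          rw [Finset.prod_mul_distrib, Finset.prod_const, Finset.card_range]
        have h2 : (∏ i ∈ range s, (υ+(s:ℝ)-(i:ℝ))) = ∏ i ∈ range s, (υ+1+(i:ℝ)) := by
          rw [← Finset.prod_range_reflect (fun j => υ+1+(j:ℝ)) s]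
          refine Finset.prod_congr rfl fun j hj => ?_
          have hjs : j < s := Finset.mem_range.1 hj
          rw [Nat.cast_sub (by omega : j ≤ s - 1), Nat.cast_sub (by omega : 1 ≤ s)]
          push_cast
          ring
        rw [h1, h2]

private lemma key_alg (μ υ : ℝ) (hμ : -1 < μ) (hυ : -1 < υ) (r s : ℕ) (hrs : r ≤ s)
    (hnd : s ≠ 0 ∨ μ+υ+1 ≠ 0) :
    crCoef μ υ r * crCoef μ υ s *
      ∑ j ∈ range (r+1), ∑ k ∈ range (s+1), dcoef μ υ r j * dcoef μ υ s k * Bm μ υ (j+k)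
    = if r = s then betaHat μ υ r else 0 := by
  have houter : ∀ j ∈ range (r+1),
      ∑ k ∈ range (s+1), dcoef μ υ r j * dcoef μ υ s k * Bm μ υ (j+k)
      = dcoef μ υ r j * ∑ k ∈ range (s+1), dcoef μ υ s k * Bm μ υ (j+k) := by
    intro j _
    rw [Finset.mul_sum]
    exact Finset.sum_congr rfl fun k _ => by ring
  rw [Finset.sum_congr rfl houter]
  rcases lt_or_eq_of_le hrs with hlt | rfl
  · rw [if_neg (by omega)]
    have : ∀ j ∈ range (r+1),
        dcoef μ υ r j * ∑ k ∈ range (s+1), dcoef μ υ s k * Bm μ υ (j+k) = 0 := by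
      intro j hj
      rw [inner_lt μ υ hμ hυ s j (by simp at hj; omega), mul_zero]
    rw [Finset.sum_congr rfl this, Finset.sum_const, smul_zero, mul_zero]
  · rw [if_pos rfl]
    rw [Finset.sum_eq_single_of_mem r (Finset.self_mem_range_succ r)
      (fun j hj hjne => by
        rw [inner_lt μ υ hμ hυ r j (by simp at hj; omega), mul_zero])]
    rw [inner_eq μ υ hμ hυ r hnd]
    -- now pure Gamma algebra
    have hfac : ((r.factorial : ℝ)) ≠ 0 := by positivity
    have hGm : Real.Gamma ((r:ℝ)+μ+1) ≠ 0 := by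
      refine (Real.Gamma_pos_of_pos ?_).ne'
      have : (0:ℝ) ≤ (r:ℝ) := Nat.cast_nonneg r
      linarith
    have hGu : Real.Gamma (υ+1) ≠ 0 := (Real.Gamma_pos_of_pos (by linarith)).ne'
    have hy : ∀ i : ℕ, i ≤ r → μ+υ+1+(r:ℝ)+(i:ℝ) ≠ 0 := by
      intro i hi
      rcases Nat.eq_zero_or_pos r with rfl | hr
      · have : i = 0 := by omega
        subst this
        simp only [Nat.cast_zero, add_zero]
        exact hnd.resolve_left (by simp)
      · have h1 : (1:ℝ) ≤ (r:ℝ) := by exact_mod_cast hr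
        have h2 : (0:ℝ) ≤ (i:ℝ) := Nat.cast_nonneg i
        exact ne_of_gt (by linarith)
    have hane : (2*(r:ℝ)+μ+υ+1) ≠ 0 := by
      have := hy r le_rfl
      intro hc
      apply this
      push_cast
      linarith
    have hGa : Real.Gamma ((r:ℝ)+μ+υ+1) ≠ 0 := by
      refine Real.Gamma_ne_zero fun m => ?_
      cases m with
      | zero =>
        have := hy 0 (by omega)
        simp only [Nat.cast_zero, add_zero, Nat.cast_ofNat] at this ⊢
        intro hc; apply this; push_cast; linarith
      | succ m =>
        have h1 : (0:ℝ) ≤ (r:ℝ) := Nat.cast_nonneg r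
        have h3 : (1:ℝ) ≤ ((m+1 : ℕ):ℝ) := by exact_mod_cast Nat.one_le_iff_ne_zero.2 (Nat.succ_ne_zero m)
        intro hc
        push_cast at hc
        linarith
    have hG2a : Real.Gamma ((r:ℝ)+(r:ℝ)+μ+υ+1) ≠ 0 := by
      refine Real.Gamma_ne_zero fun m => ?_
      cases m with
      | zero =>
        have := hy r le_rfl
        intro hc; apply this; push_cast at hc ⊢; linarith
      | succ m =>
        have h1 : (0:ℝ) ≤ (r:ℝ) := Nat.cast_nonneg r
        have h3 : (1:ℝ) ≤ ((m+1 : ℕ):ℝ) := by exact_mod_cast Nat.one_le_iff_ne_zero.2 (Nat.succ_ne_zero m)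
        intro hc
        push_cast at hc
        linarith
    have hPa : (∏ i ∈ range (r+1), (μ+υ+1+(r:ℝ)+(i:ℝ))) ≠ 0 :=
      Finset.prod_ne_zero_iff.2 fun i hi => hy i (by simp at hi; omega)
    have F1 : Real.Gamma (υ+1) * ∏ i ∈ range r, (υ+1+(i:ℝ)) = Real.Gamma ((r:ℝ)+υ+1) := by
      rw [← Gamma_nat_add (υ+1) (by linarith) r]
      congr 1
      ring
    have F3 : Real.Gamma ((r:ℝ)+μ+υ+1) * ∏ i ∈ range (r+1), (μ+υ+1+(r:ℝ)+(i:ℝ))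
        = (2*(r:ℝ)+μ+υ+1) * Real.Gamma ((r:ℝ)+(r:ℝ)+μ+υ+1) := by
      rcases Nat.eq_zero_or_pos r with rfl | hr
      · simp only [Nat.cast_zero, add_zero, zero_add, range_one, Finset.prod_singleton, mul_zero]
        norm_num
        ring
      · have hx : (0:ℝ) < μ+υ+1+(r:ℝ) := by
          have h1 : (1:ℝ) ≤ (r:ℝ) := by exact_mod_cast hr
          linarith
        have hG := Gamma_nat_add (μ+υ+1+(r:ℝ)) hx (r+1)
        have harg : (μ+υ+1+(r:ℝ)) + ((r+1:ℕ):ℝ) = (2*(r:ℝ)+μ+υ+1) + 1 := by push_cast; ring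
        rw [harg, Real.Gamma_add_one hane] at hG
        calc Real.Gamma ((r:ℝ)+μ+υ+1) * ∏ i ∈ range (r+1), (μ+υ+1+(r:ℝ)+(i:ℝ))
            = Real.Gamma (μ+υ+1+(r:ℝ)) * ∏ i ∈ range (r+1), (μ+υ+1+(r:ℝ)+(i:ℝ)) := by
              congr 2
              ring
          _ = (2*(r:ℝ)+μ+υ+1) * Real.Gamma (2*(r:ℝ)+μ+υ+1) := hG.symm
          _ = (2*(r:ℝ)+μ+υ+1) * Real.Gamma ((r:ℝ)+(r:ℝ)+μ+υ+1) := by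
              congr 2
              ring
    have hchoose : ((r.choose r : ℕ) : ℝ) = 1 := by simp
    have hsq : ((-1:ℝ))^r * (-1:ℝ)^r = 1 := by
      rw [← pow_add]
      exact Even.neg_one_pow ⟨r, by omega⟩
    rw [dcoef, crCoef, betaHat, hchoose]
    rw [← F1]
    field_simp
    rw [show (r:ℝ) * (1 + 1) + μ + υ + 1 = (r:ℝ)+(r:ℝ)+μ+υ+1 by ring,
      eq_div_iff (by convert hane using 1; ring)]
    linear_combination
      ((∏ i ∈ range r, (υ+1+(i:ℝ))) * Real.Gamma ((r:ℝ)+(r:ℝ)+μ+υ+1) * (2*(r:ℝ)+μ+υ+1)) * hsq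
        - (∏ i ∈ range r, (υ+1+(i:ℝ))) * F3

/-- Orthogonality of the fractional backward Jacobi functions with respect to the
weight ϰ^{μ,υ,ρ}. -/
theorem backJacobi_orthogonality
    (μ υ ρ : ℝ) (hμ : -1 < μ) (hυ : -1 < υ) (hρ0 : 0 < ρ) (hρ1 : ρ ≤ 1) (r s : ℕ) :
    ∫ t in (0:ℝ)..1, backWeight μ υ ρ t * backJacobi μ υ ρ r t * backJacobi μ υ ρ s t
      = if r = s then betaHat μ υ r else 0 := by
  classical
  have hBJ : ∀ (q : ℕ) (t : ℝ), backJacobi μ υ ρ q t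
      = crCoef μ υ q * ∑ k ∈ range (q+1), dcoef μ υ q k * (1-t)^(ρ*(k:ℝ)) := by
    intro q t
    simp only [backJacobi, crCoef, dcoef]
  by_cases hdeg : μ + υ + 1 = 0 ∧ (r = 0 ∨ s = 0)
  · obtain ⟨ha, hrs0⟩ := hdeg
    have hzero : ∀ t : ℝ, backJacobi μ υ ρ 0 t = 0 := by
      intro t
      rw [hBJ 0 t]
      have hG0 : Real.Gamma (((0:ℕ):ℝ) + μ + υ + 1) = 0 := by
        rw [show ((0:ℕ):ℝ) + μ + υ + 1 = 0 by push_cast; linarith, Real.Gamma_zero]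
      rw [crCoef, hG0, mul_zero, div_zero, zero_mul]
    have hbeta : (if r = s then betaHat μ υ r else 0) = 0 := by
      split_ifs with h
      · have hr0 : r = 0 := by omega
        subst hr0
        rw [betaHat, show (2 * ((0:ℕ):ℝ) + μ + υ + 1) = 0 by push_cast; linarith]
        simp
      · rfl
    rw [hbeta]
    have hint0 : ∀ t : ℝ,
        backWeight μ υ ρ t * backJacobi μ υ ρ r t * backJacobi μ υ ρ s t = 0 := by
      intro t
      rcases hrs0 with h0 | h0 <;> subst h0 <;> rw [hzero t] <;> ring
    rw [intervalIntegral.integral_congr (fun t _ => hint0 t)]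
    simp
  push_neg at hdeg
  have hWint : ∀ n : ℕ,
      MeasureTheory.IntegrableOn (fun t : ℝ => backWeight μ υ ρ t * (1-t)^(ρ*(n:ℝ)))
        (Set.Ioo 0 1) MeasureTheory.volume := fun n =>
    (intervalIntegrable_iff_integrableOn_Ioo_of_le zero_le_one).1
      (weight_monomial μ υ ρ hμ hυ hρ0 n).1
  have Bvalue : ∀ n : ℕ,
      ∫ t in Set.Ioo (0:ℝ) 1, backWeight μ υ ρ t * (1-t)^(ρ*(n:ℝ)) = Bm μ υ n := by
    intro n
    rw [← MeasureTheory.integral_Ioc_eq_integral_Ioo,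
      ← intervalIntegral.integral_of_le zero_le_one]
    exact (weight_monomial μ υ ρ hμ hυ hρ0 n).2
  have expand : ∀ t ∈ Set.Ioo (0:ℝ) 1,
      backWeight μ υ ρ t * backJacobi μ υ ρ r t * backJacobi μ υ ρ s t
      = ∑ j ∈ range (r+1), ∑ k ∈ range (s+1),
          (crCoef μ υ r * crCoef μ υ s * (dcoef μ υ r j * dcoef μ υ s k))
            * (backWeight μ υ ρ t * (1-t) ^ (ρ*(((j+k:ℕ)):ℝ))) := by
    intro t ht
    have h1t : (0:ℝ) < 1 - t := by linarith [ht.2]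
    have hrpow : ∀ j k : ℕ, (1-t)^(ρ*((j:ℕ):ℝ)) * (1-t)^(ρ*((k:ℕ):ℝ))
        = (1-t)^(ρ*(((j+k:ℕ)):ℝ)) := by
      intro j k
      rw [← Real.rpow_add h1t]
      congr 1
      push_cast
      ring
    rw [hBJ r t, hBJ s t,
      show backWeight μ υ ρ t
          * (crCoef μ υ r * ∑ j ∈ range (r+1), dcoef μ υ r j * (1-t)^(ρ*(j:ℝ)))
          * (crCoef μ υ s * ∑ k ∈ range (s+1), dcoef μ υ s k * (1-t)^(ρ*(k:ℝ)))
        = (crCoef μ υ r * crCoef μ υ s)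
          * ((∑ j ∈ range (r+1), dcoef μ υ r j * (1-t)^(ρ*(j:ℝ)))
            * ∑ k ∈ range (s+1), dcoef μ υ s k * (1-t)^(ρ*(k:ℝ)))
          * backWeight μ υ ρ t from by ring,
      Finset.sum_mul_sum]
    rw [Finset.mul_sum, Finset.sum_mul]
    refine Finset.sum_congr rfl fun j _ => ?_
    rw [Finset.mul_sum, Finset.sum_mul]
    refine Finset.sum_congr rfl fun k _ => ?_
    rw [← hrpow j k]
    ring
  have step : (∫ t in (0:ℝ)..1,
        backWeight μ υ ρ t * backJacobi μ υ ρ r t * backJacobi μ υ ρ s t)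
      = crCoef μ υ r * crCoef μ υ s *
          ∑ j ∈ range (r+1), ∑ k ∈ range (s+1),
            dcoef μ υ r j * dcoef μ υ s k * Bm μ υ (j+k) := by
    rw [intervalIntegral.integral_of_le zero_le_one,
      MeasureTheory.integral_Ioc_eq_integral_Ioo,
      MeasureTheory.setIntegral_congr_fun measurableSet_Ioo expand,
      MeasureTheory.integral_finset_sum _
        (fun j _ => MeasureTheory.integrable_finset_sum _
          (fun k _ => (hWint (j+k)).const_mul _))]
    rw [Finset.mul_sum]
    refine Finset.sum_congr rfl fun j _ => ?_
    rw [MeasureTheory.integral_finset_sum _ (fun k _ => (hWint (j+k)).const_mul _),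
      Finset.mul_sum]
    refine Finset.sum_congr rfl fun k _ => ?_
    rw [MeasureTheory.integral_const_mul, Bvalue (j+k)]
    ring
  rw [step]
  rcases le_or_gt r s with hrs | hrs
  · have hnd : s ≠ 0 ∨ μ + υ + 1 ≠ 0 := by
      by_cases h : μ + υ + 1 = 0
      · left
        exact (hdeg h).2
      · right; exact h
    exact key_alg μ υ hμ hυ r s hrs hnd
  · have hnd : r ≠ 0 ∨ μ + υ + 1 ≠ 0 := by
      by_cases h : μ + υ + 1 = 0
      · left
        exact (hdeg h).1
      · right; exact h
    have hswap : ∑ j ∈ range (r+1), ∑ k ∈ range (s+1),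
          dcoef μ υ r j * dcoef μ υ s k * Bm μ υ (j+k)
        = ∑ k ∈ range (s+1), ∑ j ∈ range (r+1),
            dcoef μ υ s k * dcoef μ υ r j * Bm μ υ (k+j) := by
      rw [Finset.sum_comm]
      refine Finset.sum_congr rfl fun k _ => Finset.sum_congr rfl fun j _ => ?_
      rw [Nat.add_comm j k]
      ring
    rw [hswap, show crCoef μ υ r * crCoef μ υ s = crCoef μ υ s * crCoef μ υ r from mul_comm _ _,
      key_alg μ υ hμ hυ s r (le_of_lt hrs) hnd]
    rw [if_neg (by omega), if_neg (by omega)]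
end

section
/- Let μ, υ > -1, 0 < ρ ≤ 1 and r ∈ ℕ. Then for every t ∈ (0,1), d/dt { ρ^{-1} (1-t)^{ρμ+1} (1-(1-t)^ρ)^{υ+1} · d/dt 𝒫_r^{μ,υ,ρ}(t) } = - σ_r^{μ,υ} ϰ^{μ,υ,ρ}(t) 𝒫_r^{μ,υ,ρ}(t), where σ_r^{μ,υ} = r(r+μ+υ+1). That is, 𝒫_r^{μ,υ,ρ} is an eigenfunction of the associated singular Sturm–Liouville operator with eigenvalue σ_r^{μ,υ}. -/
open Real MeasureTheory Finset

/-- coefficient of `(1-t)^(ρ k)` in the backward Jacobi function. -/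
noncomputable def cJ (μ υ : ℝ) (r k : ℕ) : ℝ :=
  (Nat.choose r k : ℝ) * (-1 : ℝ) ^ k *
    (Real.Gamma ((r : ℝ) + (k : ℝ) + μ + υ + 1) / Real.Gamma ((k : ℝ) + μ + 1))

/-- overall normalizing constant of the backward Jacobi function. -/
noncomputable def CJ (μ υ : ℝ) (r : ℕ) : ℝ :=
  Real.Gamma ((r : ℝ) + μ + 1) / ((Nat.factorial r : ℝ) * Real.Gamma ((r : ℝ) + μ + υ + 1))

lemma backJacobi_eq (μ υ ρ : ℝ) (r : ℕ) (t : ℝ) :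
    backJacobi μ υ ρ r t = CJ μ υ r * ∑ k ∈ range (r+1), cJ μ υ r k * (1 - t) ^ (ρ * (k : ℝ)) :=
  rfl

lemma hasDerivAt_onesub_rpow (p : ℝ) {t : ℝ} (ht : t < 1) :
    HasDerivAt (fun x : ℝ => (1 - x) ^ p) (-(p * (1-t)^(p-1))) t := by
  have h1 : (0:ℝ) < 1 - t := by linarith
  have h := (Real.hasDerivAt_rpow_const (x := 1 - t) (p := p) (Or.inl h1.ne')).comp t
      ((hasDerivAt_id t).const_sub 1)
  simpa [Function.comp_def] using h.neg.neg

lemma hasDerivAt_backJacobi (μ υ ρ : ℝ) (r : ℕ) {t : ℝ} (ht : t < 1) :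
    HasDerivAt (backJacobi μ υ ρ r)
      (CJ μ υ r * ∑ k ∈ range (r+1), cJ μ υ r k * (-(ρ * (k:ℝ) * (1-t)^(ρ * (k:ℝ) - 1)))) t := by
  have h : HasDerivAt (fun x => ∑ k ∈ range (r+1), cJ μ υ r k * (1 - x) ^ (ρ * (k : ℝ)))
      (∑ k ∈ range (r+1), cJ μ υ r k * (-(ρ * (k:ℝ) * (1-t)^(ρ * (k:ℝ) - 1)))) t := by
    apply HasDerivAt.fun_sum
    intro k _
    exact (hasDerivAt_onesub_rpow (ρ * (k:ℝ)) ht).const_mul _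
  have h2 := h.const_mul (CJ μ υ r)
  exact h2

lemma hasDerivAt_Gk (μ υ ρ : ℝ) (hρ0 : 0 < ρ) (k : ℕ) {t : ℝ} (ht0 : 0 < t) (ht : t < 1) :
    HasDerivAt (fun x : ℝ => -(k:ℝ) * ((1-x)^(ρ*(μ+(k:ℝ))) * (1-(1-x)^ρ)^(υ+1)))
      (-(k:ℝ) * ( (-(ρ*(μ+(k:ℝ))*(1-t)^(ρ*(μ+(k:ℝ))-1))) * (1-(1-t)^ρ)^(υ+1)
        + (1-t)^(ρ*(μ+(k:ℝ))) * ((υ+1) * (1-(1-t)^ρ)^υ * (ρ*(1-t)^(ρ-1))))) t := by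
  have h1 : (0:ℝ) < 1 - t := by linarith
  have hxlt : (1-t)^ρ < 1 := Real.rpow_lt_one h1.le (by linarith) hρ0
  have hu : (0:ℝ) < 1 - (1-t)^ρ := by linarith
  have hu' : HasDerivAt (fun x : ℝ => 1 - (1-x)^ρ) (ρ*(1-t)^(ρ-1)) t := by
    simpa using (hasDerivAt_onesub_rpow ρ ht).const_sub 1
  have houter : HasDerivAt (fun x : ℝ => (1-(1-x)^ρ)^(υ+1))
      ((υ+1) * (1-(1-t)^ρ)^υ * (ρ*(1-t)^(ρ-1))) t := by
    have := (Real.hasDerivAt_rpow_const (x := 1-(1-t)^ρ) (p := υ+1) (Or.inl hu.ne')).comp t hu'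
    simpa [add_sub_cancel_right, Function.comp_def] using this
  exact (((hasDerivAt_onesub_rpow (ρ*(μ+(k:ℝ))) ht).mul houter).const_mul _)

lemma coeffId (μ υ : ℝ) (hμ : -1 < μ) (hυ : -1 < υ) (r j : ℕ) (hj : j < r) :
    cJ μ υ r (j+1) * ((((j:ℝ)+1))*(μ+(j:ℝ)+1))
      = cJ μ υ r j * ((j:ℝ)*(μ+(j:ℝ)+υ+1) - (r:ℝ)*((r:ℝ)+μ+υ+1)) := by
  have hJ : (0:ℝ) < (j:ℝ) + μ + 1 := by
    have : (0:ℝ) ≤ (j:ℝ) := Nat.cast_nonneg j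
    linarith
  have hR : (0:ℝ) < (r:ℝ) + (j:ℝ) + μ + υ + 1 := by
    have h1 : (1:ℝ) ≤ (r:ℝ) := by exact_mod_cast Nat.one_le_iff_ne_zero.mpr (by omega)
    have : (0:ℝ) ≤ (j:ℝ) := Nat.cast_nonneg j
    linarith
  have hΓb : Real.Gamma ((j:ℝ) + μ + 1) ≠ 0 := (Real.Gamma_pos_of_pos hJ).ne'
  have hb : Real.Gamma (((j+1:ℕ):ℝ) + μ + 1)
      = ((j:ℝ) + μ + 1) * Real.Gamma ((j:ℝ) + μ + 1) := by
    push_cast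
    rw [show (j:ℝ) + 1 + μ + 1 = ((j:ℝ) + μ + 1) + 1 by ring, Real.Gamma_add_one hJ.ne']
  have ha : Real.Gamma ((r:ℝ) + ((j+1:ℕ):ℝ) + μ + υ + 1)
      = ((r:ℝ) + (j:ℝ) + μ + υ + 1) * Real.Gamma ((r:ℝ) + (j:ℝ) + μ + υ + 1) := by
    push_cast
    rw [show (r:ℝ) + ((j:ℝ) + 1) + μ + υ + 1 = ((r:ℝ) + (j:ℝ) + μ + υ + 1) + 1 by ring,
      Real.Gamma_add_one hR.ne']
  have hc : ((r.choose (j+1)):ℝ) * ((j:ℝ)+1) = ((r.choose j):ℝ) * ((r:ℝ)-(j:ℝ)) := by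
    have := Nat.choose_succ_right_eq r j
    have h2 : ((r.choose (j+1) * (j+1) : ℕ) : ℝ) = ((r.choose j * (r - j) : ℕ) : ℝ) := by
      exact_mod_cast congrArg (Nat.cast : ℕ → ℝ) this
    push_cast [Nat.cast_sub hj.le] at h2
    linarith [h2]
  unfold cJ
  rw [ha, hb, mul_div_mul_comm, pow_succ]
  have hq : ((r:ℝ)+(j:ℝ)+μ+υ+1) / ((j:ℝ)+μ+1) * (μ+(j:ℝ)+1) = (r:ℝ)+(j:ℝ)+μ+υ+1 := by
    rw [show μ+(j:ℝ)+1 = (j:ℝ)+μ+1 by ring]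
    exact div_mul_cancel₀ _ hJ.ne'
  linear_combination
    (-((-1:ℝ)^j) * (Real.Gamma ((r:ℝ)+(j:ℝ)+μ+υ+1) / Real.Gamma ((j:ℝ)+μ+1)) * ((j:ℝ)+1)
        * ((r.choose (j+1) : ℝ))) * hq
    + (-((-1:ℝ)^j) * (Real.Gamma ((r:ℝ)+(j:ℝ)+μ+υ+1) / Real.Gamma ((j:ℝ)+μ+1))
        * ((r:ℝ)+(j:ℝ)+μ+υ+1)) * hc

lemma sumId (μ υ : ℝ) (hμ : -1 < μ) (hυ : -1 < υ) (r : ℕ) (x : ℝ) :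
    ∑ k ∈ range (r+1), cJ μ υ r k * ((k:ℝ)*(μ+(k:ℝ))) * x^k
      = ∑ k ∈ range (r+1),
          cJ μ υ r k * ((k:ℝ)*(μ+(k:ℝ)+υ+1) - (r:ℝ)*((r:ℝ)+μ+υ+1)) * x^(k+1) := by
  rw [Finset.sum_range_succ' (fun k => cJ μ υ r k * ((k:ℝ)*(μ+(k:ℝ))) * x^k) r,
    Finset.sum_range_succ]
  have htop : cJ μ υ r r * ((r:ℝ)*(μ+(r:ℝ)+υ+1) - (r:ℝ)*((r:ℝ)+μ+υ+1)) * x^(r+1) = 0 := by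
    rw [show (r:ℝ)*(μ+(r:ℝ)+υ+1) - (r:ℝ)*((r:ℝ)+μ+υ+1) = 0 by ring]
    ring
  rw [htop, add_zero]
  have hzero : cJ μ υ r 0 * (((0:ℕ):ℝ)*(μ+((0:ℕ):ℝ))) * x^0 = 0 := by
    norm_num
  rw [hzero, add_zero]
  apply Finset.sum_congr rfl
  intro j hj
  have hjr : j < r := Finset.mem_range.mp hj
  have hco := coeffId μ υ hμ hυ r j hjr
  have hcast : ((j+1:ℕ):ℝ) = (j:ℝ)+1 := by push_cast; ring
  calc cJ μ υ r (j+1) * (((j+1:ℕ):ℝ)*(μ+((j+1:ℕ):ℝ))) * x^(j+1)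
      = (cJ μ υ r (j+1) * (((j:ℝ)+1)*(μ+(j:ℝ)+1))) * x^(j+1) := by rw [hcast]; ring
    _ = (cJ μ υ r j * ((j:ℝ)*(μ+(j:ℝ)+υ+1) - (r:ℝ)*((r:ℝ)+μ+υ+1))) * x^(j+1) := by rw [hco]
    _ = cJ μ υ r j * ((j:ℝ)*(μ+(j:ℝ)+υ+1) - (r:ℝ)*((r:ℝ)+μ+υ+1)) * x^(j+1) := by ring

/-- The fractional backward Jacobi functions are eigenfunctions of the singular
Sturm–Liouville operator, with eigenvalue σ_r^{μ,υ} = r(r+μ+υ+1). -/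
theorem backJacobi_sturm_liouville
    (μ υ ρ : ℝ) (hμ : -1 < μ) (hυ : -1 < υ) (hρ0 : 0 < ρ) (hρ1 : ρ ≤ 1) (r : ℕ) :
    ∀ t ∈ Set.Ioo (0:ℝ) 1,
      deriv (fun x : ℝ =>
          ρ⁻¹ * (1 - x) ^ (ρ * μ + 1) * (1 - (1 - x) ^ ρ) ^ (υ + 1) *
            deriv (backJacobi μ υ ρ r) x) t
        = -((r : ℝ) * ((r : ℝ) + μ + υ + 1)) * backWeight μ υ ρ t * backJacobi μ υ ρ r t := by
  rintro t ⟨ht0, ht1⟩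
  have h1 : (0:ℝ) < 1 - t := by linarith
  have hxlt : (1-t)^ρ < 1 := Real.rpow_lt_one h1.le (by linarith) hρ0
  have hxpos : (0:ℝ) < (1-t)^ρ := Real.rpow_pos_of_pos h1 ρ
  have hu : (0:ℝ) < 1 - (1-t)^ρ := by linarith
  have hkey : ∀ n : ℕ, (1-t) ^ (ρ*μ - 1 + ρ*(n:ℝ))
      = (1-t)^(ρ*μ-1) * ((1-t)^ρ)^n := by
    intro n
    rw [Real.rpow_add h1, Real.rpow_mul h1.le, Real.rpow_natCast]
  -- the inner function agrees near t with an explicit finite sum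
  have hEq : (fun x : ℝ =>
      ρ⁻¹ * (1 - x) ^ (ρ * μ + 1) * (1 - (1 - x) ^ ρ) ^ (υ + 1) *
        deriv (backJacobi μ υ ρ r) x)
      =ᶠ[nhds t] (fun x : ℝ => CJ μ υ r * ∑ k ∈ range (r+1),
          cJ μ υ r k * (-(k:ℝ) * ((1-x)^(ρ*(μ+(k:ℝ))) * (1-(1-x)^ρ)^(υ+1)))) := by
    filter_upwards [Ioo_mem_nhds ht0 ht1] with x hx
    obtain ⟨hx0, hx1⟩ := hx
    have hy : (0:ℝ) < 1 - x := by linarith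
    rw [(hasDerivAt_backJacobi μ υ ρ r hx1).deriv]
    rw [show ρ⁻¹ * (1 - x) ^ (ρ * μ + 1) * (1 - (1 - x) ^ ρ) ^ (υ + 1) *
        (CJ μ υ r * ∑ k ∈ range (r+1), cJ μ υ r k * (-(ρ * (k:ℝ) * (1-x)^(ρ * (k:ℝ) - 1))))
      = CJ μ υ r * ∑ k ∈ range (r+1),
          (ρ⁻¹ * (1 - x) ^ (ρ * μ + 1) * (1 - (1 - x) ^ ρ) ^ (υ + 1)) *
            (cJ μ υ r k * (-(ρ * (k:ℝ) * (1-x)^(ρ * (k:ℝ) - 1)))) from by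
        rw [← Finset.mul_sum]; ring]
    congr 1
    apply Finset.sum_congr rfl
    intro k _
    have hpow : (1-x)^(ρ*μ+1) * (1-x)^(ρ*(k:ℝ)-1) = (1-x)^(ρ*(μ+(k:ℝ))) := by
      rw [← Real.rpow_add hy]
      ring_nf
    calc (ρ⁻¹ * (1 - x) ^ (ρ * μ + 1) * (1 - (1 - x) ^ ρ) ^ (υ + 1)) *
          (cJ μ υ r k * (-(ρ * (k:ℝ) * (1-x)^(ρ * (k:ℝ) - 1))))
        = cJ μ υ r k * (-((k:ℝ) *
            (((1-x)^(ρ*μ+1) * (1-x)^(ρ*(k:ℝ)-1)) * (1 - (1 - x) ^ ρ) ^ (υ + 1)))) * (ρ⁻¹ * ρ) := by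
          ring
      _ = cJ μ υ r k * (-(k:ℝ) * ((1-x)^(ρ*(μ+(k:ℝ))) * (1-(1-x)^ρ)^(υ+1))) := by
          rw [hpow, inv_mul_cancel₀ hρ0.ne', mul_one]; ring
  rw [hEq.deriv_eq]
  have hD : HasDerivAt (fun x : ℝ => CJ μ υ r * ∑ k ∈ range (r+1),
      cJ μ υ r k * (-(k:ℝ) * ((1-x)^(ρ*(μ+(k:ℝ))) * (1-(1-x)^ρ)^(υ+1))))
      (CJ μ υ r * ∑ k ∈ range (r+1), cJ μ υ r k *
        (-(k:ℝ) * ( (-(ρ*(μ+(k:ℝ))*(1-t)^(ρ*(μ+(k:ℝ))-1))) * (1-(1-t)^ρ)^(υ+1)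
          + (1-t)^(ρ*(μ+(k:ℝ))) * ((υ+1) * (1-(1-t)^ρ)^υ * (ρ*(1-t)^(ρ-1)))))) t := by
    exact (HasDerivAt.fun_sum fun k _ =>
      (hasDerivAt_Gk μ υ ρ hρ0 k ht0 ht1).const_mul (cJ μ υ r k)).const_mul _
  rw [hD.deriv]
  -- now pure algebra; abbreviations
  set a : ℝ := (1-t)^(ρ*μ-1) with ha
  set x : ℝ := (1-t)^ρ with hxdef
  set w : ℝ := (1-x)^υ with hw
  have hterm : ∀ k ∈ range (r+1), cJ μ υ r k *
      (-(k:ℝ) * ( (-(ρ*(μ+(k:ℝ))*(1-t)^(ρ*(μ+(k:ℝ))-1))) * (1-(1-t)^ρ)^(υ+1)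
        + (1-t)^(ρ*(μ+(k:ℝ))) * ((υ+1) * (1-(1-t)^ρ)^υ * (ρ*(1-t)^(ρ-1)))))
      = (ρ * a * w) * (cJ μ υ r k * ((k:ℝ)*(μ+(k:ℝ))) * x^k
          - cJ μ υ r k * ((k:ℝ)*(μ+(k:ℝ)+υ+1)) * x^(k+1)) := by
    intro k _
    have A1 : (1-t)^(ρ*(μ+(k:ℝ))-1) = a * x^k := by
      rw [show ρ*(μ+(k:ℝ))-1 = ρ*μ-1+ρ*(k:ℝ) by ring]
      exact hkey k
    have A2 : (1-t)^(ρ*(μ+(k:ℝ))) * (1-t)^(ρ-1) = a * x^(k+1) := by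
      rw [← Real.rpow_add h1, show ρ*(μ+(k:ℝ))+(ρ-1) = ρ*μ-1+ρ*((k+1:ℕ):ℝ) by push_cast; ring]
      rw [hkey (k+1)]
    have A3 : (1-(1-t)^ρ)^(υ+1) = w * (1-x) := by
      rw [Real.rpow_add_one hu.ne', hw, hxdef]
    rw [A1, A3]
    linear_combination (cJ μ υ r k * (-(k:ℝ)) * ((υ+1) * w * ρ)) * A2
  rw [Finset.sum_congr rfl hterm, ← Finset.mul_sum]
  have hsplit : ∑ k ∈ range (r+1), (cJ μ υ r k * ((k:ℝ)*(μ+(k:ℝ))) * x^k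
      - cJ μ υ r k * ((k:ℝ)*(μ+(k:ℝ)+υ+1)) * x^(k+1))
      = ∑ k ∈ range (r+1), cJ μ υ r k * (-((r:ℝ)*((r:ℝ)+μ+υ+1))) * x^(k+1) := by
    rw [Finset.sum_sub_distrib, sumId μ υ hμ hυ r x, ← Finset.sum_sub_distrib]
    apply Finset.sum_congr rfl
    intro k _
    ring
  rw [hsplit]
  -- rewrite RHS
  have hw1 : (1-t)^(ρ*(μ+1)-1) = a * x := by
    rw [show ρ*(μ+1)-1 = ρ*μ-1+ρ*((1:ℕ):ℝ) by push_cast; ring, hkey 1, pow_one]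
  have hBJ : backJacobi μ υ ρ r t = CJ μ υ r * ∑ k ∈ range (r+1), cJ μ υ r k * x^k := by
    rw [backJacobi_eq]
    congr 1
    apply Finset.sum_congr rfl
    intro k _
    rw [Real.rpow_mul h1.le, Real.rpow_natCast]
  rw [hBJ]
  unfold backWeight
  rw [hw1, ← hw]
  rw [show ∑ k ∈ range (r+1), cJ μ υ r k * (-((r:ℝ)*((r:ℝ)+μ+υ+1))) * x^(k+1)
      = (-((r:ℝ)*((r:ℝ)+μ+υ+1)) * x) * ∑ k ∈ range (r+1), cJ μ υ r k * x^k from by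
    rw [Finset.mul_sum]
    apply Finset.sum_congr rfl
    intro k _
    ring]
  ring
end

section
/- Let μ, υ > -1, 0 < ρ ≤ 1 and let r ≥ 1 be an integer. Then for every t ∈ (0,1), ((1-t)^{1-ρ}/ρ) · d/dt 𝒫_r^{μ,υ,ρ}(t) = (r+μ+υ+1) 𝒫_{r-1}^{μ+1,υ+1,ρ}(t); that is, the backward transformed derivative of the degree-r fractional backward Jacobi function with parameters (μ,υ) equals (r+μ+υ+1) times the degree-(r-1) function with parameters (μ+1,υ+1). -/
open Real MeasureTheory Finset

lemma backJacobi_hasDerivAt (μ υ ρ : ℝ) (r : ℕ) (t : ℝ) (ht : t < 1) :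
    HasDerivAt (backJacobi μ υ ρ r)
      ((Real.Gamma ((r : ℝ) + μ + 1) / ((Nat.factorial r : ℝ) * Real.Gamma ((r : ℝ) + μ + υ + 1))) *
        ∑ k ∈ Finset.range (r + 1),
          (Nat.choose r k : ℝ) * (-1 : ℝ) ^ k *
            (Real.Gamma ((r : ℝ) + (k : ℝ) + μ + υ + 1) / Real.Gamma ((k : ℝ) + μ + 1)) *
            (-(ρ * (k : ℝ) * (1 - t) ^ (ρ * (k : ℝ) - 1)))) t := by
  have hht : (0:ℝ) < 1 - t := by linarith
  have hd : ∀ k : ℕ, HasDerivAt (fun s : ℝ => (1 - s) ^ (ρ * (k:ℝ)))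
      (-(ρ * (k:ℝ) * (1 - t) ^ (ρ * (k:ℝ) - 1))) t := by
    intro k
    have h1 : HasDerivAt (fun s : ℝ => 1 - s) (-1) t := by
      simpa using (hasDerivAt_id t).const_sub 1
    have h2 := (Real.hasDerivAt_rpow_const (x := 1 - t) (p := ρ * (k:ℝ))
      (Or.inl (ne_of_gt hht))).comp t h1
    simpa [Function.comp_def, mul_comm, mul_assoc, mul_left_comm] using h2
  have hsum := HasDerivAt.fun_sum (u := Finset.range (r+1))
    (fun k _ => ((hd k).const_mul ((Nat.choose r k : ℝ) * (-1 : ℝ) ^ k *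
      (Real.Gamma ((r : ℝ) + (k : ℝ) + μ + υ + 1) / Real.Gamma ((k : ℝ) + μ + 1)))))
  exact hsum.const_mul _


set_option maxHeartbeats 2000000 in
/-- The backward transformed derivative of a backward Jacobi function:
D_ρ 𝒫_r^{μ,υ,ρ} = (r+μ+υ+1) 𝒫_{r-1}^{μ+1,υ+1,ρ}. -/
theorem backJacobi_deriv
    (μ υ ρ : ℝ) (hμ : -1 < μ) (hυ : -1 < υ) (hρ0 : 0 < ρ) (hρ1 : ρ ≤ 1)
    (r : ℕ) (hr : 1 ≤ r) :
    ∀ t ∈ Set.Ioo (0:ℝ) 1,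
      (1 - t) ^ (1 - ρ) / ρ * deriv (backJacobi μ υ ρ r) t
        = ((r : ℝ) + μ + υ + 1) * backJacobi (μ + 1) (υ + 1) ρ (r - 1) t := by
  intro t ht
  obtain ⟨ht0, ht1⟩ := ht
  obtain ⟨m, rfl⟩ : ∃ m, r = m + 1 := ⟨r - 1, (Nat.succ_pred_eq_of_pos hr).symm⟩
  have hht : (0:ℝ) < 1 - t := by linarith
  rw [(backJacobi_hasDerivAt μ υ ρ (m+1) t ht1).deriv, Nat.add_sub_cancel, backJacobi]
  simp only [Finset.mul_sum]
  rw [Finset.sum_range_succ']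
  simp only [Nat.cast_zero, mul_zero, zero_mul, neg_zero, add_zero]
  refine Finset.sum_congr rfl ?_
  intro j hj
  have hXpos : (0:ℝ) < (m:ℝ) + μ + υ + 2 := by
    have : (0:ℝ) ≤ (m:ℝ) := Nat.cast_nonneg m
    linarith
  have hX : Real.Gamma ((m:ℝ) + μ + υ + 2) ≠ 0 :=
    ne_of_gt (Real.Gamma_pos_of_pos hXpos)
  have hD : Real.Gamma ((j:ℝ) + μ + 2) ≠ 0 := by
    have : (0:ℝ) < (j:ℝ) + μ + 2 := by
      have : (0:ℝ) ≤ (j:ℝ) := Nat.cast_nonneg j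
      linarith
    exact ne_of_gt (Real.Gamma_pos_of_pos this)
  have hrec : Real.Gamma ((m:ℝ) + μ + υ + 3)
      = ((m:ℝ) + μ + υ + 2) * Real.Gamma ((m:ℝ) + μ + υ + 2) := by
    rw [show (m:ℝ) + μ + υ + 3 = ((m:ℝ) + μ + υ + 2) + 1 by ring,
      Real.Gamma_add_one (ne_of_gt hXpos)]
  have hch : ((m+1).choose (j+1) : ℝ) = ((m:ℝ)+1) * (m.choose j : ℝ) / ((j:ℝ)+1) := by
    have h0 : ((j:ℝ)+1) ≠ 0 := by positivity
    rw [eq_div_iff h0]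
    have := Nat.add_one_mul_choose_eq m j
    have hc : ((m+1) * m.choose j : ℕ) = ((m+1).choose (j+1) * (j+1) : ℕ) := this
    exact_mod_cast hc.symm
  simp only [Nat.factorial_succ]
  push_cast
  rw [show (m:ℝ)+1+μ+1 = (m:ℝ)+μ+2 by ring,
    show (m:ℝ)+(μ+1)+1 = (m:ℝ)+μ+2 by ring,
    show (m:ℝ)+1+μ+υ+1 = (m:ℝ)+μ+υ+2 by ring,
    show (m:ℝ)+(μ+1)+(υ+1)+1 = (m:ℝ)+μ+υ+3 by ring,
    show (m:ℝ)+1+((j:ℝ)+1)+μ+υ+1 = (m:ℝ)+(j:ℝ)+μ+υ+3 by ring,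
    show (m:ℝ)+(j:ℝ)+(μ+1)+(υ+1)+1 = (m:ℝ)+(j:ℝ)+μ+υ+3 by ring,
    show (j:ℝ)+1+μ+1 = (j:ℝ)+μ+2 by ring,
    show (j:ℝ)+(μ+1)+1 = (j:ℝ)+μ+2 by ring]
  rw [hrec, hch]
  rw [show ρ * ((j:ℝ)+1) - 1 = ρ * (j:ℝ) - (1 - ρ) by ring, Real.rpow_sub hht (ρ*(j:ℝ)) (1-ρ)]
  have hpow1 : (1 - t) ^ ((1:ℝ) - ρ) ≠ 0 := ne_of_gt (Real.rpow_pos_of_pos hht _)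
  have hfac : ((m.factorial : ℝ)) ≠ 0 := by positivity
  have hρ : (ρ:ℝ) ≠ 0 := ne_of_gt hρ0
  have hj1 : ((j:ℝ)+1) ≠ 0 := by positivity
  generalize hP : (1 - t) ^ ((1:ℝ) - ρ) = P at hpow1 ⊢
  generalize hQ : (1 - t) ^ (ρ * (j:ℝ)) = Q
  field_simp
  ring
end

section
/- Let μ, υ > -1, 0 < ρ ≤ 1 and let k, r be integers with 0 ≤ k ≤ r. Then for every t ∈ (0,1), D_ρ^k 𝒫_r^{μ,υ,ρ}(t) = d̂_{r,k}^{μ,υ} 𝒫_{r-k}^{μ+k,υ+k,ρ}(t), where d̂_{r,k}^{μ,υ} = Γ(r+k+μ+υ+1)/Γ(r+μ+υ+1). -/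
open Real MeasureTheory Finset

/-- The backward transformed derivative D_ρ f(t) = ((1-t)^{1-ρ}/ρ) f'(t). -/
noncomputable def backD (ρ : ℝ) (f : ℝ → ℝ) : ℝ → ℝ :=
  fun t => (1 - t) ^ (1 - ρ) / ρ * deriv f t

lemma hasDerivAt_one_sub_rpow (c t : ℝ) (ht : t < 1) :
    HasDerivAt (fun s : ℝ => (1 - s) ^ c) (-(c * (1 - t) ^ (c - 1))) t := by
  have h1 : HasDerivAt (fun s : ℝ => 1 - s) (-1) t := (hasDerivAt_id t).const_sub 1
  have h2 := (Real.hasDerivAt_rpow_const (x := 1 - t) (p := c)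
    (Or.inl (by linarith : (1:ℝ) - t ≠ 0))).comp t h1
  simpa [mul_comm, Function.comp_def] using h2

lemma backD_backJacobi_succ (μ υ ρ : ℝ) (hμ : -1 < μ) (hυ : -1 < υ) (hρ0 : 0 < ρ) (n : ℕ)
    {t : ℝ} (ht1 : t < 1) :
    backD ρ (backJacobi μ υ ρ (n+1)) t
      = ((n:ℝ) + 1 + μ + υ + 1) * backJacobi (μ+1) (υ+1) ρ n t := by
  have hε : (0:ℝ) < 1 - t := by linarith
  set A : ℝ := Real.Gamma (((n+1:ℕ):ℝ) + μ + 1) /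
      ((Nat.factorial (n+1) : ℝ) * Real.Gamma (((n+1:ℕ):ℝ) + μ + υ + 1)) with hAdef
  set d : ℕ → ℝ := fun k => (Nat.choose (n+1) k : ℝ) * (-1:ℝ)^k *
      (Real.Gamma (((n+1:ℕ):ℝ) + (k:ℝ) + μ + υ + 1) / Real.Gamma ((k:ℝ) + μ + 1)) with hddef
  have hA : backJacobi μ υ ρ (n+1) = fun s =>
      A * ∑ k ∈ Finset.range (n+2), d k * (1-s)^(ρ*(k:ℝ)) := rfl
  have hder : HasDerivAt (backJacobi μ υ ρ (n+1))
      (A * ∑ k ∈ Finset.range (n+2), d k * (-(ρ*(k:ℝ)*(1-t)^(ρ*(k:ℝ)-1)))) t := by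
    rw [hA]
    exact (HasDerivAt.fun_sum fun (k : ℕ) _ =>
      ((hasDerivAt_one_sub_rpow (ρ*(k:ℝ)) t ht1).const_mul (d k))).const_mul A
  have hbd : backD ρ (backJacobi μ υ ρ (n+1)) t
      = (1-t)^(1-ρ)/ρ * (A * ∑ k ∈ Finset.range (n+2), d k * (-(ρ*(k:ℝ)*(1-t)^(ρ*(k:ℝ)-1)))) := by
    simp only [backD]; rw [hder.deriv]
  rw [hbd]
  have hL : (1-t)^(1-ρ)/ρ * (A * ∑ k ∈ Finset.range (n+2), d k * (-(ρ*(k:ℝ)*(1-t)^(ρ*(k:ℝ)-1))))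
      = A * ∑ k ∈ Finset.range (n+2), d k * (-((k:ℝ) * (1-t)^(ρ*((k:ℝ)-1)))) := by
    rw [show (1-t)^(1-ρ)/ρ * (A * ∑ k ∈ Finset.range (n+2), d k * (-(ρ*(k:ℝ)*(1-t)^(ρ*(k:ℝ)-1))))
        = A * ∑ k ∈ Finset.range (n+2), (1-t)^(1-ρ)/ρ * (d k * (-(ρ*(k:ℝ)*(1-t)^(ρ*(k:ℝ)-1)))) by
      rw [mul_left_comm, Finset.mul_sum]]
    congr 1
    refine Finset.sum_congr rfl fun k _ => ?_
    have h1 : (1-t)^(ρ*((k:ℝ)-1)) = (1-t)^(1-ρ) * (1-t)^(ρ*(k:ℝ)-1) := by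
      rw [← Real.rpow_add hε]; ring_nf
    rw [h1]; field_simp
  rw [hL]
  rw [Finset.sum_range_succ']
  have h0 : d 0 * (-(((0:ℕ):ℝ) * (1-t)^(ρ*(((0:ℕ):ℝ)-1)))) = 0 := by norm_num
  rw [h0, add_zero]
  set A' : ℝ := Real.Gamma ((n:ℝ) + (μ+1) + 1) /
      ((Nat.factorial n : ℝ) * Real.Gamma ((n:ℝ) + (μ+1) + (υ+1) + 1)) with hA'def
  set d' : ℕ → ℝ := fun j => (Nat.choose n j : ℝ) * (-1:ℝ)^j *
      (Real.Gamma ((n:ℝ) + (j:ℝ) + (μ+1) + (υ+1) + 1) / Real.Gamma ((j:ℝ) + (μ+1) + 1)) with hd'def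
  have hB : backJacobi (μ+1) (υ+1) ρ n t = A' * ∑ j ∈ Finset.range (n+1), d' j * (1-t)^(ρ*(j:ℝ)) := rfl
  rw [hB, ← mul_assoc, Finset.mul_sum, Finset.mul_sum]
  refine Finset.sum_congr rfl fun j _ => ?_
  have hexp : (1-t)^(ρ*(((j+1:ℕ):ℝ)-1)) = (1-t)^(ρ*(j:ℝ)) := by push_cast; ring_nf
  rw [hexp]
  have hco : A * d (j+1) * (-(((j+1:ℕ):ℝ))) = ((n:ℝ)+1+μ+υ+1) * A' * d' j := by
    have hx : (0:ℝ) < (n:ℝ) + μ + υ + 2 := by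
      have : (0:ℝ) ≤ (n:ℝ) := Nat.cast_nonneg n
      linarith
    have hΓpos : 0 < Real.Gamma ((n:ℝ) + μ + υ + 2) := Real.Gamma_pos_of_pos hx
    have hΓ2pos : 0 < Real.Gamma ((j:ℝ) + μ + 2) := by
      refine Real.Gamma_pos_of_pos ?_
      have : (0:ℝ) ≤ (j:ℝ) := Nat.cast_nonneg j
      linarith
    have g1 : Real.Gamma (((n+1:ℕ):ℝ) + (((j+1:ℕ)):ℝ) + μ + υ + 1)
        = Real.Gamma ((n:ℝ)+(j:ℝ)+(μ+1)+(υ+1)+1) := by push_cast; ring_nf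
    have g2 : Real.Gamma ((((j+1:ℕ)):ℝ) + μ + 1) = Real.Gamma ((j:ℝ) + μ + 2) := by
      push_cast; ring_nf
    have g2' : Real.Gamma ((j:ℝ) + (μ+1) + 1) = Real.Gamma ((j:ℝ) + μ + 2) := by ring_nf
    have g3 : Real.Gamma (((n+1:ℕ):ℝ) + μ + 1) = Real.Gamma ((n:ℝ) + (μ+1) + 1) := by
      push_cast; ring_nf
    have g4 : Real.Gamma (((n+1:ℕ):ℝ) + μ + υ + 1) = Real.Gamma ((n:ℝ) + μ + υ + 2) := by
      push_cast; ring_nf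
    have g5 : Real.Gamma ((n:ℝ) + (μ+1) + (υ+1) + 1)
        = ((n:ℝ) + μ + υ + 2) * Real.Gamma ((n:ℝ) + μ + υ + 2) := by
      rw [show (n:ℝ) + (μ+1) + (υ+1) + 1 = ((n:ℝ) + μ + υ + 2) + 1 by ring,
        Real.Gamma_add_one (ne_of_gt hx)]
    have hch : ((Nat.choose (n+1) (j+1) : ℝ)) * ((j:ℝ)+1) = ((n:ℝ)+1) * (Nat.choose n j : ℝ) := by
      have := Nat.add_one_mul_choose_eq n j
      have h2 : ((Nat.succ n * Nat.choose n j : ℕ) : ℝ) = ((Nat.choose (n+1) (j+1) * (j+1) : ℕ) : ℝ) := by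
        exact_mod_cast congrArg (Nat.cast (R := ℝ)) this
      push_cast at h2
      linarith [h2]
    have hfac : ((Nat.factorial (n+1) : ℕ) : ℝ) = ((n:ℝ)+1) * (Nat.factorial n : ℝ) := by
      rw [Nat.factorial_succ]; push_cast; ring
    simp only [hAdef, hddef, hA'def, hd'def]
    rw [g1, g2, g2', g3, g4, g5, hfac]
    have hfne : (Nat.factorial n : ℝ) ≠ 0 := by
      exact_mod_cast Nat.factorial_ne_zero n
    rw [pow_succ]
    push_cast
    field_simp
    have hch' : (Nat.choose (n+1) (j+1) : ℝ) = ((n:ℝ)+1) * (Nat.choose n j : ℝ) / ((j:ℝ)+1) := by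
      rw [eq_div_iff (by positivity)]; exact hch
    rw [hch']; field_simp; ring
  calc A * (d (j+1) * (-(((j+1:ℕ):ℝ) * (1-t)^(ρ*(j:ℝ)))))
      = (A * d (j+1) * (-(((j+1:ℕ):ℝ)))) * (1-t)^(ρ*(j:ℝ)) := by ring
    _ = (((n:ℝ)+1+μ+υ+1) * A' * d' j) * (1-t)^(ρ*(j:ℝ)) := by rw [hco]
    _ = ((n:ℝ)+1+μ+υ+1) * A' * (d' j * (1-t)^(ρ*(j:ℝ))) := by ring

/-- Iterated backward transformed derivatives of the backward Jacobi functions: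
D_ρ^k 𝒫_r^{μ,υ,ρ} = d̂_{r,k}^{μ,υ} 𝒫_{r-k}^{μ+k,υ+k,ρ}. -/
theorem backJacobi_iterated_deriv
    (μ υ ρ : ℝ) (hμ : -1 < μ) (hυ : -1 < υ) (hρ0 : 0 < ρ) (hρ1 : ρ ≤ 1)
    (k r : ℕ) (hkr : k ≤ r) :
    ∀ t ∈ Set.Ioo (0:ℝ) 1,
      (backD ρ)^[k] (backJacobi μ υ ρ r) t
        = (Real.Gamma ((r : ℝ) + (k : ℝ) + μ + υ + 1) / Real.Gamma ((r : ℝ) + μ + υ + 1)) *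
            backJacobi (μ + (k : ℝ)) (υ + (k : ℝ)) ρ (r - k) t := by
  induction k with
  | zero =>
    intro t ht
    simp only [Function.iterate_zero, id_eq, Nat.cast_zero, add_zero, Nat.sub_zero]
    by_cases h : Real.Gamma ((r:ℝ) + μ + υ + 1) = 0
    · rw [h, div_zero, zero_mul]
      simp only [backJacobi, h, mul_zero, div_zero, zero_mul]
    · rw [div_self h, one_mul]
  | succ k ih =>
    intro t ht
    obtain ⟨ht0, ht1⟩ := ht
    have hk : k ≤ r := Nat.le_of_succ_le hkr
    set m := r - (k+1) with hm
    have hrk : r - k = m + 1 := by omega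
    have hmr : (m:ℝ) = (r:ℝ) - (k:ℝ) - 1 := by
      rw [hm, Nat.cast_sub hkr]; push_cast; ring
    rw [Function.iterate_succ_apply']
    have hev : (backD ρ)^[k] (backJacobi μ υ ρ r) =ᶠ[nhds t]
        fun s => (Real.Gamma ((r:ℝ)+(k:ℝ)+μ+υ+1)/Real.Gamma ((r:ℝ)+μ+υ+1)) *
          backJacobi (μ+(k:ℝ)) (υ+(k:ℝ)) ρ (r-k) s := by
      filter_upwards [Ioo_mem_nhds ht0 ht1] with s hs using ih hk s hs
    simp only [backD]
    rw [hev.deriv_eq, deriv_const_mul_field, hrk]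
    have hμk : (-1:ℝ) < μ + (k:ℝ) := by
      have : (0:ℝ) ≤ (k:ℝ) := Nat.cast_nonneg k
      linarith
    have hυk : (-1:ℝ) < υ + (k:ℝ) := by
      have : (0:ℝ) ≤ (k:ℝ) := Nat.cast_nonneg k
      linarith
    have hkey := backD_backJacobi_succ (μ+(k:ℝ)) (υ+(k:ℝ)) ρ hμk hυk hρ0 m ht1
    simp only [backD] at hkey
    rw [show (1-t)^(1-ρ)/ρ * (Real.Gamma ((r:ℝ)+(k:ℝ)+μ+υ+1)/Real.Gamma ((r:ℝ)+μ+υ+1) *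
          deriv (backJacobi (μ+(k:ℝ)) (υ+(k:ℝ)) ρ (m+1)) t)
        = Real.Gamma ((r:ℝ)+(k:ℝ)+μ+υ+1)/Real.Gamma ((r:ℝ)+μ+υ+1) *
          ((1-t)^(1-ρ)/ρ * deriv (backJacobi (μ+(k:ℝ)) (υ+(k:ℝ)) ρ (m+1)) t) by ring,
      hkey]
    have hargpos : (0:ℝ) < (r:ℝ)+(k:ℝ)+μ+υ+1 := by
      have h1 : ((k:ℝ)+1) ≤ (r:ℝ) := by exact_mod_cast hkr
      have h2 : (0:ℝ) ≤ (k:ℝ) := Nat.cast_nonneg k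
      linarith
    have hg : Real.Gamma ((r:ℝ)+((k+1:ℕ):ℝ)+μ+υ+1)
        = ((r:ℝ)+(k:ℝ)+μ+υ+1) * Real.Gamma ((r:ℝ)+(k:ℝ)+μ+υ+1) := by
      push_cast
      rw [show (r:ℝ)+((k:ℝ)+1)+μ+υ+1 = ((r:ℝ)+(k:ℝ)+μ+υ+1)+1 by ring,
        Real.Gamma_add_one (ne_of_gt hargpos)]
    have hP : backJacobi (μ+(k:ℝ)+1) (υ+(k:ℝ)+1) ρ m t
        = backJacobi (μ+((k+1:ℕ):ℝ)) (υ+((k+1:ℕ):ℝ)) ρ m t := by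
      push_cast; ring_nf
    rw [hP, hg, hmr]
    push_cast
    ring
end

section
/- Let 0 < θ < 1, let K be continuous on the triangle Δ_R = {(t,ϱ) : 0 ≤ t ≤ ϱ ≤ 1}, and let u, φ be nonnegative continuous functions on [0,1] satisfying u(t) ≤ φ(t) + ∫_t^1 (ϱ-t)^{-θ} K(t,ϱ) u(ϱ) dϱ for all t ∈ [0,1]. Then there exists a constant C > 0, depending only on θ and the maximum of |K| over Δ_R (and independent of u and t), such that u(t) ≤ Φ(t) · E_{1-θ}( C Γ(1-θ) (1-t)^{1-θ} ) for all t ∈ [0,1], where Φ(t) = max_{t ≤ s ≤ 1} φ(s) and E_σ(z) = Σ_{n=0}^{∞} z^n / Γ(σ n + 1) is the Mittag–Leffler function. -/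
open Real MeasureTheory

/-- The Mittag–Leffler function E_σ(z) = Σ_{n=0}^∞ z^n / Γ(σn+1). -/
noncomputable def mittagLeffler (σ z : ℝ) : ℝ :=
  ∑' n : ℕ, z ^ n / Real.Gamma (σ * (n : ℝ) + 1)

section Aux
open Set


lemma gamma_lb {s : ℝ} (h1 : 1 ≤ s) (h2 : s ≤ 2) : Real.exp (-2) ≤ Real.Gamma s := by
  rw [Real.Gamma_eq_integral (by linarith : (0:ℝ) < s)]
  have hint : IntegrableOn (fun x : ℝ => Real.exp (-x) * x ^ (s - 1)) (Set.Ioi 0) :=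
    Real.GammaIntegral_convergent (by linarith)
  have h12 : Set.Ioc (1:ℝ) 2 ⊆ Set.Ioi 0 := fun x hx => lt_trans one_pos hx.1
  have step1 : (∫ x in Set.Ioc (1:ℝ) 2, Real.exp (-x) * x ^ (s - 1)) ≤
      ∫ x in Set.Ioi (0:ℝ), Real.exp (-x) * x ^ (s - 1) := by
    refine setIntegral_mono_set hint ?_ (HasSubset.Subset.eventuallyLE h12)
    filter_upwards [self_mem_ae_restrict measurableSet_Ioi] with x hx
    exact mul_nonneg (Real.exp_pos _).le (Real.rpow_nonneg (le_of_lt hx) _)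
  refine le_trans ?_ step1
  have step2 : (∫ x in Set.Ioc (1:ℝ) 2, Real.exp (-2)) ≤
      ∫ x in Set.Ioc (1:ℝ) 2, Real.exp (-x) * x ^ (s - 1) := by
    refine setIntegral_mono_on (integrableOn_const measure_Ioc_lt_top.ne)
      (hint.mono_set h12) measurableSet_Ioc ?_
    intro x hx
    have hx1 : (1:ℝ) ≤ x := hx.1.le
    have : Real.exp (-2) ≤ Real.exp (-x) := Real.exp_le_exp.2 (by linarith [hx.2])
    have h2' : (1:ℝ) ≤ x ^ (s - 1) := Real.one_le_rpow hx1 (by linarith)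
    nlinarith [Real.exp_pos (-x)]
  refine le_trans ?_ step2
  rw [setIntegral_const]
  rw [Real.volume_real_Ioc]
  norm_num


lemma gamma_shift_lb (k : ℕ) : ∀ s : ℝ, 1 ≤ s → s ≤ 2 →
    Real.exp (-2) * (Nat.factorial k : ℝ) ≤ Real.Gamma (s + k) := by
  induction k with
  | zero => intro s h1 h2; simpa using gamma_lb h1 h2
  | succ k ih =>
    intro s h1 h2
    have hsk : s + (k:ℝ) ≠ 0 := by positivity
    have : ((k:ℝ)+1) * (Real.exp (-2) * (Nat.factorial k : ℝ)) ≤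
        (s + k) * Real.Gamma (s + k) := by
      refine mul_le_mul (by linarith) (ih s h1 h2) (by positivity) (by linarith)
    calc Real.exp (-2) * (Nat.factorial (k+1) : ℝ)
        = ((k:ℝ)+1) * (Real.exp (-2) * (Nat.factorial k : ℝ)) := by
          push_cast [Nat.factorial_succ]; ring
      _ ≤ (s + k) * Real.Gamma (s + k) := this
      _ = Real.Gamma (s + ((k+1:ℕ):ℝ)) := by
          rw [show s + (((k+1:ℕ)):ℝ) = (s + (k:ℝ)) + 1 by push_cast; ring,
            Real.Gamma_add_one hsk]

lemma gamma_floor_lb {x : ℝ} (hx : 1 ≤ x) :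
    Real.exp (-2) * (Nat.factorial ⌊x - 1⌋₊ : ℝ) ≤ Real.Gamma x := by
  set k := ⌊x - 1⌋₊ with hk
  have h0 : (0:ℝ) ≤ x - 1 := by linarith
  have h1 : (k:ℝ) ≤ x - 1 := Nat.floor_le h0
  have h2 : x - 1 < k + 1 := Nat.lt_floor_add_one _
  have := gamma_shift_lb k (x - k) (by linarith) (by linarith)
  simpa using this

/-- Summability of the Mittag-Leffler series. -/
lemma ml_summable {δ : ℝ} (hδ0 : 0 < δ) {z : ℝ} (hz : 0 ≤ z) :
    Summable (fun n : ℕ => z ^ n / Real.Gamma (δ * n + 1)) := by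
  obtain ⟨q, hq⟩ : ∃ q : ℕ, 1 / δ ≤ q := exists_nat_ge (1/δ)
  set Y : ℝ := (max 1 z) ^ q with hY
  have hY1 : (1:ℝ) ≤ Y := one_le_pow₀ (le_max_left _ _)
  -- bound Y^k/k! ≤ D * (1/2)^k
  obtain ⟨D, hD⟩ : ∃ D : ℝ, ∀ k : ℕ, Y ^ k / (Nat.factorial k : ℝ) ≤ D * (1/2) ^ k := by
    obtain ⟨D, hD⟩ := (Real.summable_pow_div_factorial (2 * Y)).tendsto_atTop_zero.bddAbove_range
    refine ⟨D, fun k => ?_⟩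
    have h2 : ((2*Y) ^ k / (Nat.factorial k : ℝ)) ≤ D := hD ⟨k, rfl⟩
    have : Y ^ k / (Nat.factorial k : ℝ) = (2*Y)^k / (Nat.factorial k) * (1/2)^k := by
      have h2k : ((2:ℝ))^k * (1/2)^k = 1 := by rw [← mul_pow]; norm_num
      rw [mul_pow, div_mul_eq_mul_div, mul_right_comm, h2k, one_mul]
    rw [this]
    have : (0:ℝ) ≤ (1/2:ℝ)^k := by positivity
    nlinarith
  have hDpos : (0:ℝ) < D := by
    have h0 := hD 0
    norm_num at h0
    linarith
  set r : ℝ := (1/2 : ℝ) ^ δ with hr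
  have hr0 : 0 < r := Real.rpow_pos_of_pos (by norm_num) _
  have hr1 : r < 1 := Real.rpow_lt_one (by norm_num) (by norm_num) hδ0
  refine Summable.of_nonneg_of_le (fun n => by positivity)
    (fun n => ?_) (((summable_geometric_of_lt_one hr0.le hr1)).mul_left
      (Real.exp 2 * Y * D * 2))
  set k : ℕ := ⌊δ * n⌋₊ with hk
  have hδn0 : (0:ℝ) ≤ δ * n := by positivity
  have hkle : (k:ℝ) ≤ δ * n := Nat.floor_le hδn0
  have hklt : δ * n < k + 1 := Nat.lt_floor_add_one _
  have hG : Real.exp (-2) * (Nat.factorial k : ℝ) ≤ Real.Gamma (δ * n + 1) := by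
    have := gamma_floor_lb (x := δ * n + 1) (by linarith)
    simpa [hk] using this
  have hGpos : (0:ℝ) < Real.exp (-2) * (Nat.factorial k : ℝ) := by positivity
  have hzn : z ^ n ≤ Y * Y ^ k := by
    have hnk : (n:ℕ) ≤ (k+1) * q := by
      have hq1 : (1:ℝ) ≤ δ * q := by
        rw [div_le_iff₀ hδ0] at hq; linarith
      have : (n:ℝ) < ((k+1) * q : ℕ) := by
        push_cast
        calc (n:ℝ) = n * 1 := by ring
          _ ≤ n * (δ * q) := by
              have hn0 : (0:ℝ) ≤ n := Nat.cast_nonneg n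
              nlinarith
          _ = (δ * n) * q := by ring
          _ < ((k:ℝ)+1) * q := by
              have hq0 : (0:ℝ) < q := by nlinarith
              nlinarith
      exact_mod_cast this.le
    calc z ^ n ≤ (max 1 z) ^ n := pow_le_pow_left₀ hz (le_max_right _ _) n
      _ ≤ (max 1 z) ^ ((k+1) * q) := pow_le_pow_right₀ (le_max_left _ _) hnk
      _ = Y * Y ^ k := by rw [hY, ← pow_mul, mul_comm q]; ring
  have hhalf : ((1:ℝ)/2) ^ k ≤ 2 * r ^ n := by
    have h1 : ((1:ℝ)/2) ^ k = ((1:ℝ)/2) ^ (k:ℝ) := by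
      rw [Real.rpow_natCast]
    have h2 : ((1:ℝ)/2) ^ (k:ℝ) ≤ ((1:ℝ)/2) ^ (δ * n - 1) := by
      apply Real.rpow_le_rpow_of_exponent_ge (by norm_num) (by norm_num)
      linarith
    have h3 : ((1:ℝ)/2) ^ (δ * n - 1) = 2 * r ^ n := by
      rw [show δ * (n:ℝ) - 1 = -1 + δ * n by ring, Real.rpow_add (by norm_num),
        Real.rpow_neg_one, hr, ← Real.rpow_natCast ((1/2:ℝ)^δ) n,
        ← Real.rpow_mul (by norm_num)]
      norm_num [mul_comm]
    rw [h1]; rw [h3] at h2; exact h2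
  calc z ^ n / Real.Gamma (δ * n + 1)
      ≤ (Y * Y ^ k) / (Real.exp (-2) * (Nat.factorial k : ℝ)) := by
        apply div_le_div₀ (by positivity) hzn hGpos hG
    _ = Real.exp 2 * Y * (Y ^ k / (Nat.factorial k : ℝ)) := by
        rw [Real.exp_neg]; field_simp
    _ ≤ Real.exp 2 * Y * (D * (1/2)^k) := by
        have := hD k
        have h0 : (0:ℝ) < Real.exp 2 * Y := by positivity
        nlinarith
    _ ≤ Real.exp 2 * Y * (D * (2 * r ^ n)) := by
        have h0 : (0:ℝ) < Real.exp 2 * Y := by positivity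
        exact mul_le_mul_of_nonneg_left (mul_le_mul_of_nonneg_left hhalf hDpos.le) h0.le
    _ = Real.exp 2 * Y * D * 2 * r ^ n := by ring



lemma ml_ge {δ : ℝ} (hδ0 : 0 < δ) {z : ℝ} (hz : 0 ≤ z) :
    1 + z / Real.Gamma (δ + 1) ≤ mittagLeffler δ z := by
  have hsum := ml_summable hδ0 hz
  have key := Summable.sum_le_tsum (Finset.range 2)
    (fun n _ => by
      have : 0 < Real.Gamma (δ * n + 1) := Real.Gamma_pos_of_pos (by positivity)
      positivity) hsum
  rw [Finset.sum_range_succ, Finset.sum_range_one] at key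
  unfold mittagLeffler
  norm_num at key ⊢
  convert key using 2 <;> norm_num

lemma integral_rpow_shift {t a b θ : ℝ} (hθ1 : θ < 1) :
    (∫ ϱ in a..b, (ϱ - t) ^ (-θ)) = ((b - t) ^ (1-θ) - (a - t) ^ (1-θ)) / (1-θ) := by
  rw [intervalIntegral.integral_comp_sub_right (fun x => x ^ (-θ)) t,
    integral_rpow (Or.inl (by linarith : (-1:ℝ) < -θ)),
    show -θ + 1 = 1 - θ by ring]

lemma intStep {t : ℝ} (a b : ℝ) {θ : ℝ} (hθ1 : θ < 1) :
    IntervalIntegrable (fun ϱ => (ϱ - t) ^ (-θ)) volume a b := by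
  have := (intervalIntegral.intervalIntegrable_rpow' (a := a - t) (b := b - t)
    (by linarith : (-1:ℝ) < -θ)).comp_sub_right t
  simpa using this
end Aux

section Aux2
open Set

set_option maxHeartbeats 2000000 in
/-- Backward (right-sided) weakly singular Gronwall inequality: if a nonnegative
continuous `u` satisfies `u(t) ≤ φ(t) + ∫_t^1 (ϱ-t)^{-θ} K(t,ϱ) u(ϱ) dϱ`, then `u` is
bounded by `Φ(t) E_{1-θ}(C Γ(1-θ) (1-t)^{1-θ})`, where `Φ(t) = max_{t ≤ s ≤ 1} φ(s)` and
`C` is independent of `u` and `t`. -/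
theorem backward_gronwall
    (θ : ℝ) (hθ0 : 0 < θ) (hθ1 : θ < 1)
    (K : ℝ → ℝ → ℝ)
    (hK : ContinuousOn (fun p : ℝ × ℝ => K p.1 p.2)
      {p : ℝ × ℝ | 0 ≤ p.1 ∧ p.1 ≤ p.2 ∧ p.2 ≤ 1}) :
    ∃ C > 0, ∀ u φ : ℝ → ℝ,
      ContinuousOn u (Set.Icc 0 1) → ContinuousOn φ (Set.Icc 0 1) →
      (∀ t ∈ Set.Icc (0:ℝ) 1, 0 ≤ u t) →
      (∀ t ∈ Set.Icc (0:ℝ) 1, 0 ≤ φ t) →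
      (∀ t ∈ Set.Icc (0:ℝ) 1,
        u t ≤ φ t + ∫ ϱ in t..1, (ϱ - t) ^ (-θ) * K t ϱ * u ϱ) →
      ∀ t ∈ Set.Icc (0:ℝ) 1,
        u t ≤ sSup (φ '' Set.Icc t 1) *
          mittagLeffler (1 - θ) (C * Real.Gamma (1 - θ) * (1 - t) ^ (1 - θ)) := by
  -- the compact triangle
  set T : Set (ℝ × ℝ) := {p : ℝ × ℝ | 0 ≤ p.1 ∧ p.1 ≤ p.2 ∧ p.2 ≤ 1} with hT
  have hTc : IsCompact T := by
    refine IsCompact.of_isClosed_subset (isCompact_Icc (a := ((0:ℝ),(0:ℝ))) (b := (1,1)))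
      ?_ ?_
    · exact (isClosed_le continuous_const continuous_fst).inter
        ((isClosed_le continuous_fst continuous_snd).inter
          (isClosed_le continuous_snd continuous_const))
    · rintro ⟨x, y⟩ ⟨h1, h2, h3⟩
      simp only [Set.mem_Icc, Prod.mk_le_mk]
      exact ⟨⟨h1, le_trans h1 h2⟩, ⟨le_trans h2 h3, h3⟩⟩
  obtain ⟨M, hM⟩ := hTc.exists_bound_of_continuousOn hK
  set A : ℝ := max M 0 + 1 with hA
  have hA1 : 1 ≤ A := by
    have : (0:ℝ) ≤ max M 0 := le_max_right M 0
    simp only [hA]; linarith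
  have hA0 : 0 < A := lt_of_lt_of_le one_pos hA1
  have hKA : ∀ s ϱ : ℝ, 0 ≤ s → s ≤ ϱ → ϱ ≤ 1 → K s ϱ ≤ A := by
    intro s ϱ h1 h2 h3
    have h := hM (s, ϱ) ⟨h1, h2, h3⟩
    rw [Real.norm_eq_abs] at h
    have h' := (abs_le.1 (h.trans (le_max_left M 0))).2
    simp only [hA]
    linarith
  set δ : ℝ := 1 - θ with hδ
  have hδ0 : 0 < δ := by simp only [hδ]; linarith
  have hδ1 : δ ≤ 1 := by simp only [hδ]; linarith
  clear_value A
  clear hM hTc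
  -- step size
  set h : ℝ := min 1 ((δ / (2*A)) ^ (δ⁻¹)) with hh
  have hh0 : 0 < h := by
    apply lt_min one_pos
    apply Real.rpow_pos_of_pos
    positivity
  have hhkey : A * h ^ δ ≤ δ / 2 := by
    have h1 : h ≤ (δ / (2*A)) ^ (δ⁻¹) := min_le_right _ _
    have h2 : h ^ δ ≤ ((δ / (2*A)) ^ (δ⁻¹)) ^ δ :=
      Real.rpow_le_rpow hh0.le h1 hδ0.le
    rw [Real.rpow_inv_rpow (by positivity) hδ0.ne'] at h2
    calc A * h ^ δ ≤ A * (δ / (2*A)) := mul_le_mul_of_nonneg_left h2 hA0.le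
      _ = δ / 2 := by field_simp
  clear_value h
  set N : ℕ := ⌈1/h⌉₊ with hN
  have hNh : (1:ℝ) ≤ N*h := by
    have h1 : 1/h ≤ (N:ℝ) := Nat.le_ceil (1/h)
    calc (1:ℝ) = (1/h)*h := by field_simp
      _ ≤ N*h := mul_le_mul_of_nonneg_right h1 hh0.le
  clear_value N
  set B : ℝ := (2*(1+A/δ))^N with hB
  have hc1 : ∀ j : ℕ, 1 ≤ (2*(1+A/δ))^j := by
    intro j
    apply one_le_pow₀
    have : 0 ≤ A/δ := by positivity
    linarith
  have hB1 : 1 ≤ B := hc1 N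
  refine ⟨A * B, by positivity, ?_⟩
  intro u φ hu hφ hu0 hφ0 hineq
  -- Φ facts
  set Φ : ℝ → ℝ := fun t => sSup (φ '' Set.Icc t 1) with hΦ
  have hΦbdd : ∀ t, 0 ≤ t → BddAbove (φ '' Set.Icc t 1) := by
    intro t ht
    exact (isCompact_Icc.image_of_continuousOn
      (hφ.mono (Set.Icc_subset_Icc ht le_rfl))).bddAbove
  have hφΦ : ∀ s, 0 ≤ s → s ≤ 1 → ∀ x ∈ Set.Icc s 1, φ x ≤ Φ s := by
    intro s hs0 hs1 x hx
    exact le_csSup (hΦbdd s hs0) (Set.mem_image_of_mem φ hx)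
  have hΦ0 : ∀ t, 0 ≤ t → t ≤ 1 → 0 ≤ Φ t := by
    intro t ht0 ht1
    exact (hφ0 1 ⟨zero_le_one, le_rfl⟩).trans (hφΦ t ht0 ht1 1 ⟨ht1, le_rfl⟩)
  have hΦmono : ∀ t s, 0 ≤ t → t ≤ s → s ≤ 1 → Φ s ≤ Φ t := by
    intro t s ht0 hts hs1
    apply csSup_le_csSup (hΦbdd t ht0)
    · exact (Set.nonempty_Icc.2 hs1).image φ
    · exact Set.image_mono (f := φ) (Set.Icc_subset_Icc_left hts)
  -- integrability of the kernel integrand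
  have hKcont : ∀ s, 0 ≤ s → ContinuousOn (fun ϱ => K s ϱ * u ϱ) (Set.Icc s 1) := by
    intro s hs0
    have h1 : ContinuousOn (fun ϱ => K s ϱ) (Set.Icc s 1) := by
      have : ContinuousOn (fun ϱ : ℝ => (s, ϱ)) (Set.Icc s 1) :=
        (continuous_const.prodMk continuous_id).continuousOn
      refine hK.comp this ?_
      intro ϱ hϱ
      exact ⟨hs0, hϱ.1, hϱ.2⟩
    exact h1.mul (hu.mono (Set.Icc_subset_Icc hs0 le_rfl))
  have hInt : ∀ s, 0 ≤ s → ∀ a b, s ≤ a → a ≤ b → b ≤ 1 →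
      IntervalIntegrable (fun ϱ => (ϱ - s) ^ (-θ) * (K s ϱ * u ϱ)) volume a b := by
    intro s hs0 a b hsa hab hb1
    refine (intStep a b hθ1).mul_continuousOn ((hKcont s hs0).mono ?_)
    rw [Set.uIcc_of_le hab]
    exact Set.Icc_subset_Icc hsa hb1
  -- value of the singular integral
  have hval : ∀ s a b : ℝ, s ≤ a → a ≤ b →
      (∫ ϱ in a..b, (ϱ - s) ^ (-θ)) = ((b - s) ^ δ - (a - s) ^ δ) / δ := by
    intro s a b _ _
    rw [integral_rpow_shift hθ1, hδ]
  -- the one-step estimate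
  have claim1 : ∀ s b : ℝ, 0 ≤ s → s ≤ b → b ≤ 1 →
      ∀ G, 0 ≤ G → (∀ ϱ ∈ Set.Icc b 1, u ϱ ≤ G) →
      ∀ V, 0 ≤ V → (∀ ϱ ∈ Set.Icc s b, u ϱ ≤ V) →
      u s ≤ φ s + A*V*((b-s)^δ/δ) + A*G/δ := by
    intro s b hs0 hsb hb1 G hG0 hGbd V hV0 hVbd
    have hs1 : s ≤ 1 := hsb.trans hb1
    have h1 := hineq s ⟨hs0, hs1⟩
    have hptne : ∀ ϱ : ℝ, s ≤ ϱ → (0:ℝ) ≤ (ϱ - s) ^ (-θ) :=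
      fun ϱ hϱ => Real.rpow_nonneg (by linarith) _
    have hIsb := hInt s hs0 s b le_rfl hsb hb1
    have hIb1 := hInt s hs0 b 1 hsb hb1 le_rfl
    have hsplit : (∫ ϱ in s..1, (ϱ - s) ^ (-θ) * (K s ϱ * u ϱ)) =
        (∫ ϱ in s..b, (ϱ - s) ^ (-θ) * (K s ϱ * u ϱ)) +
        (∫ ϱ in b..1, (ϱ - s) ^ (-θ) * (K s ϱ * u ϱ)) :=
      (intervalIntegral.integral_add_adjacent_intervals hIsb hIb1).symm
    have hKu : ∀ ϱ, s ≤ ϱ → ϱ ≤ 1 → ∀ W, 0 ≤ W → u ϱ ≤ W →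
        (ϱ - s) ^ (-θ) * (K s ϱ * u ϱ) ≤ (ϱ - s) ^ (-θ) * (A * W) := by
      intro ϱ hϱ1 hϱ2 W hW0 hWu
      apply mul_le_mul_of_nonneg_left _ (hptne ϱ hϱ1)
      have hKb := hKA s ϱ hs0 hϱ1 hϱ2
      have hu0' := hu0 ϱ ⟨hs0.trans hϱ1, hϱ2⟩
      nlinarith
    have hb1' : (∫ ϱ in s..b, (ϱ - s) ^ (-θ) * (K s ϱ * u ϱ)) ≤ A*V*((b-s)^δ/δ) := by
      have hmono := intervalIntegral.integral_mono_on hsb hIsb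
        ((intStep s b hθ1).mul_const (A*V))
        (fun ϱ hϱ => hKu ϱ hϱ.1 (hϱ.2.trans hb1) V hV0 (hVbd ϱ hϱ))
      calc (∫ ϱ in s..b, (ϱ - s) ^ (-θ) * (K s ϱ * u ϱ))
          ≤ ∫ ϱ in s..b, (ϱ - s) ^ (-θ) * (A*V) := hmono
        _ = (∫ ϱ in s..b, (ϱ - s) ^ (-θ)) * (A*V) := by
            rw [intervalIntegral.integral_mul_const]
        _ = A*V*((b-s)^δ/δ) := by
            rw [hval s s b le_rfl hsb]
            rw [sub_self, Real.zero_rpow hδ0.ne']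
            ring
    have hb2' : (∫ ϱ in b..1, (ϱ - s) ^ (-θ) * (K s ϱ * u ϱ)) ≤ A*G/δ := by
      have hmono := intervalIntegral.integral_mono_on hb1 hIb1
        ((intStep b 1 hθ1).mul_const (A*G))
        (fun ϱ hϱ => hKu ϱ (hsb.trans hϱ.1) hϱ.2 G hG0 (hGbd ϱ hϱ))
      have hval2 : (∫ ϱ in b..1, (ϱ - s) ^ (-θ) * (A*G)) =
          A*G*(((1-s)^δ - (b-s)^δ)/δ) := by
        rw [intervalIntegral.integral_mul_const, hval s b 1 hsb hb1]
        ring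
      have hle1 : (1-s)^δ ≤ 1 := by
        apply Real.rpow_le_one (by linarith) (by linarith) hδ0.le
      have hge0 : (0:ℝ) ≤ (b-s)^δ := Real.rpow_nonneg (by linarith) _
      have hAG : (0:ℝ) ≤ A*G := by positivity
      calc (∫ ϱ in b..1, (ϱ - s) ^ (-θ) * (K s ϱ * u ϱ))
          ≤ A*G*(((1-s)^δ - (b-s)^δ)/δ) := hmono.trans (le_of_eq hval2)
        _ ≤ A*G*(1/δ) := by
            apply mul_le_mul_of_nonneg_left _ hAG
            gcongr
            linarith
        _ = A*G/δ := by ring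
    calc u s ≤ φ s + ∫ ϱ in s..1, (ϱ - s) ^ (-θ) * K s ϱ * u ϱ := h1
      _ = φ s + ((∫ ϱ in s..b, (ϱ - s) ^ (-θ) * (K s ϱ * u ϱ)) +
            (∫ ϱ in b..1, (ϱ - s) ^ (-θ) * (K s ϱ * u ϱ))) := by
          rw [← hsplit]
          congr 1
          apply intervalIntegral.integral_congr
          intro x _
          ring
      _ ≤ φ s + (A*V*((b-s)^δ/δ) + A*G/δ) := by linarith
      _ = φ s + A*V*((b-s)^δ/δ) + A*G/δ := by ring
  -- grid induction
  have P : ∀ j : ℕ, ∀ t, 0 ≤ t → t ≤ 1 → 1 - j*h ≤ t → u t ≤ (2*(1+A/δ))^j * Φ t := by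
    intro j
    induction j with
    | zero =>
      intro t ht0 ht1 htj
      simp only [Nat.cast_zero, zero_mul, sub_zero] at htj
      have ht : t = 1 := le_antisymm ht1 htj
      subst ht
      have h1 := hineq 1 ⟨zero_le_one, le_rfl⟩
      rw [intervalIntegral.integral_same] at h1
      have := hφΦ 1 zero_le_one le_rfl 1 ⟨le_rfl, le_rfl⟩
      simp only [pow_zero, one_mul]
      linarith
    | succ j ih =>
      intro t ht0 ht1 htj
      set c : ℝ := (2*(1+A/δ))^j with hc
      have hcpos : 0 < c := lt_of_lt_of_le one_pos (hc1 j)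
      by_cases hcase : 1 - j*h ≤ t
      · have := ih t ht0 ht1 hcase
        have hmul : c * Φ t ≤ (2*(1+A/δ))^(j+1) * Φ t := by
          rw [pow_succ, ← hc]
          have hΦt := hΦ0 t ht0 ht1
          have hAδ : (0:ℝ) ≤ A/δ := by positivity
          have h2 : c ≤ c * (2*(1+A/δ)) := by nlinarith
          exact mul_le_mul_of_nonneg_right h2 hΦt
        linarith
      · push_neg at hcase
        set b : ℝ := 1 - j*h with hb
        have htb : t < b := hcase
        have hb1 : b ≤ 1 := by
          have : (0:ℝ) ≤ j*h := by positivity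
          simp only [hb]; linarith
        have hbth : b - t ≤ h := by
          have : (1:ℝ) - (j+1)*h ≤ t := by push_cast at htj ⊢; linarith
          simp only [hb]; push_cast; linarith
        -- bound on [b,1] from IH
        have hGbd : ∀ ϱ ∈ Set.Icc b 1, u ϱ ≤ c * Φ t := by
          intro ϱ hϱ
          have hϱ0 : 0 ≤ ϱ := le_trans (le_trans ht0 htb.le) hϱ.1
          have := ih ϱ hϱ0 hϱ.2 (le_trans (le_of_eq hb.symm) hϱ.1)
          have hΦm : Φ ϱ ≤ Φ t := hΦmono t ϱ ht0 (htb.le.trans hϱ.1) hϱ.2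
          nlinarith
        have hG0 : 0 ≤ c * Φ t := mul_nonneg hcpos.le (hΦ0 t ht0 ht1)
        -- sup on [t,b]
        have hubdd : BddAbove (u '' Set.Icc t b) :=
          (isCompact_Icc.image_of_continuousOn
            (hu.mono (Set.Icc_subset_Icc ht0 hb1))).bddAbove
        have hune : (u '' Set.Icc t b).Nonempty :=
          (Set.nonempty_Icc.2 htb.le).image u
        set V : ℝ := sSup (u '' Set.Icc t b) with hV
        have hutV : ∀ s ∈ Set.Icc t b, u s ≤ V :=
          fun s hs => le_csSup hubdd (Set.mem_image_of_mem u hs)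
        have hV0 : 0 ≤ V :=
          le_trans (hu0 t ⟨ht0, ht1⟩) (hutV t ⟨le_rfl, htb.le⟩)
        have hVb : ∀ s ∈ Set.Icc t b, u s ≤ Φ t + V/2 + A*(c*Φ t)/δ := by
          intro s hs
          have hs0 : 0 ≤ s := le_trans ht0 hs.1
          have hs1 : s ≤ 1 := hs.2.trans hb1
          have := claim1 s b hs0 hs.2 hb1 (c*Φ t) hG0 hGbd V hV0
            (fun ϱ hϱ => hutV ϱ ⟨hs.1.trans hϱ.1, hϱ.2⟩)
          have hφs : φ s ≤ Φ t :=
            le_trans (hφΦ s hs0 hs1 s ⟨le_rfl, hs1⟩) (hΦmono t s ht0 hs.1 hs1)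
          have hmid : A*V*((b-s)^δ/δ) ≤ V/2 := by
            have e0 : 0 ≤ b - s := by linarith [hs.2]
            have e1 : (b-s)^δ ≤ h^δ :=
              Real.rpow_le_rpow e0 (by linarith [hs.1]) hδ0.le
            have e2 : A*((b-s)^δ) ≤ δ/2 :=
              le_trans (mul_le_mul_of_nonneg_left e1 hA0.le) hhkey
            have e3 : (0:ℝ) ≤ (b-s)^δ := Real.rpow_nonneg e0 _
            calc A*V*((b-s)^δ/δ) = V * (A*((b-s)^δ)) / δ := by ring
              _ ≤ V * (δ/2) / δ :=
                  div_le_div_of_nonneg_right (mul_le_mul_of_nonneg_left e2 hV0) hδ0.le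
              _ = V/2 := by
                  field_simp
          linarith
        have hVle : V ≤ Φ t + V/2 + A*(c*Φ t)/δ := by
          apply csSup_le hune
          rintro x ⟨s, hs, rfl⟩
          exact hVb s hs
        have hut : u t ≤ V := hutV t ⟨le_rfl, htb.le⟩
        have hfin : 2*(Φ t) + 2*(A*(c*Φ t)/δ) ≤ (2*(1+A/δ))^(j+1) * Φ t := by
          rw [pow_succ, ← hc]
          have hΦt := hΦ0 t ht0 ht1
          have hj := hc1 j
          have hAδ : (0:ℝ) ≤ A/δ := by positivity
          have expand : c * (2*(1+A/δ)) * Φ t = 2*(c*Φ t) + 2*((A/δ)*(c*Φ t)) := by ring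
          have heq2 : A*(c*Φ t)/δ = (A/δ)*(c*Φ t) := by ring
          have hle : Φ t ≤ c * Φ t := le_mul_of_one_le_left hΦt hj
          rw [expand, heq2]
          linarith
        linarith
  -- global bound
  have hBd : ∀ t, 0 ≤ t → t ≤ 1 → u t ≤ B * Φ t := by
    intro t ht0 ht1
    have := P N t ht0 ht1 (by linarith)
    rw [hB]
    exact this
  -- final estimate
  intro t ht
  have h1 := hineq t ht
  have hIt := hInt t ht.1 t 1 le_rfl ht.2 le_rfl
  have hmono := intervalIntegral.integral_mono_on ht.2 hIt
    ((intStep t 1 hθ1).mul_const (A*(B*Φ t)))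
    (by
      intro ϱ hϱ
      have hne : (0:ℝ) ≤ (ϱ - t) ^ (-θ) := Real.rpow_nonneg (by linarith [hϱ.1]) _
      apply mul_le_mul_of_nonneg_left _ hne
      have hKb := hKA t ϱ ht.1 hϱ.1 hϱ.2
      have hu0' := hu0 ϱ ⟨ht.1.trans hϱ.1, hϱ.2⟩
      have huB : u ϱ ≤ B * Φ t := by
        have := hBd ϱ (ht.1.trans hϱ.1) hϱ.2
        have hΦm : Φ ϱ ≤ Φ t := hΦmono t ϱ ht.1 hϱ.1 hϱ.2
        nlinarith
      have hBΦ : 0 ≤ B * Φ t := mul_nonneg (by linarith) (hΦ0 t ht.1 ht.2)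
      nlinarith)
  have hval3 : (∫ ϱ in t..1, (ϱ - t) ^ (-θ) * (A*(B*Φ t))) =
      A*B*Φ t*((1-t)^δ/δ) := by
    rw [intervalIntegral.integral_mul_const, hval t t 1 le_rfl ht.2,
      sub_self, Real.zero_rpow hδ0.ne']
    ring
  have hstep : u t ≤ Φ t + A*B*Φ t*((1-t)^δ/δ) := by
    have hφt : φ t ≤ Φ t := hφΦ t ht.1 ht.2 t ⟨le_rfl, ht.2⟩
    have heq : (∫ ϱ in t..1, (ϱ - t) ^ (-θ) * K t ϱ * u ϱ) =
        ∫ ϱ in t..1, (ϱ - t) ^ (-θ) * (K t ϱ * u ϱ) := by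
      apply intervalIntegral.integral_congr
      intro x _
      ring
    rw [heq] at h1
    calc u t ≤ φ t + ∫ ϱ in t..1, (ϱ - t) ^ (-θ) * (K t ϱ * u ϱ) := h1
      _ ≤ Φ t + A*B*Φ t*((1-t)^δ/δ) := by
          have := hmono.trans (le_of_eq hval3)
          linarith
  -- conclude via Mittag-Leffler lower bound
  set z : ℝ := A*B * Real.Gamma δ * (1-t)^δ with hz
  have hz0 : 0 ≤ z := by
    have := Real.Gamma_pos_of_pos hδ0
    have : (0:ℝ) ≤ (1-t)^δ := Real.rpow_nonneg (by linarith [ht.2]) _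
    positivity
  have hml := ml_ge hδ0 hz0
  have hzval : z / Real.Gamma (δ+1) = A*B*((1-t)^δ/δ) := by
    rw [Real.Gamma_add_one hδ0.ne']
    have hΓ : Real.Gamma δ ≠ 0 := (Real.Gamma_pos_of_pos hδ0).ne'
    field_simp [hz]
    ring
  have hfinal : Φ t * (1 + A*B*((1-t)^δ/δ)) ≤ Φ t * mittagLeffler δ z := by
    apply mul_le_mul_of_nonneg_left _ (hΦ0 t ht.1 ht.2)
    rw [← hzval]
    exact hml
  calc u t ≤ Φ t + A*B*Φ t*((1-t)^δ/δ) := hstep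
    _ = Φ t * (1 + A*B*((1-t)^δ/δ)) := by ring
    _ ≤ Φ t * mittagLeffler δ z := hfinal

end Aux2
end

section
/- Let μ, υ > -1, 0 < ρ ≤ 1 and let k ≥ 0 be an integer. Let f : [0,1] → ℝ be such that the transformed function F(η) := f(1-(1-η)^{1/ρ}) is k-times continuously differentiable on (0,1). Then D_ρ^k f(t) = F^{(k)}(1-(1-t)^ρ) for t ∈ (0,1), and ∫₀¹ ϰ^{μ+k,υ+k,ρ}(t) (D_ρ^k f(t))² dt = ∫₀¹ (1-η)^{μ+k} η^{υ+k} (F^{(k)}(η))² dη; in particular the weighted L² norm of D_ρ^k f with weight ϰ^{μ+k,υ+k,ρ} equals the Jacobi-weighted L² norm of the k-th ordinary derivative of F with weight (1-η)^{μ+k} η^{υ+k}. -/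
open Real MeasureTheory

lemma iteratedDerivWithin_of_isOpen' {n : ℕ} {f : ℝ → ℝ} {s : Set ℝ} {x : ℝ}
    (hs : IsOpen s) (hx : x ∈ s) :
    iteratedDerivWithin n f s x = iteratedDeriv n f x := by
  simp only [iteratedDerivWithin, iteratedDeriv, iteratedFDerivWithin_of_isOpen n hs hx]

lemma gmap_hasDerivAt (ρ : ℝ) (hρ0 : 0 < ρ) {t : ℝ} (ht : t < 1) :
    HasDerivAt (fun s : ℝ => 1 - (1 - s) ^ ρ) (ρ * (1 - t) ^ (ρ - 1)) t := by
  have h1 : HasDerivAt (fun s : ℝ => 1 - s) (-1) t := by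
    simpa using (hasDerivAt_id t).const_sub 1
  have h2 : HasDerivAt (fun s : ℝ => (1 - s) ^ ρ) (-1 * ρ * (1 - t) ^ (ρ - 1)) t :=
    h1.rpow_const (Or.inl (by intro h; linarith))
  have h3 := h2.const_sub 1
  rw [show ρ * (1 - t) ^ (ρ - 1) = -(-1 * ρ * (1 - t) ^ (ρ - 1)) by ring]
  exact h3

lemma gmap_mem {ρ t : ℝ} (hρ0 : 0 < ρ) (ht : t ∈ Set.Ioo (0:ℝ) 1) :
    (1 - (1 - t) ^ ρ) ∈ Set.Ioo (0:ℝ) 1 := by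
  obtain ⟨ht0, ht1⟩ := ht
  have h1 : (0:ℝ) < (1 - t) ^ ρ := Real.rpow_pos_of_pos (by linarith) ρ
  have h2 : (1 - t) ^ ρ < 1 := Real.rpow_lt_one (by linarith) (by linarith) hρ0
  constructor <;> [linarith; linarith]

/-- Key lemma: iterated backward derivative equals iterated derivative of transform. -/
lemma backD_iterate_eq (ρ : ℝ) (hρ0 : 0 < ρ) (k : ℕ) (G f : ℝ → ℝ)
    (hG : ContDiffOn ℝ k G (Set.Ioo 0 1))
    (hfG : ∀ t ∈ Set.Ioo (0:ℝ) 1, f t = G (1 - (1 - t) ^ ρ)) :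
    ∀ t ∈ Set.Ioo (0:ℝ) 1,
      (backD ρ)^[k] f t = iteratedDeriv k G (1 - (1 - t) ^ ρ) := by
  induction k with
  | zero => intro t ht; simpa using hfG t ht
  | succ k IH =>
    have hG' : ContDiffOn ℝ k G (Set.Ioo 0 1) :=
      hG.of_le (by exact_mod_cast Nat.cast_le.mpr (Nat.le_succ k))
    have IH' := IH hG'
    intro t ht
    obtain ⟨ht0, ht1⟩ := ht
    have hmem : t ∈ Set.Ioo (0:ℝ) 1 := ⟨ht0, ht1⟩
    set g : ℝ → ℝ := fun s => 1 - (1 - s) ^ ρ with hg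
    have hgt : g t ∈ Set.Ioo (0:ℝ) 1 := gmap_mem hρ0 hmem
    have hopen : IsOpen (Set.Ioo (0:ℝ) 1) := isOpen_Ioo
    have hUD : UniqueDiffOn ℝ (Set.Ioo (0:ℝ) 1) := hopen.uniqueDiffOn
    -- differentiability of k-th derivative of G at g t
    have hdiffW : DifferentiableWithinAt ℝ (iteratedDerivWithin k G (Set.Ioo 0 1))
        (Set.Ioo 0 1) (g t) :=
      (hG.differentiableOn_iteratedDerivWithin (by exact_mod_cast Nat.lt_succ_self k) hUD)
        (g t) hgt
    have hnhds : Set.Ioo (0:ℝ) 1 ∈ nhds (g t) := hopen.mem_nhds hgt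
    have heq : iteratedDerivWithin k G (Set.Ioo 0 1) =ᶠ[nhds (g t)] iteratedDeriv k G :=
      Filter.eventuallyEq_of_mem hnhds (fun x hx => iteratedDerivWithin_of_isOpen' hopen hx)
    have hdiffA : DifferentiableAt ℝ (iteratedDeriv k G) (g t) :=
      (heq.differentiableAt_iff).mp (hdiffW.differentiableAt hnhds)
    have hderiv_val : deriv (iteratedDeriv k G) (g t) = iteratedDeriv (k+1) G (g t) := by
      rw [← heq.deriv_eq, ← derivWithin_of_isOpen hopen hgt,
        ← iteratedDerivWithin_succ,
        iteratedDerivWithin_of_isOpen' hopen hgt]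
    have hgderiv : HasDerivAt g (ρ * (1 - t) ^ (ρ - 1)) t := gmap_hasDerivAt ρ hρ0 ht1
    have hcomp : HasDerivAt (fun s => iteratedDeriv k G (g s))
        (iteratedDeriv (k+1) G (g t) * (ρ * (1 - t) ^ (ρ - 1))) t := by
      have := (hdiffA.hasDerivAt.comp t hgderiv)
      rw [hderiv_val] at this
      exact this
    have heqn : (backD ρ)^[k] f =ᶠ[nhds t] fun s => iteratedDeriv k G (g s) :=
      Filter.eventuallyEq_of_mem (hopen.mem_nhds hmem) (fun x hx => IH' x hx)
    have hder : deriv ((backD ρ)^[k] f) t = iteratedDeriv (k+1) G (g t) * (ρ * (1 - t) ^ (ρ - 1)) := by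
      rw [heqn.deriv_eq, hcomp.deriv]
    rw [Function.iterate_succ_apply']
    show (1 - t) ^ (1 - ρ) / ρ * deriv ((backD ρ)^[k] f) t = _
    rw [hder]
    have hpow : (1 - t : ℝ) ^ (1 - ρ) * (1 - t) ^ (ρ - 1) = 1 := by
      rw [← Real.rpow_add (by linarith)]
      norm_num
    have hfin : (1 - t) ^ (1 - ρ) / ρ *
        (iteratedDeriv (k+1) G (g t) * (ρ * (1 - t) ^ (ρ - 1)))
        = iteratedDeriv (k+1) G (g t) * ((1 - t) ^ (1 - ρ) * (1 - t) ^ (ρ - 1)) * (ρ / ρ) := by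
      ring
    rw [hfin, hpow, div_self hρ0.ne']
    ring

lemma gmap_image (ρ : ℝ) (hρ0 : 0 < ρ) :
    (fun t : ℝ => 1 - (1 - t) ^ ρ) '' Set.Ioo 0 1 = Set.Ioo 0 1 := by
  ext η
  constructor
  · rintro ⟨t, ht, rfl⟩
    exact gmap_mem hρ0 ht
  · intro hη
    refine ⟨1 - (1 - η) ^ (1 / ρ), gmap_mem (one_div_pos.mpr hρ0) hη, ?_⟩
    have h1 : (0:ℝ) ≤ 1 - η := by linarith [hη.2]
    simp only [sub_sub_cancel]
    rw [← Real.rpow_mul h1, one_div_mul_cancel hρ0.ne', Real.rpow_one]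
    linarith


/-- The backward transformed derivative corresponds to the ordinary derivative of the
transformed function F(η) = f(1-(1-η)^{1/ρ}), and the weighted L² norm of D_ρ^k f with
weight ϰ^{μ+k,υ+k,ρ} equals the Jacobi-weighted L² norm of F⁽ᵏ⁾. -/
theorem backD_transform_identity
    (μ υ ρ : ℝ) (hμ : -1 < μ) (hυ : -1 < υ) (hρ0 : 0 < ρ) (hρ1 : ρ ≤ 1) (k : ℕ)
    (f : ℝ → ℝ)
    (hF : ContDiffOn ℝ k (fun η : ℝ => f (1 - (1 - η) ^ (1 / ρ))) (Set.Ioo 0 1)) :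
    (∀ t ∈ Set.Ioo (0:ℝ) 1,
      (backD ρ)^[k] f t
        = iteratedDeriv k (fun η : ℝ => f (1 - (1 - η) ^ (1 / ρ))) (1 - (1 - t) ^ ρ)) ∧
    (∫ t in (0:ℝ)..1, backWeight (μ + (k : ℝ)) (υ + (k : ℝ)) ρ t * ((backD ρ)^[k] f t) ^ 2
      = ∫ η in (0:ℝ)..1, (1 - η) ^ (μ + (k : ℝ)) * η ^ (υ + (k : ℝ)) *
          (iteratedDeriv k (fun η : ℝ => f (1 - (1 - η) ^ (1 / ρ))) η) ^ 2) := by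
  set F : ℝ → ℝ := fun η : ℝ => f (1 - (1 - η) ^ (1 / ρ)) with hFdef
  have hfG : ∀ t ∈ Set.Ioo (0:ℝ) 1, f t = F (1 - (1 - t) ^ ρ) := by
    intro t ht
    have h1 : (0:ℝ) ≤ 1 - t := by linarith [ht.2]
    simp only [hFdef, sub_sub_cancel]
    rw [← Real.rpow_mul h1, mul_one_div_cancel hρ0.ne', Real.rpow_one]
    ring_nf
  have part1 := backD_iterate_eq ρ hρ0 k F f hF hfG
  refine ⟨part1, ?_⟩
  have h01 : (0:ℝ) ≤ 1 := by norm_num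
  rw [intervalIntegral.integral_of_le h01, intervalIntegral.integral_of_le h01,
    MeasureTheory.integral_Ioc_eq_integral_Ioo, MeasureTheory.integral_Ioc_eq_integral_Ioo]
  have hinj : Set.InjOn (fun t : ℝ => 1 - (1 - t) ^ ρ) (Set.Ioo 0 1) := by
    have hmono : StrictMonoOn (fun t : ℝ => 1 - (1 - t) ^ ρ) (Set.Ioo 0 1) := by
      intro a ha b hb hab
      have : (1 - b) ^ ρ < (1 - a) ^ ρ :=
        Real.rpow_lt_rpow (by linarith [hb.2]) (by linarith) hρ0
      simpa using this
    exact hmono.injOn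
  have hder : ∀ x ∈ Set.Ioo (0:ℝ) 1, HasDerivWithinAt (fun t : ℝ => 1 - (1 - t) ^ ρ)
      (ρ * (1 - x) ^ (ρ - 1)) (Set.Ioo 0 1) x :=
    fun x hx => (gmap_hasDerivAt ρ hρ0 hx.2).hasDerivWithinAt
  have himg := gmap_image ρ hρ0
  have hchg := integral_image_eq_integral_abs_deriv_smul measurableSet_Ioo hder hinj
    (fun η => (1 - η) ^ (μ + (k:ℝ)) * η ^ (υ + (k:ℝ)) * (iteratedDeriv k F η) ^ 2)
  rw [himg] at hchg
  rw [hchg]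
  apply MeasureTheory.setIntegral_congr_fun measurableSet_Ioo
  intro t ht
  have ht1 : (0:ℝ) < 1 - t := by linarith [ht.2]
  have hgt := gmap_mem hρ0 ht
  have habs : |ρ * (1 - t) ^ (ρ - 1)| = ρ * (1 - t) ^ (ρ - 1) :=
    abs_of_pos (mul_pos hρ0 (Real.rpow_pos_of_pos ht1 _))
  dsimp only
  rw [part1 t ht]
  simp only [smul_eq_mul, habs, sub_sub_cancel]
  rw [← Real.rpow_mul ht1.le ρ (μ + (k:ℝ))]
  rw [backWeight]
  have hexp : ρ * (μ + (k:ℝ) + 1) - 1 = (ρ - 1) + ρ * (μ + (k:ℝ)) := by ring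
  rw [hexp, Real.rpow_add ht1]
  ring
end

section
/- Let μ, υ > -1, 0 < ρ ≤ 1 and N ∈ ℕ. Then for every φ in span{ 𝒫_0^{μ,υ,ρ}, …, 𝒫_N^{μ,υ,ρ} } (equivalently, every φ ∈ P_N^ρ), ∫₀¹ ϰ̃^{μ,υ,ρ}(t) (φ'(t))² dt ≤ σ_N^{μ,υ} ∫₀¹ ϰ^{μ,υ,ρ}(t) φ(t)² dt, where σ_N^{μ,υ} = N(N+μ+υ+1) and ϰ̃^{μ,υ,ρ}(t) = ρ^{-1} (1-t)^{ρμ+1} (1-(1-t)^ρ)^{υ+1}. -/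
open Real MeasureTheory Finset intervalIntegral Set

/-- The auxiliary weight ϰ̃^{μ,υ,ρ}(t) = ρ⁻¹ (1-t)^{ρμ+1} (1-(1-t)^ρ)^{υ+1}. -/
noncomputable def backWeightTilde (μ υ ρ t : ℝ) : ℝ :=
  ρ⁻¹ * (1 - t) ^ (ρ * μ + 1) * (1 - (1 - t) ^ ρ) ^ (υ + 1)



section base
variable {ρ a b : ℝ}

/-- pointwise bounds on (0,1) -/
lemma aux_bounds (hρ0 : 0 < ρ) (hρ1 : ρ ≤ 1) {t : ℝ} (ht : t ∈ Set.Ioo (0:ℝ) 1) :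
    ρ * t ≤ 1 - (1-t)^ρ ∧ 1 - (1-t)^ρ ≤ t := by
  obtain ⟨ht0, ht1⟩ := ht
  constructor
  · have h := rpow_one_add_le_one_add_mul_self (s := -t) (by linarith) hρ0.le hρ1
    simp only [← sub_eq_add_neg, mul_neg] at h
    linarith
  · have h : (1-t)^(1:ℝ) ≤ (1-t)^ρ :=
      Real.rpow_le_rpow_of_exponent_ge (by linarith) (by linarith) hρ1
    rw [Real.rpow_one] at h
    linarith

lemma aux_meas : Measurable (fun t : ℝ => ρ * (1-t)^(ρ*a-1) * (1-(1-t)^ρ)^b) := by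
  have hr : ∀ q : ℝ, Measurable fun y : ℝ => y ^ q := fun q => by measurability
  have h1 : Measurable (fun t : ℝ => (1:ℝ) - t) := measurable_const.sub measurable_id
  exact (((hr (ρ*a-1)).comp h1).const_mul ρ).mul
    ((hr b).comp (measurable_const.sub ((hr ρ).comp h1)))

/-- Integrability of the basic weight integrand. -/
lemma aux_integrable (hρ0 : 0 < ρ) (hρ1 : ρ ≤ 1) (ha : 0 < a) (hb : -1 < b) :
    IntervalIntegrable (fun t : ℝ => ρ * (1-t)^(ρ*a-1) * (1-(1-t)^ρ)^b) volume 0 1 := by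
  have hcb : IntervalIntegrable
      (fun x : ℝ => ‖(x:ℂ) ^ ((b+1 : ℂ) - 1) * ((1:ℂ) - x) ^ ((ρ*a : ℂ) - 1)‖) volume 0 1 := by
    exact (Complex.betaIntegral_convergent (u := (b+1:ℂ)) (v := (ρ*a:ℂ))
      (by simp; linarith) (by simpa using mul_pos hρ0 ha)).norm
  set C : ℝ := ρ * max 1 (ρ ^ b) with hC
  have hC0 : 0 ≤ C := by positivity
  rw [intervalIntegrable_iff_integrableOn_Ioo_of_le zero_le_one]
  have hcb' : IntegrableOn
      (fun x : ℝ => C * ‖(x:ℂ) ^ ((b+1 : ℂ) - 1) * ((1:ℂ) - x) ^ ((ρ*a : ℂ) - 1)‖)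
      (Set.Ioo (0:ℝ) 1) volume := by
    rw [intervalIntegrable_iff_integrableOn_Ioo_of_le zero_le_one] at hcb
    exact hcb.const_mul C
  refine hcb'.mono' (aux_meas.aestronglyMeasurable.restrict) ?_
  filter_upwards [ae_restrict_mem measurableSet_Ioo] with t ht
  obtain ⟨hl, hu⟩ := aux_bounds hρ0 hρ1 ht
  obtain ⟨ht0, ht1⟩ := ht
  have h1t : (0:ℝ) < 1 - t := by linarith
  have hv0 : 0 < 1 - (1-t)^ρ := lt_of_lt_of_le (by positivity) hl
  have hnorm : ‖(t:ℂ) ^ ((b+1 : ℂ) - 1) * ((1:ℂ) - t) ^ ((ρ*a : ℂ) - 1)‖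
      = t ^ b * (1-t) ^ (ρ*a-1) := by
    push_cast
    rw [← Complex.ofReal_one, ← Complex.ofReal_sub, norm_mul]
    rw [Complex.norm_cpow_eq_rpow_re_of_pos ht0, Complex.norm_cpow_eq_rpow_re_of_pos h1t]
    norm_num
  rw [hnorm]
  have key : (1 - (1-t)^ρ) ^ b ≤ max 1 (ρ ^ b) * t ^ b := by
    rcases le_or_gt 0 b with hb0 | hb0
    · have := Real.rpow_le_rpow hv0.le hu hb0
      calc (1 - (1-t)^ρ) ^ b ≤ t ^ b := this
        _ ≤ max 1 (ρ ^ b) * t ^ b := by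
            nlinarith [Real.rpow_nonneg ht0.le b, le_max_left 1 (ρ^b)]
    · have hρt : (0:ℝ) < ρ * t := by positivity
      have h2 : (1 - (1-t)^ρ) ^ b ≤ (ρ * t) ^ b := by
        rcases eq_or_lt_of_le hl with h | h
        · rw [h]
        · exact (Real.rpow_lt_rpow_of_neg hρt h hb0).le
      rw [Real.mul_rpow hρ0.le ht0.le] at h2
      calc (1 - (1-t)^ρ) ^ b ≤ ρ ^ b * t ^ b := h2
        _ ≤ max 1 (ρ ^ b) * t ^ b := by
            nlinarith [Real.rpow_nonneg ht0.le b, le_max_right 1 (ρ^b)]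
  have hfnn : 0 ≤ ρ * (1-t)^(ρ*a-1) * (1-(1-t)^ρ)^b := by positivity
  rw [Real.norm_of_nonneg hfnn]
  calc ρ * (1-t)^(ρ*a-1) * (1-(1-t)^ρ)^b
      ≤ ρ * (1-t)^(ρ*a-1) * (max 1 (ρ ^ b) * t ^ b) := by
        have : 0 ≤ ρ * (1-t)^(ρ*a-1) := by positivity
        exact mul_le_mul_of_nonneg_left key this
    _ = C * (t ^ b * (1-t) ^ (ρ*a-1)) := by ring


noncomputable def Gint (ρ a b : ℝ) : ℝ :=
  ∫ t in (0:ℝ)..1, ρ * (1-t)^(ρ*a-1) * (1-(1-t)^ρ)^b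

lemma gint_I2 (hρ0 : 0 < ρ) (hρ1 : ρ ≤ 1) (ha : 0 < a) (hb : -1 < b) :
    Gint ρ a (b+1) = Gint ρ a b - Gint ρ (a+1) b := by
  have hint1 := aux_integrable hρ0 hρ1 ha hb
  have hint2 := aux_integrable (a := a+1) hρ0 hρ1 (by linarith) hb
  have hcongr : Gint ρ a (b+1) = ∫ t in (0:ℝ)..1,
      (ρ*(1-t)^(ρ*a-1)*(1-(1-t)^ρ)^b - ρ*(1-t)^(ρ*(a+1)-1)*(1-(1-t)^ρ)^b) := by
    apply intervalIntegral.integral_congr_ae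
    have h1 : ∀ᵐ x : ℝ, x ≠ (1:ℝ) := by
      refine (MeasureTheory.ae_iff).mpr ?_
      simpa using Real.volume_singleton
    filter_upwards [h1] with t ht htmem
    rw [Set.uIoc_of_le (zero_le_one)] at htmem
    obtain ⟨ht0, ht1'⟩ := htmem
    have ht1 : t < 1 := lt_of_le_of_ne ht1' ht
    have hu : (0:ℝ) < 1 - t := by linarith
    have hber : ρ * t ≤ 1 - (1-t)^ρ := by
      have h := rpow_one_add_le_one_add_mul_self (s := -t) (by linarith) hρ0.le hρ1
      simp only [← sub_eq_add_neg, mul_neg] at h; linarith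
    have hv : (0:ℝ) < 1 - (1-t)^ρ := lt_of_lt_of_le (by positivity) hber
    have e1 : (1-(1-t)^ρ)^(b+1) = (1-(1-t)^ρ)^b * (1-(1-t)^ρ) := by
      rw [Real.rpow_add hv, Real.rpow_one]
    have e2 : (1-t)^(ρ*a-1) * (1-t)^ρ = (1-t)^(ρ*(a+1)-1) := by
      rw [← Real.rpow_add hu]; ring_nf
    rw [e1, ← e2]; ring
  rw [hcongr, intervalIntegral.integral_sub hint1 hint2]
  rfl

lemma gint_I1 (hρ0 : 0 < ρ) (hρ1 : ρ ≤ 1) (ha : 0 < a) (hb : -1 < b) :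
    a * Gint ρ a (b+1) = (b+1) * Gint ρ (a+1) b := by
  set F : ℝ → ℝ := fun t => (1-t)^(ρ*a) * (1-(1-t)^ρ)^(b+1) with hF
  have hb1 : (0:ℝ) < b + 1 := by linarith
  have hderiv : ∀ t ∈ Ioo (0:ℝ) 1, HasDerivAt F
      (-a * (ρ * (1-t)^(ρ*a-1) * (1-(1-t)^ρ)^(b+1))
        + (b+1) * (ρ * (1-t)^(ρ*(a+1)-1) * (1-(1-t)^ρ)^b)) t := by
    intro t ht
    obtain ⟨ht0, ht1⟩ := ht
    have hu : (0:ℝ) < 1 - t := by linarith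
    have hber : ρ * t ≤ 1 - (1-t)^ρ := by
      have h := rpow_one_add_le_one_add_mul_self (s := -t) (by linarith) hρ0.le hρ1
      simp only [← sub_eq_add_neg, mul_neg] at h; linarith
    have hv : (0:ℝ) < 1 - (1-t)^ρ := lt_of_lt_of_le (by positivity) hber
    have h1 : HasDerivAt (fun t : ℝ => 1 - t) (-1) t := by
      simpa using (hasDerivAt_id t).const_sub 1
    have g1 : HasDerivAt (fun t : ℝ => (1-t)^(ρ*a)) (-1 * ((ρ*a) * (1-t)^(ρ*a-1))) t := by
      simpa [mul_comm] using h1.rpow_const (Or.inl hu.ne')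
    have g2 : HasDerivAt (fun t : ℝ => 1 - (1-t)^ρ) (ρ * (1-t)^(ρ-1)) t := by
      have := (h1.rpow_const (p := ρ) (Or.inl hu.ne')).const_sub 1
      simpa using this
    have g3 : HasDerivAt (fun t : ℝ => (1-(1-t)^ρ)^(b+1))
        ((ρ * (1-t)^(ρ-1)) * ((b+1) * (1-(1-t)^ρ)^(b+1-1))) t := by
      have := g2.rpow_const (p := b+1) (Or.inl hv.ne')
      convert this using 1; ring
    have e1 : (1-t)^(ρ*(a+1)-1) = (1-t)^(ρ-1) * (1-t)^(ρ*a) := by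
      rw [← Real.rpow_add hu]; ring_nf
    have e2 : b+1-1 = b := by ring
    have := g1.fun_mul g3
    refine this.congr_deriv ?_
    rw [e2, e1]; ring
  have hint1 : IntervalIntegrable (fun t : ℝ => ρ * (1-t)^(ρ*a-1) * (1-(1-t)^ρ)^(b+1))
      volume 0 1 := aux_integrable hρ0 hρ1 ha (by linarith)
  have hint2 : IntervalIntegrable (fun t : ℝ => ρ * (1-t)^(ρ*(a+1)-1) * (1-(1-t)^ρ)^b)
      volume 0 1 := aux_integrable hρ0 hρ1 (by linarith) hb
  have hint : IntervalIntegrable (fun t : ℝ =>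
      -a * (ρ * (1-t)^(ρ*a-1) * (1-(1-t)^ρ)^(b+1))
        + (b+1) * (ρ * (1-t)^(ρ*(a+1)-1) * (1-(1-t)^ρ)^b)) volume 0 1 :=
    (hint1.const_mul (-a)).add (hint2.const_mul (b+1))
  have hF0 : ContinuousAt F 0 := by
    apply ContinuousAt.mul
    · exact (continuousAt_const.sub continuousAt_id).rpow_const (Or.inl (by norm_num))
    · exact (continuousAt_const.sub
        ((continuousAt_const.sub continuousAt_id).rpow_const
          (Or.inr hρ0.le))).rpow_const (Or.inr hb1.le)
  have hF1 : ContinuousAt F 1 := by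
    apply ContinuousAt.mul
    · exact (continuousAt_const.sub continuousAt_id).rpow_const
        (Or.inr (by positivity))
    · refine (continuousAt_const.sub
        ((continuousAt_const.sub continuousAt_id).rpow_const
          (Or.inr hρ0.le))).rpow_const (Or.inl ?_)
      simp [Real.zero_rpow hρ0.ne']
  have hFval0 : F 0 = 0 := by
    simp [hF, Real.one_rpow, Real.zero_rpow hb1.ne']
  have hFval1 : F 1 = 0 := by
    simp [hF, Real.zero_rpow (by positivity : ρ*a ≠ 0)]
  have key := integral_eq_sub_of_hasDerivAt_of_tendsto (f := F) zero_lt_one hderiv hint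
    (hF0.tendsto.mono_left nhdsWithin_le_nhds)
    (hF1.tendsto.mono_left nhdsWithin_le_nhds)
  rw [hFval0, hFval1, sub_zero] at key
  have expand : ∫ t in (0:ℝ)..1,
      (-a * (ρ * (1-t)^(ρ*a-1) * (1-(1-t)^ρ)^(b+1))
        + (b+1) * (ρ * (1-t)^(ρ*(a+1)-1) * (1-(1-t)^ρ)^b))
      = -a * Gint ρ a (b+1) + (b+1) * Gint ρ (a+1) b := by
    rw [integral_add (hint1.const_mul (-a)) (hint2.const_mul (b+1)),
      intervalIntegral.integral_const_mul, intervalIntegral.integral_const_mul]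
    rfl
  rw [expand] at key
  linarith [key]

namespace InvIneqAux

variable (μ υ : ℝ)

noncomputable def sig (k : ℕ) : ℝ := k * ((k:ℝ) + μ + υ + 1)

noncomputable def Top (c : ℕ → ℝ) : ℕ → ℝ :=
  fun j => sig μ υ j * c j - ((j:ℝ)+1)*((j:ℝ)+1+μ) * c (j+1)

variable (N : ℕ) (M Mt : ℕ → ℝ)

noncomputable def innerM (d : ℕ → ℝ) (k : ℕ) : ℝ := ∑ l ∈ range (N+1), d l * M (k+l)

noncomputable def Qf (c d : ℕ → ℝ) : ℝ :=
  ∑ k ∈ range (N+1), ∑ l ∈ range (N+1), c k * d l * M (k+l)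

noncomputable def Df (c d : ℕ → ℝ) : ℝ :=
  ∑ k ∈ range (N+1), ∑ l ∈ range (N+1), (k:ℝ) * (l:ℝ) * c k * d l * Mt (k+l)

def Sset (n : ℕ) : Set (ℕ → ℝ) := {c | ∀ j, n < j → c j = 0}

def delta (n : ℕ) : ℕ → ℝ := fun j => if j = n then 1 else 0

lemma delta_mem (n : ℕ) : delta n ∈ Sset n := by
  intro j hj
  simp only [delta, if_neg (by omega : j ≠ n)]

lemma Sset_mono {n m : ℕ} (h : n ≤ m) : Sset n ⊆ Sset m := by
  intro c hc j hj
  exact hc j (lt_of_le_of_lt h hj)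

lemma Qf_eq_sum_inner (c d : ℕ → ℝ) :
    Qf N M c d = ∑ k ∈ range (N+1), c k * innerM N M d k := by
  unfold Qf innerM
  refine Finset.sum_congr rfl fun k _ => ?_
  rw [Finset.mul_sum]
  refine Finset.sum_congr rfl fun l _ => by ring

lemma Qf_symm (c d : ℕ → ℝ) : Qf N M c d = Qf N M d c := by
  unfold Qf
  rw [Finset.sum_comm]
  refine Finset.sum_congr rfl fun k _ => Finset.sum_congr rfl fun l _ => ?_
  rw [Nat.add_comm l k]; ring

lemma Df_symm (c d : ℕ → ℝ) : Df N Mt c d = Df N Mt d c := by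
  unfold Df
  rw [Finset.sum_comm]
  refine Finset.sum_congr rfl fun k _ => Finset.sum_congr rfl fun l _ => ?_
  rw [Nat.add_comm l k]; ring

/-- Key adjointness computation. -/
lemma Qf_Top_left
    (hkey : ∀ k l : ℕ, sig μ υ (k+1) * M (k+1+l) - ((k:ℝ)+1)*((k:ℝ)+1+μ) * M (k+l)
      = ((k:ℝ)+1)*(l:ℝ)*Mt (k+1+l))
    {c : ℕ → ℝ} (hc : c ∈ Sset N) (d : ℕ → ℝ) :
    Qf N M (Top μ υ c) d = Df N Mt c d := by
  set g : ℕ → ℝ := fun j => (j:ℝ)*((j:ℝ)+μ)*c j * innerM N M d (j-1) with hg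
  have step1 : Qf N M (Top μ υ c) d
      = ∑ k ∈ range (N+1), (sig μ υ k * c k * innerM N M d k
          - ((k:ℝ)+1)*((k:ℝ)+1+μ) * c (k+1) * innerM N M d k) := by
    rw [Qf_eq_sum_inner]
    refine Finset.sum_congr rfl fun k _ => ?_
    unfold Top; ring
  have step2 : ∑ k ∈ range (N+1), ((k:ℝ)+1)*((k:ℝ)+1+μ) * c (k+1) * innerM N M d k
      = ∑ k ∈ range (N+1), g k := by
    have h1 : ∀ k : ℕ, ((k:ℝ)+1)*((k:ℝ)+1+μ) * c (k+1) * innerM N M d k = g (k+1) := by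
      intro k
      simp only [hg, Nat.add_sub_cancel]
      push_cast; ring
    calc ∑ k ∈ range (N+1), ((k:ℝ)+1)*((k:ℝ)+1+μ) * c (k+1) * innerM N M d k
        = ∑ k ∈ range (N+1), g (k+1) := Finset.sum_congr rfl fun k _ => h1 k
      _ = ∑ k ∈ range (N+2), g k - g 0 := by
          rw [Finset.sum_range_succ' g (N+1)]; ring
      _ = ∑ k ∈ range (N+1), g k + g (N+1) - g 0 := by rw [Finset.sum_range_succ]
      _ = ∑ k ∈ range (N+1), g k := by
          have hc1 : c (N+1) = 0 := hc (N+1) (by omega)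
          simp [hg, hc1]
  have step3 : ∀ k ∈ range (N+1),
      sig μ υ k * c k * innerM N M d k - g k
        = ∑ l ∈ range (N+1), (k:ℝ) * (l:ℝ) * c k * d l * Mt (k+l) := by
    intro k _
    cases k with
    | zero => simp [sig, hg]
    | succ j =>
        simp only [hg, Nat.add_sub_cancel]
        unfold innerM
        rw [Finset.mul_sum, Finset.mul_sum, ← Finset.sum_sub_distrib]
        refine Finset.sum_congr rfl fun l _ => ?_
        have hk := hkey j l
        push_cast
        push_cast at hk
        linear_combination (c (j+1) * d l) * hk
  calc Qf N M (Top μ υ c) d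
      = ∑ k ∈ range (N+1), (sig μ υ k * c k * innerM N M d k
          - ((k:ℝ)+1)*((k:ℝ)+1+μ) * c (k+1) * innerM N M d k) := step1
    _ = (∑ k ∈ range (N+1), sig μ υ k * c k * innerM N M d k)
        - ∑ k ∈ range (N+1), ((k:ℝ)+1)*((k:ℝ)+1+μ) * c (k+1) * innerM N M d k :=
          Finset.sum_sub_distrib _ _
    _ = (∑ k ∈ range (N+1), sig μ υ k * c k * innerM N M d k)
        - ∑ k ∈ range (N+1), g k := by rw [step2]
    _ = ∑ k ∈ range (N+1), (sig μ υ k * c k * innerM N M d k - g k) :=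
          (Finset.sum_sub_distrib _ _).symm
    _ = ∑ k ∈ range (N+1), ∑ l ∈ range (N+1), (k:ℝ) * (l:ℝ) * c k * d l * Mt (k+l) :=
          Finset.sum_congr rfl step3
    _ = Df N Mt c d := rfl

lemma Qf_comb_left (x y d : ℕ → ℝ) (s : ℝ) :
    Qf N M (fun j => x j + s * y j) d = Qf N M x d + s * Qf N M y d := by
  unfold Qf
  rw [Finset.mul_sum, ← Finset.sum_add_distrib]
  refine Finset.sum_congr rfl fun k _ => ?_
  rw [Finset.mul_sum, ← Finset.sum_add_distrib]
  refine Finset.sum_congr rfl fun l _ => by ring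

lemma Qf_comb_right (x y c : ℕ → ℝ) (s : ℝ) :
    Qf N M c (fun j => x j + s * y j) = Qf N M c x + s * Qf N M c y := by
  rw [Qf_symm N M c, Qf_comb_left, Qf_symm N M x c, Qf_symm N M y c]

lemma Qf_zero_right (c z : ℕ → ℝ) (hz : ∀ j, z j = 0) : Qf N M c z = 0 := by
  unfold Qf
  refine Finset.sum_eq_zero fun k _ => Finset.sum_eq_zero fun l _ => by rw [hz l]; ring

noncomputable def Aop (μ υ : ℝ) (m : ℕ) (c : ℕ → ℝ) : ℕ → ℝ :=
  Nat.rec c (fun m prev => fun j => Top μ υ prev j - sig μ υ m * prev j) m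

lemma Aop_zero (c : ℕ → ℝ) : Aop μ υ 0 c = c := rfl

lemma Aop_succ (m : ℕ) (c : ℕ → ℝ) :
    Aop μ υ (m+1) c = fun j => Top μ υ (Aop μ υ m c) j - sig μ υ m * Aop μ υ m c j := rfl

lemma Top_mem {n : ℕ} {c : ℕ → ℝ} (hc : c ∈ Sset n) : Top μ υ c ∈ Sset n := by
  intro j hj
  unfold Top
  rw [hc j hj, hc (j+1) (by omega)]
  ring

lemma Aop_mem {n : ℕ} (m : ℕ) {c : ℕ → ℝ} (hc : c ∈ Sset n) : Aop μ υ m c ∈ Sset n := by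
  induction m with
  | zero => exact hc
  | succ m ih =>
      intro j hj
      simp only [Aop_succ]
      rw [Top_mem μ υ ih j hj, ih j hj]
      ring

lemma Aop_Top_comm (m : ℕ) (c : ℕ → ℝ) :
    Aop μ υ m (Top μ υ c) = Top μ υ (Aop μ υ m c) := by
  induction m with
  | zero => rfl
  | succ m ih =>
      funext j
      rw [Aop_succ, ih]
      show Top μ υ (Top μ υ (Aop μ υ m c)) j - sig μ υ m * Top μ υ (Aop μ υ m c) j
        = sig μ υ j * (Aop μ υ (m+1) c) j
          - ((j:ℝ)+1)*((j:ℝ)+1+μ) * (Aop μ υ (m+1) c) (j+1)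
      rw [Aop_succ]
      unfold Top
      ring

lemma Aop_sub_smul (m : ℕ) (x y : ℕ → ℝ) (s : ℝ) :
    Aop μ υ m (fun j => x j - s * y j) = fun j => Aop μ υ m x j - s * Aop μ υ m y j := by
  induction m with
  | zero => rfl
  | succ m ih =>
      funext j
      rw [Aop_succ, ih, Aop_succ, Aop_succ]
      show sig μ υ j * (Aop μ υ m x j - s * Aop μ υ m y j)
          - ((j:ℝ)+1)*((j:ℝ)+1+μ) * (Aop μ υ m x (j+1) - s * Aop μ υ m y (j+1))
          - sig μ υ m * (Aop μ υ m x j - s * Aop μ υ m y j)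
        = (Top μ υ (Aop μ υ m x) j - sig μ υ m * Aop μ υ m x j)
          - s * (Top μ υ (Aop μ υ m y) j - sig μ υ m * Aop μ υ m y j)
      unfold Top
      ring

lemma sig_zero : sig μ υ 0 = 0 := by simp [sig]

lemma V_lemma : ∀ m : ℕ, ∀ c ∈ Sset m, ∀ j, Aop μ υ (m+1) c j = 0 := by
  intro m
  induction m with
  | zero =>
      intro c hc j
      simp only [Aop_succ, Aop_zero, sig_zero]
      unfold Top
      cases j with
      | zero => rw [hc 1 (by omega), sig_zero]; ring
      | succ i => rw [hc (i+1) (by omega), hc (i+2) (by omega)]; ring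
  | succ m ih =>
      intro c hc j
      have hTc : (fun i => Top μ υ c i - sig μ υ (m+1) * c i) ∈ Sset m := by
        intro i hi
        show Top μ υ c i - sig μ υ (m+1) * c i = 0
        rcases Nat.lt_or_ge (m+1) i with h | h
        · rw [Top_mem μ υ hc i h, hc i h]; ring
        · have hi' : i = m+1 := by omega
          subst hi'
          unfold Top
          rw [hc (m+1+1) (by omega)]
          ring
      have key := ih _ hTc j
      rw [Aop_sub_smul μ υ (m+1) (Top μ υ c) c (sig μ υ (m+1)), Aop_Top_comm] at key
      rw [Aop_succ]
      exact key

noncomputable def qvec (μ υ : ℝ) (n : ℕ) : ℕ → ℝ := Aop μ υ n (delta n)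

lemma qvec_mem (n : ℕ) : qvec μ υ n ∈ Sset n := Aop_mem μ υ n (delta_mem n)

lemma qvec_diag (n : ℕ) : ∀ m : ℕ,
    Aop μ υ m (delta n) n = ∏ j ∈ range m, (sig μ υ n - sig μ υ j) := by
  intro m
  induction m with
  | zero => simp [Aop_zero, delta]
  | succ m ih =>
      have h0 : Aop μ υ m (delta n) (n+1) = 0 :=
        Aop_mem μ υ m (delta_mem n) (n+1) (by omega)
      rw [Aop_succ]
      show Top μ υ (Aop μ υ m (delta n)) n - sig μ υ m * Aop μ υ m (delta n) n = _
      unfold Top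
      rw [h0, ih, Finset.prod_range_succ]
      ring

lemma sig_strict_mono (hμυ : -2 < μ + υ) {j n : ℕ} (h : j < n) :
    sig μ υ j < sig μ υ n := by
  unfold sig
  have hj : (j:ℝ) < (n:ℝ) := by exact_mod_cast h
  have hn : (1:ℝ) ≤ (n:ℝ) := by exact_mod_cast Nat.one_le_iff_ne_zero.mpr (by omega)
  have hj0 : (0:ℝ) ≤ (j:ℝ) := Nat.cast_nonneg j
  nlinarith

lemma sig_nonneg (hμυ : -2 < μ + υ) (n : ℕ) : 0 ≤ sig μ υ n := by
  cases n with
  | zero => rw [sig_zero]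
  | succ m =>
      have := sig_strict_mono μ υ hμυ (Nat.succ_pos m)
      rw [sig_zero] at this
      exact this.le

lemma qvec_top_pos (hμυ : -2 < μ + υ) (n : ℕ) : 0 < qvec μ υ n n := by
  rw [qvec, qvec_diag]
  exact Finset.prod_pos fun j hj =>
    sub_pos.mpr (sig_strict_mono μ υ hμυ (Finset.mem_range.mp hj))

lemma qvec_eig (n : ℕ) : ∀ j, Top μ υ (qvec μ υ n) j = sig μ υ n * qvec μ υ n j := by
  intro j
  have h2 := V_lemma μ υ n (delta n) (delta_mem n) j
  rw [Aop_succ] at h2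
  have : Top μ υ (Aop μ υ n (delta n)) j - sig μ υ n * Aop μ υ n (delta n) j = 0 := h2
  unfold qvec
  linarith [this]

section adjoint
variable (hkey : ∀ k l : ℕ, sig μ υ (k+1) * M (k+1+l) - ((k:ℝ)+1)*((k:ℝ)+1+μ) * M (k+l)
      = ((k:ℝ)+1)*(l:ℝ)*Mt (k+1+l))
include hkey

lemma Qf_Top_move {c d : ℕ → ℝ} (hc : c ∈ Sset N) (hd : d ∈ Sset N) :
    Qf N M (Top μ υ c) d = Qf N M c (Top μ υ d) := by
  rw [Qf_Top_left μ υ N M Mt hkey hc d, Qf_symm N M c, Qf_Top_left μ υ N M Mt hkey hd c,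
    Df_symm]

lemma Qf_Aop_move (m : ℕ) : ∀ {c d : ℕ → ℝ}, c ∈ Sset N → d ∈ Sset N →
    Qf N M (Aop μ υ m c) d = Qf N M c (Aop μ υ m d) := by
  induction m with
  | zero => intro c d _ _; rfl
  | succ m ih =>
      intro c d hc hd
      have e1 : Aop μ υ (m+1) c = fun j =>
          Aop μ υ m (Top μ υ c) j + (- sig μ υ m) * Aop μ υ m c j := by
        funext j
        rw [Aop_succ, Aop_Top_comm]
        ring
      have e2 : Aop μ υ (m+1) d = fun j =>
          Aop μ υ m (Top μ υ d) j + (- sig μ υ m) * Aop μ υ m d j := by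
        funext j
        rw [Aop_succ, Aop_Top_comm]
        ring
      rw [e1, e2, Qf_comb_left, Qf_comb_right,
        ih (Top_mem μ υ hc) hd, ih hc hd,
        Qf_Top_move μ υ N M Mt hkey hc (Aop_mem μ υ m hd),
        Aop_Top_comm]

lemma main_induction (hμυ : -2 < μ + υ) (hpsd : ∀ c ∈ Sset N, 0 ≤ Qf N M c c) :
    ∀ n, n ≤ N → ∀ c ∈ Sset n, Qf N M (Top μ υ c) c ≤ sig μ υ n * Qf N M c c := by
  intro n
  induction n with
  | zero =>
      intro _ c hc
      have hTc : ∀ j, Top μ υ c j = 0 := by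
        intro j
        have := V_lemma μ υ 0 c hc j
        simp only [Aop_succ, Aop_zero, sig_zero] at this
        linarith [this]
      rw [sig_zero, zero_mul, Qf_symm, Qf_zero_right N M c _ hTc]
  | succ n ih =>
      intro hn c hc
      set p : ℕ → ℝ := qvec μ υ (n+1) with hp
      have hpn : 0 < p (n+1) := qvec_top_pos μ υ hμυ (n+1)
      set e : ℝ := c (n+1) / p (n+1) with he
      set r : ℕ → ℝ := fun j => c j - e * p j with hr
      have hrS : r ∈ Sset n := by
        intro j hj
        rcases Nat.lt_or_ge (n+1) j with h | h
        · show c j - e * p j = 0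
          have hpj : p j = 0 := qvec_mem μ υ (n+1) j h
          rw [hc j h, hpj]; ring
        · have : j = n+1 := by omega
          subst this
          show c (n+1) - e * p (n+1) = 0
          rw [he, div_mul_cancel₀ _ hpn.ne']
          ring
      have hrN : r ∈ Sset N := Sset_mono (by omega) hrS
      have hpN : p ∈ Sset N := Sset_mono (by omega) (qvec_mem μ υ (n+1))
      have hcN : c ∈ Sset N := Sset_mono (by omega) hc
      -- orthogonality
      have horth : ∀ d ∈ Sset n, Qf N M p d = 0 := by
        intro d hd
        have hdN : d ∈ Sset N := Sset_mono (by omega) hd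
        have hdelN : delta (n+1) ∈ Sset N := Sset_mono (by omega) (delta_mem (n+1))
        rw [hp]
        show Qf N M (Aop μ υ (n+1) (delta (n+1))) d = 0
        rw [Qf_Aop_move μ υ N M Mt hkey (n+1) hdelN hdN]
        exact Qf_zero_right N M _ _ (V_lemma μ υ n d hd)
      -- decomposition of c
      have hc_eq : c = fun j => r j + e * p j := by
        funext j
        show c j = (c j - e * p j) + e * p j
        ring
      -- expansion of Top c
      have hTc_eq : Top μ υ c = fun j => Top μ υ r j + (e * sig μ υ (n+1)) * p j := by
        funext j
        have h1 : Top μ υ c j = Top μ υ r j + e * Top μ υ p j := by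
          unfold Top
          show sig μ υ j * c j - ((j:ℝ)+1)*((j:ℝ)+1+μ) * c (j+1)
            = (sig μ υ j * (c j - e * p j)
                - ((j:ℝ)+1)*((j:ℝ)+1+μ) * (c (j+1) - e * p (j+1)))
              + e * (sig μ υ j * p j - ((j:ℝ)+1)*((j:ℝ)+1+μ) * p (j+1))
          ring
        rw [h1, qvec_eig μ υ (n+1) j]
        ring
      have hTrN : Top μ υ r ∈ Sset n := Top_mem μ υ hrS
      have hQrp : Qf N M r p = 0 := by rw [Qf_symm]; exact horth r hrS
      have hQpr : Qf N M p r = 0 := horth r hrS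
      have hQTrp : Qf N M (Top μ υ r) p = 0 := by
        rw [Qf_symm]; exact horth _ hTrN
      -- expand both quadratic forms
      have expandQ : Qf N M c c = Qf N M r r + e * e * Qf N M p p := by
        conv_lhs => rw [hc_eq]
        rw [Qf_comb_left, Qf_comb_right, Qf_comb_right, hQrp, hQpr]
        ring
      have expandT : Qf N M (Top μ υ c) c
          = Qf N M (Top μ υ r) r + e * e * sig μ υ (n+1) * Qf N M p p := by
        conv_lhs => rw [hTc_eq, hc_eq]
        rw [Qf_comb_left, Qf_comb_right, Qf_comb_right, hQTrp, hQpr]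
        ring
      have hIH := ih (by omega) r hrS
      have hQrr : 0 ≤ Qf N M r r := hpsd r hrN
      have hQpp : 0 ≤ Qf N M p p := hpsd p hpN
      have hsig_le : sig μ υ n ≤ sig μ υ (n+1) := (sig_strict_mono μ υ hμυ (by omega)).le
      have hsig_nn : 0 ≤ sig μ υ (n+1) := sig_nonneg μ υ hμυ (n+1)
      rw [expandQ, expandT]
      nlinarith [hIH, hQrr, hQpp, hsig_le, hsig_nn, sq_nonneg e]

theorem alg_final (hμυ : -2 < μ + υ) (hpsd : ∀ c ∈ Sset N, 0 ≤ Qf N M c c)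
    {c : ℕ → ℝ} (hc : c ∈ Sset N) :
    Df N Mt c c ≤ sig μ υ N * Qf N M c c := by
  rw [← Qf_Top_left μ υ N M Mt hkey hc c]
  exact main_induction μ υ N M Mt hkey hμυ hpsd N le_rfl c hc

end adjoint

end InvIneqAux
section glue

variable {μ υ ρ : ℝ}

noncomputable def Mfun (μ υ ρ : ℝ) : ℕ → ℝ := fun m => Gint ρ (μ+1+(m:ℝ)) υ
noncomputable def Mtfun (μ υ ρ : ℝ) : ℕ → ℝ := fun m => Gint ρ (μ+(m:ℝ)) (υ+1)

noncomputable def phi (ρ : ℝ) (N : ℕ) (c : ℕ → ℝ) : ℝ → ℝ :=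
  fun t => ∑ k ∈ range (N+1), c k * (1-t)^(ρ*(k:ℝ))

lemma hkey_holds (hμ : -1 < μ) (hυ : -1 < υ) (hρ0 : 0 < ρ) (hρ1 : ρ ≤ 1) :
    ∀ k l : ℕ, InvIneqAux.sig μ υ (k+1) * Mfun μ υ ρ (k+1+l)
      - ((k:ℝ)+1)*((k:ℝ)+1+μ) * Mfun μ υ ρ (k+l)
      = ((k:ℝ)+1)*(l:ℝ) * Mtfun μ υ ρ (k+1+l) := by
  intro k l
  set a : ℝ := μ + 1 + ((k+l:ℕ):ℝ) with ha_def
  have hc0 : (0:ℝ) ≤ ((k+l:ℕ):ℝ) := Nat.cast_nonneg _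
  have ha : (0:ℝ) < a := by rw [ha_def]; linarith
  have h1 := gint_I1 hρ0 hρ1 ha hυ
  have h2 := gint_I2 hρ0 hρ1 ha hυ
  have c1 : μ+1+((k+1+l:ℕ):ℝ) = a+1 := by rw [ha_def]; push_cast; ring
  have c3 : μ+((k+1+l:ℕ):ℝ) = a := by rw [ha_def]; push_cast; ring
  have ha2 : a = μ + 1 + (k:ℝ) + (l:ℝ) := by rw [ha_def]; push_cast; ring
  show InvIneqAux.sig μ υ (k+1) * Gint ρ (μ+1+((k+1+l:ℕ):ℝ)) υ
      - ((k:ℝ)+1)*((k:ℝ)+1+μ) * Gint ρ (μ+1+((k+l:ℕ):ℝ)) υ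
      = ((k:ℝ)+1)*(l:ℝ) * Gint ρ (μ+((k+1+l:ℕ):ℝ)) (υ+1)
  rw [c1, c3, ← ha_def]
  unfold InvIneqAux.sig
  push_cast
  linear_combination (((k:ℝ)+1)*((k:ℝ)+1+μ)) * h2 - ((k:ℝ)+1) * h1
    + (((k:ℝ)+1) * Gint ρ a (υ+1)) * ha2

lemma expandQ (hμ : -1 < μ) (hυ : -1 < υ) (hρ0 : 0 < ρ) (hρ1 : ρ ≤ 1) (N : ℕ) (c : ℕ → ℝ) :
    ∫ t in (0:ℝ)..1, backWeight μ υ ρ t * (phi ρ N c t)^2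
      = InvIneqAux.Qf N (Mfun μ υ ρ) c c := by
  have hintg : ∀ k l : ℕ, IntervalIntegrable
      (fun t : ℝ => c k * c l * (ρ * (1-t)^(ρ*(μ+1+((k+l:ℕ):ℝ))-1) * (1-(1-t)^ρ)^υ))
      volume 0 1 := by
    intro k l
    have ha : (0:ℝ) < μ+1+((k+l:ℕ):ℝ) := by
      have : (0:ℝ) ≤ ((k+l:ℕ):ℝ) := Nat.cast_nonneg _
      linarith
    exact (aux_integrable hρ0 hρ1 ha hυ).const_mul _
  have congr1 : ∀ᵐ t : ℝ ∂volume, t ∈ Set.uIoc (0:ℝ) 1 →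
      backWeight μ υ ρ t * (phi ρ N c t)^2
        = ∑ k ∈ range (N+1), ∑ l ∈ range (N+1),
            c k * c l * (ρ * (1-t)^(ρ*(μ+1+((k+l:ℕ):ℝ))-1) * (1-(1-t)^ρ)^υ) := by
    have h1 : ∀ᵐ x : ℝ ∂volume, x ≠ (1:ℝ) := by
      refine (MeasureTheory.ae_iff).mpr ?_
      simpa using Real.volume_singleton
    filter_upwards [h1] with t ht htmem
    rw [Set.uIoc_of_le zero_le_one] at htmem
    obtain ⟨ht0, ht1'⟩ := htmem
    have ht1 : t < 1 := lt_of_le_of_ne ht1' ht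
    have hu : (0:ℝ) < 1 - t := by linarith
    have hsq : (phi ρ N c t)^2 = ∑ k ∈ range (N+1), ∑ l ∈ range (N+1),
        (c k * (1-t)^(ρ*(k:ℝ))) * (c l * (1-t)^(ρ*(l:ℝ))) := by
      rw [sq]
      exact Finset.sum_mul_sum _ _ _ _
    rw [hsq, Finset.mul_sum]
    refine Finset.sum_congr rfl fun k _ => ?_
    rw [Finset.mul_sum]
    refine Finset.sum_congr rfl fun l _ => ?_
    have hcomb : (1-t)^(ρ*(μ+1)-1) * (1-t)^(ρ*(k:ℝ)) * (1-t)^(ρ*(l:ℝ))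
        = (1-t)^(ρ*(μ+1+((k+l:ℕ):ℝ))-1) := by
      rw [← Real.rpow_add hu, ← Real.rpow_add hu]
      push_cast
      ring_nf
    unfold backWeight
    linear_combination (ρ * (1-(1-t)^ρ)^υ * c k * c l) * hcomb
  have houter : ∀ k ∈ range (N+1), IntervalIntegrable
      (fun t : ℝ => ∑ l ∈ range (N+1),
        c k * c l * (ρ * (1-t)^(ρ*(μ+1+((k+l:ℕ):ℝ))-1) * (1-(1-t)^ρ)^υ)) volume 0 1 := by
    intro k _
    have h := IntervalIntegrable.sum (μ := volume) (a := (0:ℝ)) (b := (1:ℝ))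
      (range (N+1)) (fun l _ => hintg k l)
    have heq : ∀ t : ℝ, (∑ l ∈ range (N+1), fun t : ℝ =>
        c k * c l * (ρ * (1-t)^(ρ*(μ+1+((k+l:ℕ):ℝ))-1) * (1-(1-t)^ρ)^υ)) t
        = ∑ l ∈ range (N+1),
            c k * c l * (ρ * (1-t)^(ρ*(μ+1+((k+l:ℕ):ℝ))-1) * (1-(1-t)^ρ)^υ) := by
      intro t; simp
    exact (funext heq) ▸ h
  rw [intervalIntegral.integral_congr_ae congr1,
    intervalIntegral.integral_finset_sum houter]
  refine Finset.sum_congr rfl fun k _ => ?_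
  rw [intervalIntegral.integral_finset_sum (fun l _ => hintg k l)]
  refine Finset.sum_congr rfl fun l _ => ?_
  rw [intervalIntegral.integral_const_mul]
  rfl

lemma expandD (hμ : -1 < μ) (hυ : -1 < υ) (hρ0 : 0 < ρ) (hρ1 : ρ ≤ 1) (N : ℕ) (c : ℕ → ℝ) :
    ∫ t in (0:ℝ)..1, backWeightTilde μ υ ρ t * (deriv (phi ρ N c) t)^2
      = InvIneqAux.Df N (Mtfun μ υ ρ) c c := by
  have hintg : ∀ k l : ℕ, IntervalIntegrable
      (fun t : ℝ => ((k:ℝ)*(l:ℝ)*c k*c l) * (ρ * (1-t)^(ρ*(μ+((k+l:ℕ):ℝ))-1) * (1-(1-t)^ρ)^(υ+1)))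
      volume 0 1 := by
    intro k l
    by_cases hkl : k = 0 ∨ l = 0
    · have hs : (k:ℝ)*(l:ℝ)*c k*c l = 0 := by
        rcases hkl with h | h <;> subst h <;> simp
      simp only [hs, zero_mul]
      exact intervalIntegrable_const
    · push_neg at hkl
      have ha : (0:ℝ) < μ+((k+l:ℕ):ℝ) := by
        have h2 : (2:ℝ) ≤ ((k+l:ℕ):ℝ) := by exact_mod_cast (by omega : 2 ≤ k+l)
        linarith
      exact (aux_integrable hρ0 hρ1 ha (by linarith)).const_mul _
  have congr1 : ∀ᵐ t : ℝ ∂volume, t ∈ Set.uIoc (0:ℝ) 1 →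
      backWeightTilde μ υ ρ t * (deriv (phi ρ N c) t)^2
        = ∑ k ∈ range (N+1), ∑ l ∈ range (N+1),
            ((k:ℝ)*(l:ℝ)*c k*c l) * (ρ * (1-t)^(ρ*(μ+((k+l:ℕ):ℝ))-1) * (1-(1-t)^ρ)^(υ+1)) := by
    have h1 : ∀ᵐ x : ℝ ∂volume, x ≠ (1:ℝ) := by
      refine (MeasureTheory.ae_iff).mpr ?_
      simpa using Real.volume_singleton
    filter_upwards [h1] with t ht htmem
    rw [Set.uIoc_of_le zero_le_one] at htmem
    obtain ⟨ht0, ht1'⟩ := htmem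
    have ht1 : t < 1 := lt_of_le_of_ne ht1' ht
    have hu : (0:ℝ) < 1 - t := by linarith
    have hone : HasDerivAt (fun t : ℝ => 1 - t) (-1) t := by
      simpa using (hasDerivAt_id t).const_sub 1
    have hder : HasDerivAt (phi ρ N c)
        (∑ k ∈ range (N+1), c k * (-(ρ*(k:ℝ)) * (1-t)^(ρ*(k:ℝ)-1))) t := by
      apply HasDerivAt.fun_sum
      intro k _
      have := (hone.rpow_const (p := ρ*(k:ℝ)) (Or.inl hu.ne')).const_mul (c k)
      exact this.congr_deriv (by ring)
    rw [hder.deriv, sq, Finset.sum_mul_sum, Finset.mul_sum]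
    refine Finset.sum_congr rfl fun k _ => ?_
    rw [Finset.mul_sum]
    refine Finset.sum_congr rfl fun l _ => ?_
    have hcomb : (1-t)^(ρ*μ+1) * (1-t)^(ρ*(k:ℝ)-1) * (1-t)^(ρ*(l:ℝ)-1)
        = (1-t)^(ρ*(μ+((k+l:ℕ):ℝ))-1) := by
      rw [← Real.rpow_add hu, ← Real.rpow_add hu]
      push_cast
      ring_nf
    have hρinv : ρ⁻¹ * ρ * ρ = ρ := by field_simp
    unfold backWeightTilde
    have expand : ρ⁻¹ * (1-t)^(ρ*μ+1) * (1-(1-t)^ρ)^(υ+1) *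
        ((c k * (-(ρ*(k:ℝ)) * (1-t)^(ρ*(k:ℝ)-1))) * (c l * (-(ρ*(l:ℝ)) * (1-t)^(ρ*(l:ℝ)-1))))
        = (ρ⁻¹ * ρ * ρ) * ((k:ℝ)*(l:ℝ)*c k*c l) *
            ((1-t)^(ρ*μ+1) * (1-t)^(ρ*(k:ℝ)-1) * (1-t)^(ρ*(l:ℝ)-1)) * (1-(1-t)^ρ)^(υ+1) := by
      ring
    rw [expand, hρinv, hcomb]
    ring
  have houter : ∀ k ∈ range (N+1), IntervalIntegrable
      (fun t : ℝ => ∑ l ∈ range (N+1),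
        ((k:ℝ)*(l:ℝ)*c k*c l) * (ρ * (1-t)^(ρ*(μ+((k+l:ℕ):ℝ))-1) * (1-(1-t)^ρ)^(υ+1)))
      volume 0 1 := by
    intro k _
    have h := IntervalIntegrable.sum (μ := volume) (a := (0:ℝ)) (b := (1:ℝ))
      (range (N+1)) (fun l _ => hintg k l)
    have heq : ∀ t : ℝ, (∑ l ∈ range (N+1), fun t : ℝ =>
        ((k:ℝ)*(l:ℝ)*c k*c l) * (ρ * (1-t)^(ρ*(μ+((k+l:ℕ):ℝ))-1) * (1-(1-t)^ρ)^(υ+1))) t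
        = ∑ l ∈ range (N+1),
            ((k:ℝ)*(l:ℝ)*c k*c l) * (ρ * (1-t)^(ρ*(μ+((k+l:ℕ):ℝ))-1) * (1-(1-t)^ρ)^(υ+1)) := by
      intro t; simp
    exact (funext heq) ▸ h
  rw [intervalIntegral.integral_congr_ae congr1,
    intervalIntegral.integral_finset_sum houter]
  refine Finset.sum_congr rfl fun k _ => ?_
  rw [intervalIntegral.integral_finset_sum (fun l _ => hintg k l)]
  refine Finset.sum_congr rfl fun l _ => ?_
  rw [intervalIntegral.integral_const_mul]
  show ((k:ℝ)*(l:ℝ)*c k*c l) * Gint ρ (μ+((k+l:ℕ):ℝ)) (υ+1)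
    = (k:ℝ)*(l:ℝ)*c k*c l * Mtfun μ υ ρ (k+l)
  rfl

lemma hpsd_holds (hμ : -1 < μ) (hυ : -1 < υ) (hρ0 : 0 < ρ) (hρ1 : ρ ≤ 1) (N : ℕ) :
    ∀ c ∈ InvIneqAux.Sset N, 0 ≤ InvIneqAux.Qf N (Mfun μ υ ρ) c c := by
  intro c _
  rw [← expandQ hμ hυ hρ0 hρ1 N c]
  apply intervalIntegral.integral_nonneg zero_le_one
  intro t htm
  obtain ⟨ht0, ht1⟩ := htm
  have h1t : 0 ≤ 1 - t := by linarith
  have hle1 : (1-t)^ρ ≤ 1 := Real.rpow_le_one h1t (by linarith) hρ0.le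
  have : 0 ≤ backWeight μ υ ρ t := by
    unfold backWeight
    have := Real.rpow_nonneg h1t (ρ*(μ+1)-1)
    have := Real.rpow_nonneg (by linarith : (0:ℝ) ≤ 1 - (1-t)^ρ) υ
    positivity
  positivity

lemma span_reduce (N : ℕ) {φ : ℝ → ℝ}
    (hφ : φ ∈ Submodule.span ℝ ((fun r : ℕ => backJacobi μ υ ρ r) '' {r | r ≤ N})) :
    ∃ c : ℕ → ℝ, c ∈ InvIneqAux.Sset N ∧ φ = phi ρ N c := by
  set g : Fin (N+1) → (ℝ → ℝ) := fun i => fun t => (1-t)^(ρ*((i:ℕ):ℝ)) with hg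
  have hsub : Submodule.span ℝ ((fun r : ℕ => backJacobi μ υ ρ r) '' {r | r ≤ N})
      ≤ Submodule.span ℝ (Set.range g) := by
    rw [Submodule.span_le]
    rintro f ⟨r, hr, rfl⟩
    have hrN : r ≤ N := hr
    have hfr : backJacobi μ υ ρ r = ∑ k ∈ range (r+1),
        ((Real.Gamma ((r:ℝ)+μ+1) / ((Nat.factorial r : ℝ) * Real.Gamma ((r:ℝ)+μ+υ+1)))
          * ((Nat.choose r k : ℝ) * (-1:ℝ)^k *
            (Real.Gamma ((r:ℝ)+(k:ℝ)+μ+υ+1) / Real.Gamma ((k:ℝ)+μ+1))))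
          • (fun t : ℝ => (1-t)^(ρ*(k:ℝ))) := by
      funext t
      simp only [backJacobi, Finset.sum_apply, Pi.smul_apply, smul_eq_mul]
      rw [Finset.mul_sum]
      refine Finset.sum_congr rfl fun k _ => by ring
    show backJacobi μ υ ρ r ∈ Submodule.span ℝ (Set.range g)
    rw [hfr]
    apply Submodule.sum_mem
    intro k hk
    apply Submodule.smul_mem
    apply Submodule.subset_span
    have hkN : k < N+1 := by
      have := Finset.mem_range.mp hk; omega
    exact ⟨⟨k, hkN⟩, rfl⟩
  have hmem := hsub hφ
  rw [Submodule.mem_span_range_iff_exists_fun] at hmem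
  obtain ⟨cf, hcf⟩ := hmem
  refine ⟨fun k => if h : k < N+1 then cf ⟨k, h⟩ else 0, ?_, ?_⟩
  · intro j hj
    simp only [dif_neg (by omega : ¬ j < N+1)]
  · rw [← hcf]
    funext t
    unfold phi
    rw [Finset.sum_apply]
    rw [← Fin.sum_univ_eq_sum_range
      (fun k => (if h : k < N+1 then cf ⟨k, h⟩ else 0) * (1-t)^(ρ*(k:ℝ))) (N+1)]
    refine Finset.sum_congr rfl fun i _ => ?_
    simp only [Pi.smul_apply, smul_eq_mul, dif_pos i.isLt]
    rfl

end glue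

/-- Inverse inequality: for every φ in the span of the first N+1 fractional backward
Jacobi functions, the ϰ̃-weighted L² norm of φ' is bounded by σ_N^{μ,υ} = N(N+μ+υ+1)
times the ϰ-weighted L² norm of φ. -/
theorem inverse_inequality_first_deriv
    (μ υ ρ : ℝ) (hμ : -1 < μ) (hυ : -1 < υ) (hρ0 : 0 < ρ) (hρ1 : ρ ≤ 1) (N : ℕ) :
    ∀ φ : ℝ → ℝ, φ ∈ Submodule.span ℝ ((fun r : ℕ => backJacobi μ υ ρ r) '' {r | r ≤ N}) →
      ∫ t in (0:ℝ)..1, backWeightTilde μ υ ρ t * (deriv φ t) ^ 2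
        ≤ (N : ℝ) * ((N : ℝ) + μ + υ + 1) *
            ∫ t in (0:ℝ)..1, backWeight μ υ ρ t * φ t ^ 2 := by
  intro φ hφ
  obtain ⟨c, hcS, rfl⟩ := span_reduce N hφ
  have hμυ : (-2:ℝ) < μ + υ := by linarith
  have halg := InvIneqAux.alg_final μ υ N (Mfun μ υ ρ) (Mtfun μ υ ρ)
    (hkey_holds hμ hυ hρ0 hρ1) hμυ (hpsd_holds hμ hυ hρ0 hρ1 N) hcS
  have hL := expandD hμ hυ hρ0 hρ1 N c
  have hR := expandQ hμ hυ hρ0 hρ1 N c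
  rw [hL, hR]
  have hsig : InvIneqAux.sig μ υ N = (N:ℝ) * ((N:ℝ) + μ + υ + 1) := rfl
  rw [← hsig]
  exact halg
end base
end

section
/- Let 0 < ρ ≤ 1 and let μ, υ be real numbers with -1 < μ ≤ -1/2 and -1 < υ ≤ -1/2. Let f : [0,1] → ℝ be continuous on [0,1] and continuously differentiable on (0,1), with ∫₀¹ ϰ^{μ,υ,ρ}(t) f(t)² dt < ∞ and ∫₀¹ ϰ̃^{μ,υ,ρ}(t) f'(t)² dt < ∞, and suppose f(ξ) = 0 for some ξ ∈ [0,1]. Then sup_{t ∈ [0,1]} |f(t)| ≤ √2 · ( ∫₀¹ ϰ^{μ,υ,ρ}(t) f(t)² dt )^{1/4} · ( ∫₀¹ ϰ̃^{μ,υ,ρ}(t) f'(t)² dt )^{1/4}. -/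
open Real MeasureTheory

lemma backWeight_nonneg (μ υ ρ : ℝ) (hρ0 : 0 < ρ) {t : ℝ} (ht : t ∈ Set.Icc (0:ℝ) 1) :
    0 ≤ backWeight μ υ ρ t := by
  have h1 : (0:ℝ) ≤ 1 - t := by linarith [ht.2]
  have h2 : (0:ℝ) ≤ 1 - (1 - t) ^ ρ := by
    have : (1 - t) ^ ρ ≤ 1 := Real.rpow_le_one h1 (by linarith [ht.1]) hρ0.le
    linarith
  exact mul_nonneg (mul_nonneg hρ0.le (Real.rpow_nonneg h1 _)) (Real.rpow_nonneg h2 _)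

lemma backWeightTilde_nonneg (μ υ ρ : ℝ) (hρ0 : 0 < ρ) {t : ℝ} (ht : t ∈ Set.Icc (0:ℝ) 1) :
    0 ≤ backWeightTilde μ υ ρ t := by
  have h1 : (0:ℝ) ≤ 1 - t := by linarith [ht.2]
  have h2 : (0:ℝ) ≤ 1 - (1 - t) ^ ρ := by
    have : (1 - t) ^ ρ ≤ 1 := Real.rpow_le_one h1 (by linarith [ht.1]) hρ0.le
    linarith
  exact mul_nonneg (mul_nonneg (by positivity) (Real.rpow_nonneg h1 _)) (Real.rpow_nonneg h2 _)

lemma backWeight_mul_tilde_ge_one (μ υ ρ : ℝ) (hμ1 : μ ≤ -(1/2)) (hυ1 : υ ≤ -(1/2))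
    (hρ0 : 0 < ρ) {t : ℝ} (ht : t ∈ Set.Ioo (0:ℝ) 1) :
    1 ≤ backWeight μ υ ρ t * backWeightTilde μ υ ρ t := by
  obtain ⟨ht0, ht1⟩ := ht
  set s : ℝ := 1 - t with hs
  have hs0 : 0 < s := by simp [hs]; linarith
  have hs1 : s < 1 := by simp [hs]; linarith
  set c : ℝ := 1 - s ^ ρ with hc
  have hc0 : 0 < c := by
    have : s ^ ρ < 1 := Real.rpow_lt_one hs0.le hs1 hρ0
    simp [hc]; linarith
  have hc1 : c ≤ 1 := by
    have : 0 < s ^ ρ := Real.rpow_pos_of_pos hs0 ρ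
    simp [hc]; linarith
  have key : backWeight μ υ ρ t * backWeightTilde μ υ ρ t
      = (ρ * ρ⁻¹) * (s ^ (ρ * (μ + 1) - 1) * s ^ (ρ * μ + 1)) * (c ^ υ * c ^ (υ + 1)) := by
    unfold backWeight backWeightTilde; ring
  rw [key, mul_inv_cancel₀ hρ0.ne', one_mul, ← Real.rpow_add hs0, ← Real.rpow_add hc0]
  have h1 : 1 ≤ s ^ (ρ * (μ + 1) - 1 + (ρ * μ + 1)) :=
    Real.one_le_rpow_of_pos_of_le_one_of_nonpos hs0 hs1.le (by nlinarith)
  have h2 : 1 ≤ c ^ (υ + (υ + 1)) :=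
    Real.one_le_rpow_of_pos_of_le_one_of_nonpos hc0 hc1 (by linarith)
  nlinarith

/-- Weighted Sobolev inequality: if f vanishes somewhere in [0,1] and
-1 < μ, υ ≤ -1/2, then the sup norm of f is bounded by
√2 ‖f‖^{1/2}_{ϰ^{μ,υ,ρ}} ‖f'‖^{1/2}_{ϰ̃^{μ,υ,ρ}}. -/
theorem weighted_sobolev_inequality
    (μ υ ρ : ℝ) (hμ0 : -1 < μ) (hμ1 : μ ≤ -(1/2)) (hυ0 : -1 < υ) (hυ1 : υ ≤ -(1/2))
    (hρ0 : 0 < ρ) (hρ1 : ρ ≤ 1)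
    (f : ℝ → ℝ)
    (hf : ContinuousOn f (Set.Icc 0 1))
    (hf' : ContDiffOn ℝ 1 f (Set.Ioo 0 1))
    (hint1 : IntegrableOn (fun t => backWeight μ υ ρ t * f t ^ 2) (Set.Ioo 0 1))
    (hint2 : IntegrableOn (fun t => backWeightTilde μ υ ρ t * (deriv f t) ^ 2) (Set.Ioo 0 1))
    (hzero : ∃ ξ ∈ Set.Icc (0:ℝ) 1, f ξ = 0) :
    ∀ t ∈ Set.Icc (0:ℝ) 1,
      |f t| ≤ Real.sqrt 2 *
        (∫ t in (0:ℝ)..1, backWeight μ υ ρ t * f t ^ 2) ^ ((1:ℝ)/4) *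
        (∫ t in (0:ℝ)..1, backWeightTilde μ υ ρ t * (deriv f t) ^ 2) ^ ((1:ℝ)/4) := by
  intro t ht
  obtain ⟨ξ, hξ, hfξ⟩ := hzero
  set I : Set ℝ := Set.Ioo 0 1 with hI
  set w1 : ℝ → ℝ := fun u => backWeight μ υ ρ u with hw1
  set w2 : ℝ → ℝ := fun u => backWeightTilde μ υ ρ u with hw2
  set F : ℝ → ℝ := fun u => Real.sqrt (w1 u * f u ^ 2) with hF
  set G : ℝ → ℝ := fun u => Real.sqrt (w2 u * (deriv f u) ^ 2) with hG
  -- pointwise nonnegativity on Icc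
  have hw1n : ∀ u ∈ Set.Icc (0:ℝ) 1, 0 ≤ w1 u := fun u hu => backWeight_nonneg μ υ ρ hρ0 hu
  have hw2n : ∀ u ∈ Set.Icc (0:ℝ) 1, 0 ≤ w2 u := fun u hu => backWeightTilde_nonneg μ υ ρ hρ0 hu
  -- pointwise bound |f f'| ≤ F G on I
  have hFG : ∀ u ∈ I, |f u * deriv f u| ≤ F u * G u := by
    intro u hu
    have hu' : u ∈ Set.Icc (0:ℝ) 1 := Set.mem_Icc_of_Ioo hu
    have h1 : 0 ≤ w1 u * f u ^ 2 := mul_nonneg (hw1n u hu') (sq_nonneg _)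
    have hprod : 1 ≤ w1 u * w2 u := backWeight_mul_tilde_ge_one μ υ ρ hμ1 hυ1 hρ0 hu
    have : F u * G u = Real.sqrt ((w1 u * f u ^ 2) * (w2 u * (deriv f u) ^ 2)) :=
      (Real.sqrt_mul h1 _).symm
    rw [this, ← Real.sqrt_sq_eq_abs (f u * deriv f u)]
    apply Real.sqrt_le_sqrt
    nlinarith [sq_nonneg (f u * deriv f u)]
  -- F G ≤ (w1 f² + w2 f'²)/2 on I
  have hFGle : ∀ u ∈ I, F u * G u ≤ (w1 u * f u ^ 2 + w2 u * (deriv f u) ^ 2) / 2 := by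
    intro u hu
    have hu' : u ∈ Set.Icc (0:ℝ) 1 := Set.mem_Icc_of_Ioo hu
    have h1 : 0 ≤ w1 u * f u ^ 2 := mul_nonneg (hw1n u hu') (sq_nonneg _)
    have h2 : 0 ≤ w2 u * (deriv f u) ^ 2 := mul_nonneg (hw2n u hu') (sq_nonneg _)
    have e1 : F u ^ 2 = w1 u * f u ^ 2 := Real.sq_sqrt h1
    have e2 : G u ^ 2 = w2 u * (deriv f u) ^ 2 := Real.sq_sqrt h2
    nlinarith [sq_nonneg (F u - G u)]
  -- measurability
  have hfm : AEStronglyMeasurable f (volume.restrict I) :=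
    (hf.mono Set.Ioo_subset_Icc_self).aestronglyMeasurable measurableSet_Ioo
  have hdm : AEStronglyMeasurable (deriv f) (volume.restrict I) :=
    (measurable_deriv f).aestronglyMeasurable.restrict
  have hw1m : Measurable w1 := by unfold w1; unfold backWeight; fun_prop
  have hw2m : Measurable w2 := by unfold w2; unfold backWeightTilde; fun_prop
  have hFm : AEStronglyMeasurable F (volume.restrict I) :=
    Real.continuous_sqrt.comp_aestronglyMeasurable
      ((hw1m.aestronglyMeasurable.restrict).mul (hfm.pow 2))
  have hGm : AEStronglyMeasurable G (volume.restrict I) :=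
    Real.continuous_sqrt.comp_aestronglyMeasurable
      ((hw2m.aestronglyMeasurable.restrict).mul (hdm.pow 2))
  -- integrability of f * f' on I
  have hmul_int : IntegrableOn (fun u => f u * deriv f u) I := by
    apply Integrable.mono (g := fun u => (w1 u * f u ^ 2 + w2 u * (deriv f u) ^ 2) / 2)
    · exact (hint1.add hint2).div_const 2
    · exact hfm.mul hdm
    · rw [ae_restrict_iff' measurableSet_Ioo]
      refine ae_of_all _ fun u hu => ?_
      have hu' : u ∈ Set.Icc (0:ℝ) 1 := Set.mem_Icc_of_Ioo hu
      have h1 : 0 ≤ w1 u * f u ^ 2 := mul_nonneg (hw1n u hu') (sq_nonneg _)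
      have h2 : 0 ≤ w2 u * (deriv f u) ^ 2 := mul_nonneg (hw2n u hu') (sq_nonneg _)
      rw [Real.norm_eq_abs, Real.norm_eq_abs, abs_of_nonneg
        (show (0:ℝ) ≤ (w1 u * f u ^ 2 + w2 u * (deriv f u) ^ 2) / 2 by positivity)]
      exact (hFG u hu).trans (hFGle u hu)
  -- integrability of F * G on I
  have hFGint : IntegrableOn (fun u => F u * G u) I := by
    apply Integrable.mono (g := fun u => (w1 u * f u ^ 2 + w2 u * (deriv f u) ^ 2) / 2)
    · exact (hint1.add hint2).div_const 2
    · exact hFm.mul hGm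
    · rw [ae_restrict_iff' measurableSet_Ioo]
      refine ae_of_all _ fun u hu => ?_
      have hFGn : 0 ≤ F u * G u := mul_nonneg (Real.sqrt_nonneg _) (Real.sqrt_nonneg _)
      rw [Real.norm_eq_abs, Real.norm_eq_abs, abs_of_nonneg hFGn,
        abs_of_nonneg (hFGn.trans (hFGle u hu))]
      exact hFGle u hu
  -- FTC on subintervals
  have hdiff : ∀ x ∈ I, HasDerivAt f (deriv f x) x := by
    intro x hx
    have h1 : DifferentiableOn ℝ f I := hf'.differentiableOn one_ne_zero
    exact ((h1 x hx).differentiableAt (Ioo_mem_nhds hx.1 hx.2)).hasDerivAt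
  have body : ∀ a b : ℝ, a ∈ Set.Icc (0:ℝ) 1 → b ∈ Set.Icc (0:ℝ) 1 → a ≤ b →
      f b ^ 2 - f a ^ 2 = ∫ u in Set.Ioo a b, 2 * f u * deriv f u := by
    intro a b ha hb hab
    have hsub : Set.Ioo a b ⊆ I := Set.Ioo_subset_Ioo ha.1 hb.2
    have hint : IntegrableOn (fun u => 2 * f u * deriv f u) (Set.Ioo a b) := by
      have : IntegrableOn (fun u => 2 * (f u * deriv f u)) (Set.Ioo a b) :=
        MeasureTheory.IntegrableOn.mono_set (hmul_int.const_mul 2) hsub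
      exact this.congr_fun (fun u _ => by ring) measurableSet_Ioo
    have hii : IntervalIntegrable (fun u => 2 * f u * deriv f u) volume a b := by
      rw [intervalIntegrable_iff_integrableOn_Ioo_of_le hab]
      exact hint
    have := intervalIntegral.integral_eq_sub_of_hasDeriv_right_of_le hab
      (f := fun u => f u ^ 2) (f' := fun u => 2 * f u * deriv f u)
      ((hf.mono (Set.Icc_subset_Icc ha.1 hb.2)).pow 2)
      (fun x hx => by
        have hd := hdiff x (hsub hx)
        have : HasDerivAt (fun u => f u ^ 2) (2 * f x * deriv f x) x := by
          simpa [mul_comm, mul_assoc, mul_left_comm] using hd.fun_pow 2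
        exact this.hasDerivWithinAt) hii
    rw [intervalIntegral.integral_of_le hab, integral_Ioc_eq_integral_Ioo] at this
    beta_reduce at this
    linarith [this]
  -- key bound : f t ^ 2 ≤ 2 * ∫_I F G
  have habs : f t ^ 2 ≤ ∫ u in I, |2 * f u * deriv f u| := by
    have habs2 : ∀ a b : ℝ, a ∈ Set.Icc (0:ℝ) 1 → b ∈ Set.Icc (0:ℝ) 1 → a ≤ b →
        |f b ^ 2 - f a ^ 2| ≤ ∫ u in I, |2 * f u * deriv f u| := by
      intro a b ha hb hab
      rw [body a b ha hb hab]
      have hsub : Set.Ioo a b ⊆ I := Set.Ioo_subset_Ioo ha.1 hb.2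
      have hint : IntegrableOn (fun u => 2 * f u * deriv f u) (Set.Ioo a b) := by
        have : IntegrableOn (fun u => 2 * (f u * deriv f u)) (Set.Ioo a b) :=
          MeasureTheory.IntegrableOn.mono_set (hmul_int.const_mul 2) hsub
        exact this.congr_fun (fun u _ => by ring) measurableSet_Ioo
      calc |∫ u in Set.Ioo a b, 2 * f u * deriv f u|
          ≤ ∫ u in Set.Ioo a b, |2 * f u * deriv f u| := by
            have hn := norm_integral_le_integral_norm
              (μ := volume.restrict (Set.Ioo a b)) (f := fun u => 2 * f u * deriv f u)
            simp only [Real.norm_eq_abs] at hn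
            exact hn
        _ ≤ ∫ u in I, |2 * f u * deriv f u| := by
            apply setIntegral_mono_set
            · have : IntegrableOn (fun u => 2 * (f u * deriv f u)) I :=
                hmul_int.const_mul 2
              exact (this.congr_fun (fun u _ => by ring) measurableSet_Ioo).abs
            · exact ae_of_all _ fun u => abs_nonneg _
            · exact HasSubset.Subset.eventuallyLE hsub
    rcases le_total ξ t with h | h
    · have := habs2 ξ t hξ ht h
      rw [hfξ] at this
      calc f t ^ 2 = |f t ^ 2 - 0 ^ 2| := by
            rw [abs_of_nonneg]; ring_nf; nlinarith [sq_nonneg (f t)]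
        _ ≤ _ := this
    · have := habs2 t ξ ht hξ h
      rw [hfξ] at this
      calc f t ^ 2 = |0 ^ 2 - f t ^ 2| := by
            rw [abs_of_nonpos]; ring_nf; nlinarith [sq_nonneg (f t)]
        _ ≤ _ := this
  have hstep2 : (∫ u in I, |2 * f u * deriv f u|) ≤ 2 * ∫ u in I, F u * G u := by
    rw [← integral_const_mul]
    apply setIntegral_mono_on
    · have : IntegrableOn (fun u => 2 * (f u * deriv f u)) I := hmul_int.const_mul 2
      exact (this.congr_fun (fun u _ => by ring) measurableSet_Ioo).abs
    · exact hFGint.const_mul 2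
    · exact measurableSet_Ioo
    · intro u hu
      have := hFG u hu
      calc |2 * f u * deriv f u| = 2 * |f u * deriv f u| := by
            rw [mul_assoc, abs_mul]; simp
        _ ≤ 2 * (F u * G u) := by linarith
  -- Cauchy-Schwarz
  set A : ℝ := ∫ u in I, w1 u * f u ^ 2 with hA
  set B : ℝ := ∫ u in I, w2 u * (deriv f u) ^ 2 with hB
  have hA0 : 0 ≤ A := by
    apply setIntegral_nonneg measurableSet_Ioo
    intro u hu
    exact mul_nonneg (hw1n u (Set.mem_Icc_of_Ioo hu)) (sq_nonneg _)
  have hB0 : 0 ≤ B := by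
    apply setIntegral_nonneg measurableSet_Ioo
    intro u hu
    exact mul_nonneg (hw2n u (Set.mem_Icc_of_Ioo hu)) (sq_nonneg _)
  have hCS : (∫ u in I, F u * G u) ≤ Real.sqrt A * Real.sqrt B := by
    have hpq : (2:ℝ).HolderConjugate 2 := Real.HolderConjugate.two_two
    have hFmem : MemLp F 2 (volume.restrict I) := by
      rw [memLp_two_iff_integrable_sq hFm]
      apply hint1.congr_fun _ measurableSet_Ioo
      intro u hu
      exact (Real.sq_sqrt (mul_nonneg (hw1n u (Set.mem_Icc_of_Ioo hu)) (sq_nonneg _))).symm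
    have hGmem : MemLp G 2 (volume.restrict I) := by
      rw [memLp_two_iff_integrable_sq hGm]
      apply hint2.congr_fun _ measurableSet_Ioo
      intro u hu
      exact (Real.sq_sqrt (mul_nonneg (hw2n u (Set.mem_Icc_of_Ioo hu)) (sq_nonneg _))).symm
    have := integral_mul_le_Lp_mul_Lq_of_nonneg hpq
      (ae_of_all _ fun u => Real.sqrt_nonneg _) (ae_of_all _ fun u => Real.sqrt_nonneg _)
      (by simpa using hFmem) (by simpa using hGmem)
    have hFsq : (∫ u in I, F u ^ (2:ℝ)) = A := by
      rw [hA]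
      apply setIntegral_congr_fun measurableSet_Ioo
      intro u hu
      show F u ^ (2:ℝ) = w1 u * f u ^ 2
      have h2 : F u ^ (2:ℝ) = F u ^ (2:ℕ) := by
        rw [← Real.rpow_natCast (F u) 2]; norm_num
      rw [h2]
      exact Real.sq_sqrt (mul_nonneg (hw1n u (Set.mem_Icc_of_Ioo hu)) (sq_nonneg _))
    have hGsq : (∫ u in I, G u ^ (2:ℝ)) = B := by
      rw [hB]
      apply setIntegral_congr_fun measurableSet_Ioo
      intro u hu
      show G u ^ (2:ℝ) = w2 u * (deriv f u) ^ 2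
      have h2 : G u ^ (2:ℝ) = G u ^ (2:ℕ) := by
        rw [← Real.rpow_natCast (G u) 2]; norm_num
      rw [h2]
      exact Real.sq_sqrt (mul_nonneg (hw2n u (Set.mem_Icc_of_Ioo hu)) (sq_nonneg _))
    rw [hFsq, hGsq] at this
    rw [Real.sqrt_eq_rpow, Real.sqrt_eq_rpow]
    exact this
  -- assemble
  have hkey : f t ^ 2 ≤ 2 * (Real.sqrt A * Real.sqrt B) := by
    calc f t ^ 2 ≤ ∫ u in I, |2 * f u * deriv f u| := habs
      _ ≤ 2 * ∫ u in I, F u * G u := hstep2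
      _ ≤ 2 * (Real.sqrt A * Real.sqrt B) := by linarith [hCS]
  -- rewrite the interval integrals in the goal as A, B
  have hAeq : (∫ u in (0:ℝ)..1, backWeight μ υ ρ u * f u ^ 2) = A := by
    rw [intervalIntegral.integral_of_le zero_le_one, integral_Ioc_eq_integral_Ioo]
  have hBeq : (∫ u in (0:ℝ)..1, backWeightTilde μ υ ρ u * (deriv f u) ^ 2) = B := by
    rw [intervalIntegral.integral_of_le zero_le_one, integral_Ioc_eq_integral_Ioo]
  rw [hAeq, hBeq]
  have h1 : |f t| ≤ Real.sqrt (2 * (Real.sqrt A * Real.sqrt B)) := by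
    rw [← Real.sqrt_sq_eq_abs (f t)]
    exact Real.sqrt_le_sqrt (by simpa [sq_abs] using hkey)
  calc |f t| ≤ Real.sqrt (2 * (Real.sqrt A * Real.sqrt B)) := h1
    _ = Real.sqrt 2 * A ^ ((1:ℝ)/4) * B ^ ((1:ℝ)/4) := by
        rw [Real.sqrt_mul (by norm_num : (0:ℝ) ≤ 2),
          Real.sqrt_mul (Real.sqrt_nonneg A),
          Real.sqrt_eq_rpow (Real.sqrt A), Real.sqrt_eq_rpow (Real.sqrt B),
          Real.sqrt_eq_rpow A, Real.sqrt_eq_rpow B,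
          ← Real.rpow_mul hA0, ← Real.rpow_mul hB0]
        norm_num
        ring
end
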